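/- arXiv:2301.12933 — 5 statements merged into one kernel-verified Lean document; each statement's English description precedes it below -/
import Mathlib

section
/- For graphs G and H each with at least two vertices, the edge-connectivity of the Cartesian product satisfies λ(G □ H) = min{λ(G)·|V(H)|, λ(H)·|V(G)|, δ(G)+δ(H)}. -/
open SimpleGraph

/-- `T` is an `S`-Steiner tree in `G`: a subgraph of `G` that is a tree containing `S`. -/
def IsSteinerTree {V : Type*} (G : SimpleGraph V) (S : Set V) (T : G.Subgraph) : Prop :=
  S ⊆ T.verts ∧ T.coe.IsTree

/-- There exist `n` pairwise edge-disjoint `S`-Steiner trees in `G`. -/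
def HasEDSteinerTrees {V : Type*} (G : SimpleGraph V) (S : Set V) (n : ℕ) : Prop :=
  ∃ f : Fin n → G.Subgraph, (∀ i, IsSteinerTree G S (f i)) ∧
    ∀ i j, i ≠ j → Disjoint (f i).edgeSet (f j).edgeSet

/-- Generalized local edge-connectivity: max number of pairwise edge-disjoint S-Steiner trees. -/
noncomputable def steinerLambda {V : Type*} (G : SimpleGraph V) (S : Set V) : ℕ :=
  sSup {n | HasEDSteinerTrees G S n}

/-- Generalized k-edge-connectivity. -/
noncomputable def genLambda {V : Type*} [Fintype V] (G : SimpleGraph V) (k : ℕ) : ℕ :=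
  sInf {m | ∃ S : Finset V, S.card = k ∧ steinerLambda G ↑S = m}

/-- Ordinary edge-connectivity ("cut" version). -/
noncomputable def edgeConn {V : Type*} [Fintype V] (G : SimpleGraph V) : ℕ :=
  sInf {n | ∃ M : Finset (Sym2 V), M.card = n ∧ ↑M ⊆ G.edgeSet ∧
    ¬ (G.deleteEdges ↑M).Connected}

/-- Minimum degree. -/
noncomputable def minDeg {V : Type*} [Fintype V] (G : SimpleGraph V) : ℕ :=
  @SimpleGraph.minDegree V G _ (Classical.decRel _)

/-- There exist `n` pairwise edge-disjoint spanning trees of `G`. -/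
def HasEDSpanningTrees {V : Type*} (G : SimpleGraph V) (n : ℕ) : Prop :=
  ∃ f : Fin n → G.Subgraph, (∀ i, (f i).IsSpanning ∧ (f i).coe.IsTree) ∧
    ∀ i j, i ≠ j → Disjoint (f i).edgeSet (f j).edgeSet

/-- Maximum number of pairwise edge-disjoint spanning trees. -/
noncomputable def spanningTreePacking {V : Type*} (G : SimpleGraph V) : ℕ :=
  sSup {n | HasEDSpanningTrees G n}

section Helpers

lemma reach_map {V W : Type*} {K : SimpleGraph V} {G' : SimpleGraph W} (f : V → W)
    (h : ∀ p q, K.Adj p q → f p = f q ∨ G'.Adj (f p) (f q)) {p q : V}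
    (hr : K.Reachable p q) : G'.Reachable (f p) (f q) := by
  obtain ⟨w⟩ := hr
  induction w with
  | nil => exact Reachable.refl _
  | cons ha _ ih =>
      rcases h _ _ ha with he | hadj
      · rw [he]; exact ih
      · exact (Adj.reachable hadj).trans ih

lemma not_connected_of_isolated {V : Type*} {K : SimpleGraph V} {x w : V} (hne : w ≠ x)
    (hiso : ∀ y, ¬ K.Adj x y) : ¬ K.Connected := by
  intro hc
  obtain ⟨p⟩ := hc.preconnected x w
  cases p with
  | nil => exact hne rfl
  | cons h _ => exact hiso _ h


-- the cut set is nonempty when |V| ≥ 2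
lemma cutset_nonempty {V : Type*} [Fintype V] (G : SimpleGraph V) (h2 : 2 ≤ Fintype.card V) :
    {n | ∃ M : Finset (Sym2 V), M.card = n ∧ ↑M ⊆ G.edgeSet ∧
      ¬ (G.deleteEdges ↑M).Connected}.Nonempty := by
  classical
  refine ⟨G.edgeFinset.card, G.edgeFinset, rfl, by simp [Set.coe_toFinset, edgeFinset], ?_⟩
  obtain ⟨x, y, hxy⟩ := Fintype.exists_pair_of_one_lt_card (α := V) (by omega)
  refine not_connected_of_isolated (x := x) (w := y) hxy.symm ?_
  intro z hz
  rw [deleteEdges_adj] at hz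
  exact hz.2 (by simpa [edgeFinset] using hz.1)

-- existence of a minimum cut
lemma exists_min_cut {V : Type*} [Fintype V] (G : SimpleGraph V) (h2 : 2 ≤ Fintype.card V) :
    ∃ M : Finset (Sym2 V), M.card = edgeConn G ∧ ↑M ⊆ G.edgeSet ∧
      ¬ (G.deleteEdges ↑M).Connected :=
  Nat.sInf_mem (cutset_nonempty G h2)

lemma edgeConn_le {V : Type*} [Fintype V] (G : SimpleGraph V) (M : Finset (Sym2 V))
    (hs : ↑M ⊆ G.edgeSet) (hc : ¬ (G.deleteEdges ↑M).Connected) : edgeConn G ≤ M.card :=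
  Nat.sInf_le ⟨M, rfl, hs, hc⟩



variable {α β : Type*} [Fintype α] [Fintype β] (G : SimpleGraph α) (H : SimpleGraph β)

lemma ub_delta (hG : 2 ≤ Fintype.card α) (hH : 2 ≤ Fintype.card β) :
    edgeConn (G □ H) ≤ minDeg G + minDeg H := by
  classical
  haveI : Nonempty α := Fintype.card_pos_iff.mp (by omega)
  haveI : Nonempty β := Fintype.card_pos_iff.mp (by omega)
  obtain ⟨u, hu⟩ := @exists_minimal_degree_vertex α G _ (Classical.decRel _) _
  obtain ⟨v, hv⟩ := @exists_minimal_degree_vertex β H _ (Classical.decRel _) _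
  set M : Finset (Sym2 (α × β)) := ((G □ H).incidenceSet (u, v)).toFinset with hM
  have hsub : ↑M ⊆ (G □ H).edgeSet := by
    intro e he
    rw [hM, Finset.mem_coe, Set.mem_toFinset] at he
    exact he.1
  have hcard : M.card = G.degree u + H.degree v := by
    rw [hM, ← degree_boxProd (G := G) (H := H) (u, v)]
    rw [← card_incidenceSet_eq_degree, Set.toFinset_card]
  have hdis : ¬ ((G □ H).deleteEdges ↑M).Connected := by
    obtain ⟨w, hw⟩ := Fintype.exists_ne_of_one_lt_card
      (α := α × β) (by rw [Fintype.card_prod]; nlinarith) (u, v)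
    refine not_connected_of_isolated (x := (u, v)) (w := w) hw ?_
    intro y hy
    rw [deleteEdges_adj] at hy
    refine hy.2 ?_
    rw [hM, Finset.mem_coe, Set.mem_toFinset]
    exact ⟨(G □ H).mem_edgeSet.mpr hy.1, by simp⟩
  calc edgeConn (G □ H) ≤ M.card := edgeConn_le _ _ hsub hdis
    _ = G.degree u + H.degree v := hcard
    _ = minDeg G + minDeg H := by
        rw [minDeg, minDeg]
        congr 1
        · rw [hu]
        · rw [hv]

lemma ub_left (hG : 2 ≤ Fintype.card α) (hH : 2 ≤ Fintype.card β) :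
    edgeConn (G □ H) ≤ edgeConn G * Fintype.card β := by
  classical
  haveI : Nonempty α := Fintype.card_pos_iff.mp (by omega)
  haveI : Nonempty β := Fintype.card_pos_iff.mp (by omega)
  obtain ⟨Mg, hMgcard, hMgsub, hMgdis⟩ := exists_min_cut G hG
  set MM : Finset (Sym2 (α × β)) :=
    (Mg ×ˢ Finset.univ).image (fun p => p.1.map (fun x => (x, p.2))) with hMM
  have hsub : ↑MM ⊆ (G □ H).edgeSet := by
    intro e he
    rw [hMM, Finset.coe_image] at he
    obtain ⟨⟨m, v⟩, hm, rfl⟩ := he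
    rw [Finset.coe_product] at hm
    have hmE : m ∈ G.edgeSet := hMgsub hm.1
    induction m with
    | _ x y =>
      simp only [Sym2.map_pair_eq]
      exact (G □ H).mem_edgeSet.mpr (boxProd_adj.mpr (Or.inl ⟨(G.mem_edgeSet).mp hmE, rfl⟩))
  have hadj : ∀ p q : α × β, ((G □ H).deleteEdges ↑MM).Adj p q →
      p.1 = q.1 ∨ (G.deleteEdges ↑Mg).Adj p.1 q.1 := by
    rintro ⟨p1, p2⟩ ⟨q1, q2⟩ hpq
    rw [deleteEdges_adj] at hpq
    rcases boxProd_adj.mp hpq.1 with ⟨hg, hsnd⟩ | ⟨_, hfst⟩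
    · right
      rw [deleteEdges_adj]
      refine ⟨hg, fun hmem => hpq.2 ?_⟩
      rw [hMM, Finset.coe_image]
      refine ⟨(s(p1, q1), p2), ?_, ?_⟩
      · rw [Finset.coe_product]; exact ⟨by simpa using hmem, Finset.mem_coe.mpr (Finset.mem_univ _)⟩
      · simp only [Sym2.map_pair_eq]
        simp only at hsnd
        rw [hsnd]
    · left; exact hfst
  have hdis : ¬ ((G □ H).deleteEdges ↑MM).Connected := by
    intro hc
    rw [connected_iff] at hMgdis
    push_neg at hMgdis
    have h : ¬ (G.deleteEdges ↑Mg).Preconnected := fun hp => not_isEmpty_of_nonempty α (hMgdis hp)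
    rw [Preconnected] at h
    push_neg at h
    obtain ⟨a, b, hab⟩ := h
    obtain v := Classical.arbitrary β
    have := reach_map Prod.fst (hadj) (hc.preconnected (a, v) (b, v))
    exact hab this
  calc edgeConn (G □ H) ≤ MM.card := edgeConn_le _ _ hsub hdis
    _ ≤ (Mg ×ˢ Finset.univ).card := Finset.card_image_le
    _ = edgeConn G * Fintype.card β := by
        rw [Finset.card_product, hMgcard, Finset.card_univ]

lemma ub_right (hG : 2 ≤ Fintype.card α) (hH : 2 ≤ Fintype.card β) :
    edgeConn (G □ H) ≤ edgeConn H * Fintype.card α := by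
  classical
  haveI : Nonempty α := Fintype.card_pos_iff.mp (by omega)
  haveI : Nonempty β := Fintype.card_pos_iff.mp (by omega)
  obtain ⟨Mh, hMhcard, hMhsub, hMhdis⟩ := exists_min_cut H hH
  set MM : Finset (Sym2 (α × β)) :=
    (Mh ×ˢ Finset.univ).image (fun p => p.1.map (fun y => (p.2, y))) with hMM
  have hsub : ↑MM ⊆ (G □ H).edgeSet := by
    intro e he
    rw [hMM, Finset.coe_image] at he
    obtain ⟨⟨m, u⟩, hm, rfl⟩ := he
    rw [Finset.coe_product] at hm
    have hmE : m ∈ H.edgeSet := hMhsub hm.1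
    induction m with
    | _ x y =>
      simp only [Sym2.map_pair_eq]
      exact (G □ H).mem_edgeSet.mpr (boxProd_adj.mpr (Or.inr ⟨(H.mem_edgeSet).mp hmE, rfl⟩))
  have hadj : ∀ p q : α × β, ((G □ H).deleteEdges ↑MM).Adj p q →
      p.2 = q.2 ∨ (H.deleteEdges ↑Mh).Adj p.2 q.2 := by
    rintro ⟨p1, p2⟩ ⟨q1, q2⟩ hpq
    rw [deleteEdges_adj] at hpq
    rcases boxProd_adj.mp hpq.1 with ⟨_, hsnd⟩ | ⟨hh, hfst⟩
    · left; exact hsnd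
    · right
      rw [deleteEdges_adj]
      refine ⟨hh, fun hmem => hpq.2 ?_⟩
      rw [hMM, Finset.coe_image]
      refine ⟨(s(p2, q2), p1), ?_, ?_⟩
      · rw [Finset.coe_product]; exact ⟨by simpa using hmem, Finset.mem_coe.mpr (Finset.mem_univ _)⟩
      · simp only [Sym2.map_pair_eq]
        simp only at hfst
        rw [hfst]
  have hdis : ¬ ((G □ H).deleteEdges ↑MM).Connected := by
    intro hc
    rw [connected_iff] at hMhdis
    push_neg at hMhdis
    have h : ¬ (H.deleteEdges ↑Mh).Preconnected := fun hp => not_isEmpty_of_nonempty β (hMhdis hp)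
    rw [Preconnected] at h
    push_neg at h
    obtain ⟨a, b, hab⟩ := h
    obtain u := Classical.arbitrary α
    have := reach_map Prod.snd (hadj) (hc.preconnected (u, a) (u, b))
    exact hab this
  calc edgeConn (G □ H) ≤ MM.card := edgeConn_le _ _ hsub hdis
    _ ≤ (Mh ×ˢ Finset.univ).card := Finset.card_image_le
    _ = edgeConn H * Fintype.card α := by
        rw [Finset.card_product, hMhcard, Finset.card_univ]

lemma lb_main (hG : 2 ≤ Fintype.card α) (hH : 2 ≤ Fintype.card β)
    (M : Finset (Sym2 (α × β))) (hME : ↑M ⊆ (G □ H).edgeSet)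
    (h1 : M.card < edgeConn G * Fintype.card β)
    (h2 : M.card < edgeConn H * Fintype.card α)
    (h3 : M.card < minDeg G + minDeg H) :
    ((G □ H).deleteEdges ↑M).Connected := by
  classical
  haveI : Nonempty α := Fintype.card_pos_iff.mp (by omega)
  haveI : Nonempty β := Fintype.card_pos_iff.mp (by omega)
  letI : DecidableRel G.Adj := Classical.decRel _
  letI : DecidableRel H.Adj := Classical.decRel _
  set K := (G □ H).deleteEdges ↑M with hK
  -- edge connectivities are positive
  have hg0 : 0 < edgeConn G := by
    rcases Nat.eq_zero_or_pos (edgeConn G) with h | h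
    · rw [h, zero_mul] at h1; omega
    · exact h
  have hh0 : 0 < edgeConn H := by
    rcases Nat.eq_zero_or_pos (edgeConn H) with h | h
    · rw [h, zero_mul] at h2; omega
    · exact h
  -- layer cut sets
  set Mv : β → Finset (Sym2 α) :=
    fun v => Finset.univ.filter (fun e => e.map (fun x => (x, v)) ∈ M) with hMv
  set Nu : α → Finset (Sym2 β) :=
    fun u => Finset.univ.filter (fun e => e.map (fun y => (u, y)) ∈ M) with hNu
  have hMvM : ∀ v e, e ∈ Mv v → e.map (fun x => (x, v)) ∈ M := by
    intro v e he; rw [hMv] at he; simpa using he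
  have hNuM : ∀ u e, e ∈ Nu u → e.map (fun y => (u, y)) ∈ M := by
    intro u e he; rw [hNu] at he; simpa using he
  have hMvsub : ∀ v, ↑(Mv v) ⊆ G.edgeSet := by
    intro v e he
    have hm := hME (hMvM v e he)
    induction e with
    | _ x y =>
      rw [Sym2.map_pair_eq] at hm
      rcases boxProd_adj.mp ((G □ H).mem_edgeSet.mp hm) with ⟨h, _⟩ | ⟨h, _⟩
      · exact G.mem_edgeSet.mpr h
      · exact absurd h (H.irrefl)
  have hNusub : ∀ u, ↑(Nu u) ⊆ H.edgeSet := by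
    intro u e he
    have hm := hME (hNuM u e he)
    induction e with
    | _ x y =>
      rw [Sym2.map_pair_eq] at hm
      rcases boxProd_adj.mp ((G □ H).mem_edgeSet.mp hm) with ⟨h, he2⟩ | ⟨h, _⟩
      · simp only at he2; exact absurd (he2 ▸ h) (G.irrefl)
      · exact H.mem_edgeSet.mpr h
  -- bad layers
  set B : Finset β := Finset.univ.filter (fun v => ¬ (G.deleteEdges ↑(Mv v)).Connected) with hB
  set A : Finset α := Finset.univ.filter (fun u => ¬ (H.deleteEdges ↑(Nu u)).Connected) with hA
  have hBlam : ∀ v ∈ B, edgeConn G ≤ (Mv v).card := by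
    intro v hv
    rw [hB, Finset.mem_filter] at hv
    exact Nat.sInf_le ⟨Mv v, rfl, hMvsub v, hv.2⟩
  have hAlam : ∀ u ∈ A, edgeConn H ≤ (Nu u).card := by
    intro u hu
    rw [hA, Finset.mem_filter] at hu
    exact Nat.sInf_le ⟨Nu u, rfl, hNusub u, hu.2⟩
  -- good layers lift to reachability in K
  have hliftG : ∀ v ∉ B, ∀ a b : α, K.Reachable (a, v) (b, v) := by
    intro v hv a b
    rw [hB, Finset.mem_filter] at hv
    push_neg at hv
    have hconn := hv (Finset.mem_univ v)
    let f : (G.deleteEdges ↑(Mv v)) →g K := by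
      refine ⟨fun a => (a, v), ?_⟩
      intro a b hab
      rw [deleteEdges_adj] at hab ⊢
      refine ⟨boxProd_adj.mpr (Or.inl ⟨hab.1, rfl⟩), fun hmem => hab.2 ?_⟩
      rw [hMv]
      simp only [Finset.mem_coe, Finset.mem_filter, Finset.mem_univ, true_and, Sym2.map_pair_eq]
      exact hmem
    exact Reachable.map f (hconn.preconnected a b)
  have hliftH : ∀ u ∉ A, ∀ a b : β, K.Reachable (u, a) (u, b) := by
    intro u hu a b
    rw [hA, Finset.mem_filter] at hu
    push_neg at hu
    have hconn := hu (Finset.mem_univ u)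
    let f : (H.deleteEdges ↑(Nu u)) →g K := by
      refine ⟨fun a => (u, a), ?_⟩
      intro a b hab
      rw [deleteEdges_adj] at hab ⊢
      refine ⟨boxProd_adj.mpr (Or.inr ⟨hab.1, rfl⟩), fun hmem => hab.2 ?_⟩
      rw [hNu]
      simp only [Finset.mem_coe, Finset.mem_filter, Finset.mem_univ, true_and, Sym2.map_pair_eq]
      exact hmem
    exact Reachable.map f (hconn.preconnected a b)
  -- embedded layer cut edge sets inside M
  set Tv : β → Finset (Sym2 (α × β)) := fun v => (Mv v).image (Sym2.map (fun x => (x, v))) with hTv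
  set Tu : α → Finset (Sym2 (α × β)) := fun u => (Nu u).image (Sym2.map (fun y => (u, y))) with hTu
  have hTvcard : ∀ v, (Tv v).card = (Mv v).card := by
    intro v
    exact Finset.card_image_of_injective _ (Sym2.map.injective (fun a b h => congrArg Prod.fst h))
  have hTucard : ∀ u, (Tu u).card = (Nu u).card := by
    intro u
    exact Finset.card_image_of_injective _ (Sym2.map.injective (fun a b h => congrArg Prod.snd h))
  have hTvM : ∀ v, Tv v ⊆ M := by
    intro v
    rw [hTv]
    exact Finset.image_subset_iff.mpr (fun e he => hMvM v e he)
  have hTuM : ∀ u, Tu u ⊆ M := by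
    intro u
    rw [hTu]
    exact Finset.image_subset_iff.mpr (fun e he => hNuM u e he)
  -- all members of Tv v have second coordinate v, etc.
  have hTvsnd : ∀ v m, m ∈ Tv v → ∀ x ∈ m, x.2 = v := by
    intro v m hm x hx
    rw [hTv, Finset.mem_image] at hm
    obtain ⟨e, _, rfl⟩ := hm
    obtain ⟨a, _, rfl⟩ := Sym2.mem_map.mp hx
    rfl
  have hTufst : ∀ u m, m ∈ Tu u → ∀ x ∈ m, x.1 = u := by
    intro u m hm x hx
    rw [hTu, Finset.mem_image] at hm
    obtain ⟨e, _, rfl⟩ := hm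
    obtain ⟨a, _, rfl⟩ := Sym2.mem_map.mp hx
    rfl
  -- the key counting inequality
  have hdisjv : ∀ v ∈ B, ∀ v' ∈ B, v ≠ v' → Disjoint (Tv v) (Tv v') := by
    intro v _ v' _ hne
    rw [Finset.disjoint_left]
    intro m h1' h2'
    induction m with
    | _ x y =>
      exact hne ((hTvsnd v _ h1' x (Sym2.mem_mk_left x y)).symm.trans
        (hTvsnd v' _ h2' x (Sym2.mem_mk_left x y)))
  have hdisju : ∀ u ∈ A, ∀ u' ∈ A, u ≠ u' → Disjoint (Tu u) (Tu u') := by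
    intro u _ u' _ hne
    rw [Finset.disjoint_left]
    intro m h1' h2'
    induction m with
    | _ x y =>
      exact hne ((hTufst u _ h1' x (Sym2.mem_mk_left x y)).symm.trans
        (hTufst u' _ h2' x (Sym2.mem_mk_left x y)))
  have hdisjvu : Disjoint (B.biUnion Tv) (A.biUnion Tu) := by
    rw [Finset.disjoint_left]
    intro m h1' h2'
    rw [Finset.mem_biUnion] at h1' h2'
    obtain ⟨v, _, hmv⟩ := h1'
    obtain ⟨u, _, hmu⟩ := h2'
    induction m with
    | _ x y =>
      have hadj : (G □ H).Adj x y := (G □ H).mem_edgeSet.mp (hME (hTvM v hmv))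
      apply hadj.ne
      have hx2 := hTvsnd v _ hmv x (Sym2.mem_mk_left x y)
      have hy2 := hTvsnd v _ hmv y (Sym2.mem_mk_right x y)
      have hx1 := hTufst u _ hmu x (Sym2.mem_mk_left x y)
      have hy1 := hTufst u _ hmu y (Sym2.mem_mk_right x y)
      exact Prod.ext (hx1.trans hy1.symm) (hx2.trans hy2.symm)
  have key : ∑ v ∈ B, (Mv v).card + ∑ u ∈ A, (Nu u).card ≤ M.card := by
    have e1 : ∑ v ∈ B, (Mv v).card = (B.biUnion Tv).card := by
      rw [Finset.card_biUnion hdisjv]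
      exact Finset.sum_congr rfl (fun v _ => (hTvcard v).symm)
    have e2 : ∑ u ∈ A, (Nu u).card = (A.biUnion Tu).card := by
      rw [Finset.card_biUnion hdisju]
      exact Finset.sum_congr rfl (fun u _ => (hTucard u).symm)
    rw [e1, e2, ← Finset.card_union_of_disjoint hdisjvu]
    apply Finset.card_le_card
    apply Finset.union_subset
    · exact Finset.biUnion_subset.mpr (fun v _ => hTvM v)
    · exact Finset.biUnion_subset.mpr (fun u _ => hTuM u)
  -- existence of good layers
  have hv0 : ∃ v, v ∉ B := by
    by_contra hc
    push_neg at hc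
    have hBuniv : B = Finset.univ := Finset.eq_univ_iff_forall.mpr hc
    have : edgeConn G * Fintype.card β ≤ ∑ v ∈ B, (Mv v).card := by
      calc edgeConn G * Fintype.card β = B.card * edgeConn G := by
            rw [hBuniv, Finset.card_univ, mul_comm]
        _ ≤ ∑ v ∈ B, (Mv v).card := Finset.card_nsmul_le_sum B _ _ hBlam
      
    omega
  have hu0 : ∃ u, u ∉ A := by
    by_contra hc
    push_neg at hc
    have hAuniv : A = Finset.univ := Finset.eq_univ_iff_forall.mpr hc
    have : edgeConn H * Fintype.card α ≤ ∑ u ∈ A, (Nu u).card := by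
      calc edgeConn H * Fintype.card α = A.card * edgeConn H := by
            rw [hAuniv, Finset.card_univ, mul_comm]
        _ ≤ ∑ u ∈ A, (Nu u).card := Finset.card_nsmul_le_sum A _ _ hAlam
    omega
  obtain ⟨v0, hv0⟩ := hv0
  obtain ⟨u0, hu0⟩ := hu0
  -- reachability from the cross
  set R : α × β → Prop := fun x => K.Reachable (u0, v0) x with hR
  have hgoodu : ∀ u, u ∉ A → ∀ b, R (u, b) := by
    intro u hu b
    exact ((hliftG v0 hv0 u0 u).trans (hliftH u hu v0 b))
  have hgoodv : ∀ v, v ∉ B → ∀ a, R (a, v) := by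
    intro v hv a
    exact ((hliftH u0 hu0 v0 v).trans (hliftG v hv u0 a))
  have hall : ∀ x, R x := by
    by_contra hc
    push_neg at hc
    obtain ⟨⟨u, v⟩, hx⟩ := hc
    have huA : u ∈ A := by
      by_contra h; exact hx (hgoodu u h v)
    have hvB : v ∈ B := by
      by_contra h; exact hx (hgoodv v h u)
    -- boundary edges are in M
    have hcl : ∀ y : α × β, (G □ H).Adj (u, v) y → R y → s((u, v), y) ∈ M := by
      intro y hadj hy
      by_contra hm
      refine hx (hy.trans (Adj.reachable ?_).symm)
      rw [hK, deleteEdges_adj]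
      exact ⟨hadj, fun hmm => hm (Finset.mem_coe.mp hmm)⟩
    -- degree bound at u in layer v
    have hdeg1 : G.degree u + 1 ≤ (Mv v).card + A.card := by
      have hsplit := Finset.card_filter_add_card_filter_not
        (s := G.neighborFinset u) (p := fun x => x ∈ A)
      set f1 := (G.neighborFinset u).filter (fun x => x ∈ A) with hf1
      set f2 := (G.neighborFinset u).filter (fun x => ¬ x ∈ A) with hf2
      have hc1 : f1.card ≤ A.card - 1 := by
        have : f1 ⊆ A.erase u := by
          intro x hxm
          rw [hf1, Finset.mem_filter] at hxm
          refine Finset.mem_erase.mpr ⟨?_, hxm.2⟩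
          intro heq
          exact G.irrefl (heq ▸ (G.mem_neighborFinset u x).mp hxm.1)
        calc f1.card ≤ (A.erase u).card := Finset.card_le_card this
          _ = A.card - 1 := Finset.card_erase_of_mem huA
      have hc2 : f2.card ≤ (Mv v).card := by
        have himg : f2.image (fun x => s(u, x)) ⊆ Mv v := by
          intro e he
          rw [Finset.mem_image] at he
          obtain ⟨x, hxm, rfl⟩ := he
          rw [hf2, Finset.mem_filter] at hxm
          have hadj : G.Adj u x := (G.mem_neighborFinset u x).mp hxm.1
          have hmem : s((u, v), (x, v)) ∈ M :=
            hcl (x, v) (boxProd_adj.mpr (Or.inl ⟨hadj, rfl⟩)) (hgoodu x hxm.2 v)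
          rw [hMv]
          simp only [Finset.mem_filter, Finset.mem_univ, true_and, Sym2.map_pair_eq]
          exact hmem
        calc f2.card = (f2.image (fun x => s(u, x))).card := by
              rw [Finset.card_image_of_injective _ (fun a b h => Sym2.congr_right.mp h)]
          _ ≤ (Mv v).card := Finset.card_le_card himg
      have hA1 : 1 ≤ A.card := Finset.card_pos.mpr ⟨u, huA⟩
      have : G.degree u = f1.card + f2.card := by
        rw [hsplit]; rfl
      omega
    -- degree bound at v in layer u
    have hdeg2 : H.degree v + 1 ≤ (Nu u).card + B.card := by
      have hsplit := Finset.card_filter_add_card_filter_not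
        (s := H.neighborFinset v) (p := fun x => x ∈ B)
      set f1 := (H.neighborFinset v).filter (fun x => x ∈ B) with hf1
      set f2 := (H.neighborFinset v).filter (fun x => ¬ x ∈ B) with hf2
      have hc1 : f1.card ≤ B.card - 1 := by
        have : f1 ⊆ B.erase v := by
          intro x hxm
          rw [hf1, Finset.mem_filter] at hxm
          refine Finset.mem_erase.mpr ⟨?_, hxm.2⟩
          intro heq
          exact H.irrefl (heq ▸ (H.mem_neighborFinset v x).mp hxm.1)
        calc f1.card ≤ (B.erase v).card := Finset.card_le_card this
          _ = B.card - 1 := Finset.card_erase_of_mem hvB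
      have hc2 : f2.card ≤ (Nu u).card := by
        have himg : f2.image (fun x => s(v, x)) ⊆ Nu u := by
          intro e he
          rw [Finset.mem_image] at he
          obtain ⟨x, hxm, rfl⟩ := he
          rw [hf2, Finset.mem_filter] at hxm
          have hadj : H.Adj v x := (H.mem_neighborFinset v x).mp hxm.1
          have hmem : s((u, v), (u, x)) ∈ M :=
            hcl (u, x) (boxProd_adj.mpr (Or.inr ⟨hadj, rfl⟩)) (hgoodv x hxm.2 u)
          rw [hNu]
          simp only [Finset.mem_filter, Finset.mem_univ, true_and, Sym2.map_pair_eq]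
          exact hmem
        calc f2.card = (f2.image (fun x => s(v, x))).card := by
              rw [Finset.card_image_of_injective _ (fun a b h => Sym2.congr_right.mp h)]
          _ ≤ (Nu u).card := Finset.card_le_card himg
      have hB1 : 1 ≤ B.card := Finset.card_pos.mpr ⟨v, hvB⟩
      have : H.degree v = f1.card + f2.card := by
        rw [hsplit]; rfl
      omega
    -- sum lower bounds
    have hS1 : (Mv v).card + (B.card - 1) ≤ ∑ v' ∈ B, (Mv v').card := by
      rw [← Finset.add_sum_erase B _ hvB]
      have : (B.erase v).card ≤ ∑ v' ∈ B.erase v, (Mv v').card := by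
        calc (B.erase v).card = (B.erase v).card * 1 := (mul_one _).symm
          _ ≤ ∑ v' ∈ B.erase v, (Mv v').card := Finset.card_nsmul_le_sum _ _ _
            (fun v' hv' => le_trans hg0 (hBlam v' (Finset.mem_of_mem_erase hv')))
      rw [Finset.card_erase_of_mem hvB] at this
      omega
    have hS2 : (Nu u).card + (A.card - 1) ≤ ∑ u' ∈ A, (Nu u').card := by
      rw [← Finset.add_sum_erase A _ huA]
      have : (A.erase u).card ≤ ∑ u' ∈ A.erase u, (Nu u').card := by
        calc (A.erase u).card = (A.erase u).card * 1 := (mul_one _).symm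
          _ ≤ ∑ u' ∈ A.erase u, (Nu u').card := Finset.card_nsmul_le_sum _ _ _
            (fun u' hu' => le_trans hh0 (hAlam u' (Finset.mem_of_mem_erase hu')))
      rw [Finset.card_erase_of_mem huA] at this
      omega
    have hA1 : 1 ≤ A.card := Finset.card_pos.mpr ⟨u, huA⟩
    have hB1 : 1 ≤ B.card := Finset.card_pos.mpr ⟨v, hvB⟩
    have hmd1 : minDeg G ≤ G.degree u := by
      rw [minDeg]; exact minDegree_le_degree G u
    have hmd2 : minDeg H ≤ H.degree v := by
      rw [minDeg]; exact minDegree_le_degree H v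
    omega
  rw [connected_iff]
  exact ⟨fun x y => (hall x).symm.trans (hall y), ⟨(u0, v0)⟩⟩

end Helpers

/-- λ(G □ H) = min{λ(G)|V(H)|, λ(H)|V(G)|, δ(G)+δ(H)}. -/
theorem stmt1 {α β : Type*} [Fintype α] [Fintype β]
    (G : SimpleGraph α) (H : SimpleGraph β)
    (hG : 2 ≤ Fintype.card α) (hH : 2 ≤ Fintype.card β) :
    edgeConn (G □ H) =
      min (min (edgeConn G * Fintype.card β) (edgeConn H * Fintype.card α))
        (minDeg G + minDeg H) := by
  have hprod : 2 ≤ Fintype.card (α × β) := by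
    rw [Fintype.card_prod]; nlinarith
  apply le_antisymm
  · exact le_min (le_min (ub_left G H hG hH) (ub_right G H hG hH)) (ub_delta G H hG hH)
  · apply le_csInf (cutset_nonempty (G □ H) hprod)
    rintro n ⟨M, rfl, hsub, hdis⟩
    by_contra hlt
    push_neg at hlt
    rw [lt_min_iff, lt_min_iff] at hlt
    exact hdis (lb_main G H hG hH M hsub hlt.1.1 hlt.1.2 hlt.2)
end

section
/- For connected graphs G and H with n = |V(G)|·|V(H)|, the maximum number of pairwise edge-disjoint spanning trees of G □ H is at least the sum of the maximum numbers of pairwise edge-disjoint spanning trees of G and of H, minus 1; equivalently λ_n(G □ H) ≥ λ_{|V(G)|}(G) + λ_{|V(H)|}(H) − 1. -/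
open SimpleGraph

namespace StmtAux

variable {V : Type*}

/-- Deleting an edge whose endpoints remain reachable preserves connectivity. -/
lemma connected_delete_edge {A : SimpleGraph V} (hA : A.Connected) {v w : V}
    (hr : (A \ fromEdgeSet {s(v, w)}).Reachable v w) :
    (A \ fromEdgeSet {s(v, w)}).Connected := by
  rw [connected_iff] at hA ⊢
  refine ⟨?_, hA.2⟩
  intro x y
  obtain ⟨p⟩ := hA.1 x y
  induction p with
  | nil => exact Reachable.refl _
  | @cons a c b h p IH =>
    refine Reachable.trans ?_ IH
    by_cases he : s(a, c) = s(v, w)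
    · rw [Sym2.eq_iff] at he
      rcases he with ⟨rfl, rfl⟩ | ⟨rfl, rfl⟩
      · exact hr
      · exact hr.symm
    · exact Adj.reachable (by
        constructor
        · exact h
        · simp only [fromEdgeSet_adj, Set.mem_singleton_iff]
          intro hmem
          exact he hmem.1)

/-- Every finite connected graph contains a spanning tree (as a subgraph graph). -/
lemma exists_isTree_le [Fintype V] {A : SimpleGraph V} (hA : A.Connected) :
    ∃ T : SimpleGraph V, T ≤ A ∧ T.IsTree := by
  classical
  obtain ⟨n, hn⟩ : ∃ n, A.edgeSet.ncard = n := ⟨_, rfl⟩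
  induction n using Nat.strong_induction_on generalizing A with
  | _ n IH =>
    by_cases hac : A.IsAcyclic
    · exact ⟨A, le_refl A, hA, hac⟩
    · simp only [IsAcyclic] at hac
      push_neg at hac
      obtain ⟨v, c, hc⟩ := hac
      cases c with
      | nil => exact absurd hc (by simp [Walk.isCycle_def])
      | @cons _ x _ h p =>
        have hme : s(v, x) ∈ (Walk.cons h p).edges := by simp
        have hreach := (adj_and_reachable_delete_edges_iff_exists_cycle.mpr
          ⟨v, Walk.cons h p, hc, hme⟩).2
        have hA' : (A \ fromEdgeSet {s(v, x)}).Connected := connected_delete_edge hA hreach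
        have hedge : (A \ fromEdgeSet {s(v, x)}).edgeSet = A.edgeSet \ {s(v, x)} := by
          simp [edgeSet_sdiff, edgeSet_fromEdgeSet, edgeSet_sdiff_sdiff_isDiag]
        have hlt : (A \ fromEdgeSet {s(v, x)}).edgeSet.ncard < n := by
          rw [← hn, hedge]
          refine Set.ncard_lt_ncard ?_ (Set.toFinite _)
          constructor
          · exact Set.diff_subset
          · intro hsub
            exact (hsub (SimpleGraph.mem_edgeSet A |>.mpr h)).2 rfl
        obtain ⟨T, hle, hT⟩ := IH _ hlt hA' rfl
        exact ⟨T, hle.trans sdiff_le, hT⟩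


/-- From a connected spanning simple graph `U ≤ W`, extract a spanning-tree subgraph of `W`
whose edges lie in `U`. -/
lemma exists_spanningTree_subgraph [Fintype V] {W U : SimpleGraph V} (hUW : U ≤ W)
    (hU : U.Connected) :
    ∃ S : W.Subgraph, S.IsSpanning ∧ S.coe.IsTree ∧ S.edgeSet ⊆ U.edgeSet := by
  obtain ⟨T, hTU, hT⟩ := exists_isTree_le hU
  refine ⟨SimpleGraph.toSubgraph T (hTU.trans hUW), toSubgraph.isSpanning T _, ?_, ?_⟩
  · -- coe is a tree, via the iso with `T`
    have hsp : (SimpleGraph.toSubgraph T (hTU.trans hUW)).IsSpanning := toSubgraph.isSpanning T _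
    have iso : T ≃g (SimpleGraph.toSubgraph T (hTU.trans hUW)).coe :=
      { toEquiv := (Equiv.Set.univ V).symm
        map_rel_iff' := Iff.rfl }
    constructor
    · exact iso.connected_iff.mp hT.1
    · intro v c hc
      have : (c.map iso.symm.toHom).IsCycle :=
        (Walk.map_isCycle_iff_of_injective (RelIso.injective iso.symm)).mpr hc
      exact hT.2 _ this
  · intro e he
    induction e with
    | _ a b =>
      rw [Subgraph.mem_edgeSet] at he
      exact (SimpleGraph.mem_edgeSet U).mpr (hTU he)

/-- The set of achievable packing numbers is bounded when there are at least 2 vertices. -/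
lemma bddAbove_hasED [Fintype V] {W : SimpleGraph V} (h2 : 2 ≤ Fintype.card V) :
    BddAbove {n | HasEDSpanningTrees W n} := by
  classical
  refine ⟨Fintype.card (Sym2 V), ?_⟩
  rintro n ⟨f, hf, hdisj⟩
  have hedge : ∀ i : Fin n, ∃ e, e ∈ (f i).edgeSet := by
    intro i
    obtain ⟨x, y, hxy⟩ := Fintype.exists_pair_of_one_lt_card (α := V) (by omega)
    have hx : x ∈ (f i).verts := (hf i).1 x
    have hy : y ∈ (f i).verts := (hf i).1 y
    have hreach : (f i).coe.Reachable ⟨x, hx⟩ ⟨y, hy⟩ := (hf i).2.1.preconnected _ _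
    obtain ⟨w⟩ := hreach
    cases w with
    | nil => exact absurd rfl hxy
    | @cons _ c _ hadj p =>
      exact ⟨s(x, (c : V)), Subgraph.mem_edgeSet.mpr (by simpa using hadj)⟩
  choose E hE using hedge
  have hinj : Function.Injective E := by
    intro i j hij
    by_contra hne
    exact Set.disjoint_left.mp (hdisj i j hne) (hE i) (hij ▸ hE j)
  simpa using Fintype.card_le_of_injective E hinj

/-- Downward closure. -/
lemma hasED_mono {W : SimpleGraph V} {m n : ℕ} (hmn : m ≤ n)
    (h : HasEDSpanningTrees W n) : HasEDSpanningTrees W m := by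
  obtain ⟨f, hf, hdisj⟩ := h
  exact ⟨f ∘ Fin.castLE hmn, fun i => hf _, fun i j hij =>
    hdisj _ _ (fun hc => hij (Fin.castLE_injective hmn hc))⟩

lemma hasED_zero {W : SimpleGraph V} : HasEDSpanningTrees W 0 :=
  ⟨fun i => i.elim0, fun i => i.elim0, fun i => i.elim0⟩

lemma hasED_one [Fintype V] {W : SimpleGraph V} (hW : W.Connected) :
    HasEDSpanningTrees W 1 := by
  obtain ⟨S, h1, h2, _⟩ := exists_spanningTree_subgraph (le_refl W) hW
  exact ⟨fun _ => S, fun _ => ⟨h1, h2⟩, fun i j hij => absurd (Subsingleton.elim i j) hij⟩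

/-- The packing number, bumped to at least 1, is achieved. -/
lemma hasED_max_one [Fintype V] {W : SimpleGraph V} (hW : W.Connected) :
    HasEDSpanningTrees W (max 1 (spanningTreePacking W)) := by
  by_cases hb : BddAbove {n | HasEDSpanningTrees W n}
  · have hmem : spanningTreePacking W ∈ {n | HasEDSpanningTrees W n} :=
      Nat.sSup_mem ⟨0, hasED_zero⟩ hb
    have h1 : 1 ≤ spanningTreePacking W := le_csSup hb (hasED_one hW)
    rwa [max_eq_right h1]
  · rw [not_bddAbove_iff] at hb
    obtain ⟨m, hm, hlt⟩ := hb (max 1 (spanningTreePacking W))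
    exact hasED_mono hlt.le hm

lemma packing_eq_zero_of_not_bddAbove {W : SimpleGraph V}
    (hb : ¬ BddAbove {n | HasEDSpanningTrees W n}) : spanningTreePacking W = 0 := by
  unfold spanningTreePacking
  rw [csSup_of_not_bddAbove hb, csSup_empty]
  rfl

lemma hasED_all_of_subsingleton [Subsingleton V] [Nonempty V] {W : SimpleGraph V} (n : ℕ) :
    HasEDSpanningTrees W n := by
  refine ⟨fun _ => ⊤, fun i => ⟨fun v => trivial, ?_, ?_⟩, ?_⟩
  · rw [connected_iff]
    constructor
    · intro x y
      rw [Subsingleton.elim x y]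
    · exact ⟨⟨Classical.arbitrary V, trivial⟩⟩
  · intro v c hc
    cases c with
    | nil => simp [Walk.isCycle_def] at hc
    | @cons _ y _ hadj p =>
      have h2 : W.Adj (↑v) (↑y) := by simpa using hadj
      exact absurd (Subsingleton.elim _ _) h2.ne
  · intro i j hij
    have hempty : (⊤ : W.Subgraph).edgeSet = ∅ := by
      ext e
      induction e with
      | _ a b =>
        simp only [Subgraph.mem_edgeSet, Set.mem_empty_iff_false, iff_false]
        intro hadj
        have hW : W.Adj a b := hadj
        exact hW.ne (Subsingleton.elim a b)
    simp [hempty]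

/-- Edge counting: `k` edge-disjoint spanning trees force `2k ≤ |V|`. -/
lemma two_mul_le_card [Fintype V] {W : SimpleGraph V} {k : ℕ} (h2 : 2 ≤ Fintype.card V)
    (h : HasEDSpanningTrees W k) : 2 * k ≤ Fintype.card V := by
  classical
  obtain ⟨f, hf, hdisj⟩ := h
  have hcard : ∀ i : Fin k, ((f i).edgeSet.toFinset).card = Fintype.card V - 1 := by
    intro i
    have h1 := (hf i).2.card_edgeFinset
    have hverts : Fintype.card ↥(f i).verts = Fintype.card V := by
      have e : ↥(f i).verts ≃ V := by
        rw [(hf i).1.verts_eq_univ]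
        exact Equiv.Set.univ V
      exact Fintype.card_congr e
    have h2' : ((f i).coe.edgeFinset).card = Fintype.card V - 1 := by omega
    have himg : Sym2.map (Subtype.val) '' (f i).coe.edgeSet = (f i).edgeSet :=
      Subgraph.image_coe_edgeSet_coe (f i)
    have hncard : ((f i).edgeSet).ncard = ((f i).coe.edgeSet).ncard := by
      rw [← himg, Set.ncard_image_of_injective _ (Sym2.map.injective Subtype.val_injective)]
    calc ((f i).edgeSet.toFinset).card = ((f i).edgeSet).ncard :=
          (Set.ncard_eq_toFinset_card' _).symm
      _ = ((f i).coe.edgeSet).ncard := hncard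
      _ = ((f i).coe.edgeFinset).card := by
          rw [Set.ncard_eq_toFinset_card' _]
          congr 1
      _ = Fintype.card V - 1 := h2'
  -- the union of all trees' edges
  have hsub : (Finset.univ.biUnion fun i : Fin k => (f i).edgeSet.toFinset) ⊆ W.edgeFinset := by
    intro e he
    rw [Finset.mem_biUnion] at he
    obtain ⟨i, _, hei⟩ := he
    rw [Set.mem_toFinset] at hei
    rw [mem_edgeFinset]
    exact (f i).edgeSet_subset hei
  have hdisjF : ∀ i ∈ (Finset.univ : Finset (Fin k)), ∀ j ∈ Finset.univ, i ≠ j →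
      Disjoint ((f i).edgeSet.toFinset) ((f j).edgeSet.toFinset) := by
    intro i _ j _ hij
    rw [Set.disjoint_toFinset]
    exact hdisj i j hij
  have hbi := Finset.card_biUnion hdisjF
  have hsum : (Finset.univ.biUnion fun i : Fin k => (f i).edgeSet.toFinset).card
      = k * (Fintype.card V - 1) := by
    rw [hbi]
    rw [Finset.sum_congr rfl (fun i _ => hcard i)]
    simp [Finset.sum_const, mul_comm]
  have hle : k * (Fintype.card V - 1) ≤ (Fintype.card V).choose 2 := by
    rw [← hsum]
    exact le_trans (Finset.card_le_card hsub) W.card_edgeFinset_le_card_choose_two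
  obtain ⟨m, hm⟩ : ∃ m, Fintype.card V = m + 1 := ⟨Fintype.card V - 1, by omega⟩
  rw [hm] at hle ⊢
  simp only [Nat.add_sub_cancel] at hle
  rw [Nat.choose_two_right, Nat.add_sub_cancel] at hle
  have hev : 2 * ((m + 1) * m / 2) = (m + 1) * m := by
    refine Nat.two_mul_div_two_of_even ?_
    rw [mul_comm]
    exact Nat.even_mul_succ_self m
  have : 2 * (k * m) ≤ (m + 1) * m := by omega
  have hm1 : 1 ≤ m := by omega
  have := Nat.le_of_mul_le_mul_right (by linarith [this] : (2 * k) * m ≤ (m + 1) * m) (by omega : 0 < m)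
  omega

lemma packing_eq_zero_of_subsingleton [Subsingleton V] [Nonempty V] {W : SimpleGraph V} :
    spanningTreePacking W = 0 := by
  refine packing_eq_zero_of_not_bddAbove ?_
  rw [not_bddAbove_iff]
  intro x
  exact ⟨x + 1, hasED_all_of_subsingleton _, by omega⟩

section Mix

variable {A B : Type*}

/-- A generic "grid-like" spanning subgraph of a box product. -/
def mixGraph (GA : SimpleGraph A) (GB : SimpleGraph B)
    (okH : A → A → B → Prop) (okV : B → B → A → Prop)
    (hH : ∀ a a' b, okH a a' b → okH a' a b) (hV : ∀ b b' a, okV b b' a → okV b' b a) :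
    SimpleGraph (A × B) where
  Adj x y := (x.2 = y.2 ∧ GA.Adj x.1 y.1 ∧ okH x.1 y.1 x.2) ∨
    (x.1 = y.1 ∧ GB.Adj x.2 y.2 ∧ okV x.2 y.2 x.1)
  symm := by
    refine ⟨?_⟩
    rintro ⟨a, b⟩ ⟨a', b'⟩ (⟨h1, h2, h3⟩ | ⟨h1, h2, h3⟩)
    · refine Or.inl ⟨h1.symm, h2.symm, ?_⟩
      dsimp only at h1 h3 ⊢
      rw [← h1]
      exact hH _ _ _ h3
    · refine Or.inr ⟨h1.symm, h2.symm, ?_⟩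
      dsimp only at h1 h3 ⊢
      rw [← h1]
      exact hV _ _ _ h3
  loopless := by
    refine ⟨?_⟩
    rintro ⟨a, b⟩ (⟨_, h, _⟩ | ⟨_, h, _⟩) <;> exact h.ne rfl

lemma mixGraph_adj {GA : SimpleGraph A} {GB : SimpleGraph B}
    {okH : A → A → B → Prop} {okV : B → B → A → Prop} {hH} {hV} {x y : A × B} :
    (mixGraph GA GB okH okV hH hV).Adj x y ↔
      (x.2 = y.2 ∧ GA.Adj x.1 y.1 ∧ okH x.1 y.1 x.2) ∨
      (x.1 = y.1 ∧ GB.Adj x.2 y.2 ∧ okV x.2 y.2 x.1) := Iff.rfl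

lemma mixGraph_le {G : SimpleGraph A} {H : SimpleGraph B}
    {GA : SimpleGraph A} {GB : SimpleGraph B}
    {okH : A → A → B → Prop} {okV : B → B → A → Prop} {hH} {hV}
    (hGA : GA ≤ G) (hGB : GB ≤ H) :
    mixGraph GA GB okH okV hH hV ≤ G □ H := by
  rintro ⟨a, b⟩ ⟨a', b'⟩ (⟨h1, h2, _⟩ | ⟨h1, h2, _⟩)
  · exact boxProd_adj.mpr (Or.inl ⟨hGA h2, h1⟩)
  · exact boxProd_adj.mpr (Or.inr ⟨hGB h2, h1⟩)

lemma mixGraph_disjoint {GA GA' : SimpleGraph A} {GB GB' : SimpleGraph B}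
    {okH okH' : A → A → B → Prop} {okV okV' : B → B → A → Prop} {hH hV hH' hV'}
    (hHH : ∀ a a' b, GA.Adj a a' → GA'.Adj a a' → okH a a' b → okH' a a' b → False)
    (hVV : ∀ b b' a, GB.Adj b b' → GB'.Adj b b' → okV b b' a → okV' b b' a → False) :
    Disjoint (mixGraph GA GB okH okV hH hV).edgeSet
      (mixGraph GA' GB' okH' okV' hH' hV').edgeSet := by
  rw [Set.disjoint_left]
  intro e he he'
  induction e with
  | _ x y =>
    rw [mem_edgeSet] at he he'
    rcases he with ⟨h1, h2, h3⟩ | ⟨h1, h2, h3⟩ <;>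
      rcases he' with ⟨h1', h2', h3'⟩ | ⟨h1', h2', h3'⟩
    · exact hHH _ _ _ h2 h2' h3 h3'
    · exact h2'.ne h1
    · exact h2.ne h1'
    · exact hVV _ _ _ h2 h2' h3 h3'

end Mix

/-- In a connected graph, every non-root vertex has a neighbour strictly closer to the root. -/
lemma exists_parent {X : SimpleGraph V} (hX : X.Connected) (r a : V) (ha : a ≠ r) :
    ∃ b, X.Adj a b ∧ X.dist b r + 1 = X.dist a r := by
  obtain ⟨w, hw⟩ := (hX a r).exists_walk_length_eq_dist
  cases w with
  | nil => exact absurd rfl ha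
  | @cons _ c _ h p =>
    refine ⟨c, h, ?_⟩
    have h1 : X.dist a r = p.length + 1 := by
      rw [← hw]
      simp
    have h2 : X.dist c r ≤ p.length := dist_le p
    obtain ⟨q, hq⟩ := (hX c r).exists_walk_length_eq_dist
    have h3 : X.dist a r ≤ q.length + 1 := by
      have := dist_le (Walk.cons h q)
      simpa using this
    omega

section Master

variable {α β : Type*} [Fintype α] [Fintype β] {G : SimpleGraph α} {H : SimpleGraph β}

lemma master (k l : ℕ) (hk : 1 ≤ k) (hl : 1 ≤ l)
    (T : Fin k → G.Subgraph) (hT : ∀ i, (T i).IsSpanning ∧ (T i).coe.IsTree)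
    (hTd : ∀ i j, i ≠ j → Disjoint (T i).edgeSet (T j).edgeSet)
    (F : Fin l → H.Subgraph) (hF : ∀ j, (F j).IsSpanning ∧ (F j).coe.IsTree)
    (hFd : ∀ i j, i ≠ j → Disjoint (F i).edgeSet (F j).edgeSet)
    (hpk : 2 * (k - 1) ≤ Fintype.card α - 1)
    (hql : 2 * (l - 1) ≤ Fintype.card β - 1) :
    HasEDSpanningTrees (G □ H) (k + l - 1) := by
  classical
  set TT : Fin k → SimpleGraph α := fun i => (T i).spanningCoe with hTTdef
  set FF : Fin l → SimpleGraph β := fun j => (F j).spanningCoe with hFFdef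
  have hTTc : ∀ i, (TT i).Connected := fun i =>
    (Iso.connected_iff ((T i).spanningCoeEquivCoeOfSpanning (hT i).1)).mpr (hT i).2.1
  have hFFc : ∀ j, (FF j).Connected := fun j =>
    (Iso.connected_iff ((F j).spanningCoeEquivCoeOfSpanning (hF j).1)).mpr (hF j).2.1
  have hTTd : ∀ i j, i ≠ j → ∀ a a', (TT i).Adj a a' → (TT j).Adj a a' → False := by
    intro i j hij a a' h1 h2
    exact Set.disjoint_left.mp (hTd i j hij) (Subgraph.mem_edgeSet.mpr h1)
      (Subgraph.mem_edgeSet.mpr h2)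
  have hFFd : ∀ i j, i ≠ j → ∀ b b', (FF i).Adj b b' → (FF j).Adj b b' → False := by
    intro i j hij b b' h1 h2
    exact Set.disjoint_left.mp (hFd i j hij) (Subgraph.mem_edgeSet.mpr h1)
      (Subgraph.mem_edgeSet.mpr h2)
  have hαne : Nonempty α := (hTTc ⟨0, hk⟩).nonempty
  have hβne : Nonempty β := (hFFc ⟨0, hl⟩).nonempty
  set i0 : Fin k := ⟨0, hk⟩
  set j0 : Fin l := ⟨0, hl⟩
  obtain ⟨c0⟩ := hαne
  obtain ⟨b0⟩ := hβne
  set dT : α → ℕ := fun a => (TT i0).dist a c0 with hdT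
  set dF : β → ℕ := fun b => (FF j0).dist b b0 with hdF
  -- parent maps
  have hparT : ∀ a : α, a ≠ c0 → ∃ b, (TT i0).Adj a b ∧ dT b + 1 = dT a := fun a ha =>
    exists_parent (hTTc i0) c0 a ha
  have hparF : ∀ b : β, b ≠ b0 → ∃ c, (FF j0).Adj b c ∧ dF c + 1 = dF b := fun b hb =>
    exists_parent (hFFc j0) b0 b hb
  set parT : α → α := fun a => if h : a = c0 then c0 else (hparT a h).choose with hparTdef
  set parF : β → β := fun b => if h : b = b0 then b0 else (hparF b h).choose with hparFdef
  have parT_adj : ∀ a, a ≠ c0 → (TT i0).Adj a (parT a) := by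
    intro a ha
    simp only [hparTdef, dif_neg ha]
    exact (hparT a ha).choose_spec.1
  have parT_dist : ∀ a, a ≠ c0 → dT (parT a) + 1 = dT a := by
    intro a ha
    simp only [hparTdef, dif_neg ha]
    exact (hparT a ha).choose_spec.2
  have parF_adj : ∀ b, b ≠ b0 → (FF j0).Adj b (parF b) := by
    intro b hb
    simp only [hparFdef, dif_neg hb]
    exact (hparF b hb).choose_spec.1
  have parF_dist : ∀ b, b ≠ b0 → dF (parF b) + 1 = dF b := by
    intro b hb
    simp only [hparFdef, dif_neg hb]
    exact (hparF b hb).choose_spec.2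
  -- symmetric "child end" maps
  set chT : α → α → α := fun a a' =>
    if dT a' < dT a then a else if dT a < dT a' then a' else c0 with hchT
  set chF : β → β → β := fun b b' =>
    if dF b' < dF b then b else if dF b < dF b' then b' else b0 with hchF
  have chT_symm : ∀ a a', chT a a' = chT a' a := by
    intro a a'
    simp only [hchT]
    split_ifs <;> first | rfl | omega
  have chF_symm : ∀ b b', chF b b' = chF b' b := by
    intro b b'
    simp only [hchF]
    split_ifs <;> first | rfl | omega
  have chT_par : ∀ a, a ≠ c0 → chT a (parT a) = a := by
    intro a ha
    have := parT_dist a ha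
    simp only [hchT]
    rw [if_pos (by omega)]
  have chF_par : ∀ b, b ≠ b0 → chF b (parF b) = b := by
    intro b hb
    have := parF_dist b hb
    simp only [hchF]
    rw [if_pos (by omega)]
  -- choose the reserved columns and rows
  have hcardα : 2 * (k - 1) ≤ (Finset.univ.erase c0).card := by
    rw [Finset.card_erase_of_mem (Finset.mem_univ c0), Finset.card_univ]
    exact hpk
  have hcardβ : 2 * (l - 1) ≤ (Finset.univ.erase b0).card := by
    rw [Finset.card_erase_of_mem (Finset.mem_univ b0), Finset.card_univ]
    exact hql
  obtain ⟨Sα, hSαsub, hSαcard⟩ := Finset.exists_subset_card_eq hcardα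
  obtain ⟨Sβ, hSβsub, hSβcard⟩ := Finset.exists_subset_card_eq hcardβ
  set uvα : Fin (2 * (k - 1)) → α :=
    fun i => ↑(Sα.equivFin.symm (Fin.cast hSαcard.symm i)) with huvα
  set uvβ : Fin (2 * (l - 1)) → β :=
    fun i => ↑(Sβ.equivFin.symm (Fin.cast hSβcard.symm i)) with huvβ
  have huvα_inj : Function.Injective uvα := by
    intro i j h
    have h2 := Sα.equivFin.symm.injective (Subtype.val_injective h)
    have h3 : (Fin.cast hSαcard.symm i).1 = (Fin.cast hSαcard.symm j).1 := by rw [h2]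
    exact Fin.ext h3
  have huvβ_inj : Function.Injective uvβ := by
    intro i j h
    have h2 := Sβ.equivFin.symm.injective (Subtype.val_injective h)
    have h3 : (Fin.cast hSβcard.symm i).1 = (Fin.cast hSβcard.symm j).1 := by rw [h2]
    exact Fin.ext h3
  have huvα_ne : ∀ i, uvα i ≠ c0 := by
    intro i
    exact Finset.ne_of_mem_erase (hSαsub (Finset.coe_mem _))
  have huvβ_ne : ∀ i, uvβ i ≠ b0 := by
    intro i
    exact Finset.ne_of_mem_erase (hSβsub (Finset.coe_mem _))
  set u : Fin (k - 1) → α := fun i => uvα ⟨i.1, by omega⟩ with hu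
  set v : Fin (k - 1) → α := fun i => uvα ⟨(k - 1) + i.1, by omega⟩ with hv
  set dq : Fin (l - 1) → β := fun j => uvβ ⟨j.1, by omega⟩ with hdq
  set dq' : Fin (l - 1) → β := fun j => uvβ ⟨(l - 1) + j.1, by omega⟩ with hdq'
  set Ru : Set α := Set.range u with hRu
  set Rv : Set α := Set.range v with hRv
  set DQ : Set β := Set.range dq with hDQ
  set DQ' : Set β := Set.range dq' with hDQ'
  have hu_inj : Function.Injective u := by
    intro i j h
    have := huvα_inj h
    exact Fin.ext (by simpa using congrArg Fin.val this)
  have hv_inj : Function.Injective v := by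
    intro i j h
    have := huvα_inj h
    have := congrArg Fin.val this
    simp only at this
    exact Fin.ext (by omega)
  have hdq_inj : Function.Injective dq := by
    intro i j h
    have := huvβ_inj h
    exact Fin.ext (by simpa using congrArg Fin.val this)
  have hdq'_inj : Function.Injective dq' := by
    intro i j h
    have := huvβ_inj h
    have := congrArg Fin.val this
    simp only at this
    exact Fin.ext (by omega)
  have hRuRv : ∀ i j, u i ≠ v j := by
    intro i j h
    have := congrArg Fin.val (huvα_inj h)
    simp only at this
    omega
  have hDQDQ' : ∀ i j, dq i ≠ dq' j := by
    intro i j h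
    have := congrArg Fin.val (huvβ_inj h)
    simp only at this
    omega
  have hRu_ne : ∀ i, u i ≠ c0 := fun i => huvα_ne _
  have hRv_ne : ∀ i, v i ≠ c0 := fun i => huvα_ne _
  have hDQ_ne : ∀ j, dq j ≠ b0 := fun j => huvβ_ne _
  have hDQ'_ne : ∀ j, dq' j ≠ b0 := fun j => huvβ_ne _
  -- the column selector for the X-trees and row selector for the Y-trees
  set colX : Fin (k - 1) → β → β → α :=
    fun i b b' => if chF b b' ∈ DQ then v i else u i with hcolXdef
  set rowY : Fin (l - 1) → α → α → β :=
    fun j a a' => if chT a a' ∈ Ru then dq j else dq' j with hrowYdef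
  have hcol_symm : ∀ i b b', colX i b b' = colX i b' b := by
    intro i b b'
    simp only [hcolXdef, chF_symm]
  have hrow_symm : ∀ j a a', rowY j a a' = rowY j a' a := by
    intro j a a'
    simp only [hrowYdef, chT_symm]
  -- the three families of connected spanning subgraphs
  set XG : Fin (k - 1) → SimpleGraph (α × β) := fun i =>
    mixGraph (TT ⟨i.1 + 1, by have := i.isLt; omega⟩) (FF j0)
      (fun _ _ _ => True) (fun b b' a => a = colX i b b')
      (fun _ _ _ _ => trivial)
      (fun b b' a h => by show a = colX i b' b; rw [← hcol_symm i b b']; exact h) with hXGdef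
  set YG : Fin (l - 1) → SimpleGraph (α × β) := fun j =>
    mixGraph (TT i0) (FF ⟨j.1 + 1, by have := j.isLt; omega⟩)
      (fun a a' b => b = rowY j a a') (fun _ _ _ => True)
      (fun a a' b h => by show b = rowY j a' a; rw [← hrow_symm j a a']; exact h)
      (fun _ _ _ _ => trivial) with hYGdef
  set ZG : SimpleGraph (α × β) :=
    mixGraph (TT i0) (FF j0)
      (fun a a' b => b ∉ (if chT a a' ∈ Ru then DQ else DQ'))
      (fun b b' a => a ∉ (if chF b b' ∈ DQ then Rv else Ru))
      (fun a a' b h => by show b ∉ (if chT a' a ∈ Ru then DQ else DQ'); rw [chT_symm a' a]; exact h)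
      (fun b b' a h => by show a ∉ (if chF b' b ∈ DQ then Rv else Ru); rw [chF_symm b' b]; exact h) with hZGdef
  -- light adjacency lemmas
  have hXadj : ∀ i x y, (XG i).Adj x y ↔
      (x.2 = y.2 ∧ (TT ⟨i.1 + 1, by have := i.isLt; omega⟩).Adj x.1 y.1) ∨
      (x.1 = y.1 ∧ (FF j0).Adj x.2 y.2 ∧ x.1 = colX i x.2 y.2) := by
    intro i x y
    rw [hXGdef]
    constructor
    · rintro (⟨h1, h2, _⟩ | ⟨h1, h2, h3⟩)
      · exact Or.inl ⟨h1, h2⟩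
      · exact Or.inr ⟨h1, h2, h3⟩
    · rintro (⟨h1, h2⟩ | ⟨h1, h2, h3⟩)
      · exact Or.inl ⟨h1, h2, trivial⟩
      · exact Or.inr ⟨h1, h2, h3⟩
  have hYadj : ∀ j x y, (YG j).Adj x y ↔
      (x.2 = y.2 ∧ (TT i0).Adj x.1 y.1 ∧ x.2 = rowY j x.1 y.1) ∨
      (x.1 = y.1 ∧ (FF ⟨j.1 + 1, by have := j.isLt; omega⟩).Adj x.2 y.2) := by
    intro j x y
    rw [hYGdef]
    constructor
    · rintro (⟨h1, h2, h3⟩ | ⟨h1, h2, _⟩)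
      · exact Or.inl ⟨h1, h2, h3⟩
      · exact Or.inr ⟨h1, h2⟩
    · rintro (⟨h1, h2, h3⟩ | ⟨h1, h2⟩)
      · exact Or.inl ⟨h1, h2, h3⟩
      · exact Or.inr ⟨h1, h2, trivial⟩
  have hZadj : ∀ x y, ZG.Adj x y ↔
      (x.2 = y.2 ∧ (TT i0).Adj x.1 y.1 ∧ x.2 ∉ (if chT x.1 y.1 ∈ Ru then DQ else DQ')) ∨
      (x.1 = y.1 ∧ (FF j0).Adj x.2 y.2 ∧ x.1 ∉ (if chF x.2 y.2 ∈ DQ then Rv else Ru)) := by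
    intro x y
    rw [hZGdef]
    exact Iff.rfl
  -- connectivity of the X-trees
  have hXc : ∀ i, (XG i).Connected := by
    intro i
    have key : ∀ n b a, dF b = n → (XG i).Reachable (a, b) (c0, b0) := by
      intro n
      induction n using Nat.strong_induction_on with
      | _ n IH =>
        intro b a hn
        by_cases hb : b = b0
        · rw [hb]
          exact ((hTTc _).preconnected a c0).map
            ⟨fun x => (x, b0), fun h => (hXadj i _ _).mpr (Or.inl ⟨rfl, h⟩)⟩
        · have hadj := parF_adj b hb
          have hdist := parF_dist b hb
          have hr1 : (XG i).Reachable (a, b) (colX i b (parF b), b) :=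
            ((hTTc _).preconnected a (colX i b (parF b))).map
              ⟨fun x => (x, b), fun h => (hXadj i _ _).mpr (Or.inl ⟨rfl, h⟩)⟩
          have hstep : (XG i).Adj (colX i b (parF b), b) (colX i b (parF b), parF b) :=
            (hXadj i _ _).mpr (Or.inr ⟨rfl, hadj, rfl⟩)
          exact (hr1.trans hstep.reachable).trans (IH (dF (parF b)) (by omega) (parF b) _ rfl)
    rw [connected_iff]
    refine ⟨fun x y => ?_, ⟨(c0, b0)⟩⟩
    obtain ⟨a, b⟩ := x
    obtain ⟨a', b'⟩ := y
    exact (key _ b a rfl).trans (key _ b' a' rfl).symm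
  -- connectivity of the Y-trees
  have hYc : ∀ j, (YG j).Connected := by
    intro j
    have key : ∀ n a b, dT a = n → (YG j).Reachable (a, b) (c0, b0) := by
      intro n
      induction n using Nat.strong_induction_on with
      | _ n IH =>
        intro a b hn
        by_cases ha : a = c0
        · rw [ha]
          exact ((hFFc _).preconnected b b0).map
            ⟨fun y => (c0, y), fun h => (hYadj j _ _).mpr (Or.inr ⟨rfl, h⟩)⟩
        · have hadj := parT_adj a ha
          have hdist := parT_dist a ha
          have hr1 : (YG j).Reachable (a, b) (a, rowY j a (parT a)) :=
            ((hFFc _).preconnected b (rowY j a (parT a))).map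
              ⟨fun y => (a, y), fun h => (hYadj j _ _).mpr (Or.inr ⟨rfl, h⟩)⟩
          have hstep : (YG j).Adj (a, rowY j a (parT a)) (parT a, rowY j a (parT a)) :=
            (hYadj j _ _).mpr (Or.inl ⟨rfl, hadj, rfl⟩)
          exact (hr1.trans hstep.reachable).trans (IH (dT (parT a)) (by omega) (parT a) _ rfl)
    rw [connected_iff]
    refine ⟨fun x y => ?_, ⟨(c0, b0)⟩⟩
    obtain ⟨a, b⟩ := x
    obtain ⟨a', b'⟩ := y
    exact (key _ a b rfl).trans (key _ a' b' rfl).symm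
  -- connectivity of Z
  have hZc : ZG.Connected := by
    have key : ∀ n a b, dT a + dF b = n → ZG.Reachable (a, b) (c0, b0) := by
      intro n
      induction n using Nat.strong_induction_on with
      | _ n IH =>
        intro a b hn
        by_cases ha : a = c0
        · rw [ha]
          by_cases hb : b = b0
          · rw [hb]
          · have hdist := parF_dist b hb
            have hstep : ZG.Adj (c0, b) (c0, parF b) := by
              refine (hZadj _ _).mpr (Or.inr ⟨rfl, parF_adj b hb, ?_⟩)
              split_ifs
              · rw [hRv]
                rintro ⟨i, hi⟩
                exact hRv_ne i hi
              · rw [hRu]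
                rintro ⟨i, hi⟩
                exact hRu_ne i hi
            have hlt : dT c0 + dF (parF b) < n := by
              rw [← ha]
              omega
            exact hstep.reachable.trans (IH (dT c0 + dF (parF b)) hlt c0 (parF b) rfl)
        · by_cases hM1 : b ∈ (if a ∈ Ru then DQ else DQ')
          · -- horizontal move blocked: do a vertical move
            have hbne : b ≠ b0 := by
              by_cases har : a ∈ Ru
              · rw [if_pos har, hDQ] at hM1
                obtain ⟨j, rfl⟩ := hM1
                exact hDQ_ne j
              · rw [if_neg har, hDQ'] at hM1
                obtain ⟨j, rfl⟩ := hM1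
                exact hDQ'_ne j
            have hdist := parF_dist b hbne
            have hstep : ZG.Adj (a, b) (a, parF b) := by
              refine (hZadj _ _).mpr (Or.inr ⟨rfl, parF_adj b hbne, ?_⟩)
              rw [chF_par b hbne]
              by_cases har : a ∈ Ru
              · rw [if_pos har] at hM1
                rw [if_pos hM1, hRv]
                rintro ⟨i, hi⟩
                rw [hRu] at har
                obtain ⟨i', hi'⟩ := har
                exact hRuRv i' i (hi'.trans hi.symm)
              · rw [if_neg har] at hM1
                have hbDQ : b ∉ DQ := by
                  rw [hDQ'] at hM1
                  obtain ⟨j, rfl⟩ := hM1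
                  rw [hDQ]
                  rintro ⟨j', hj'⟩
                  exact hDQDQ' j' j hj'
                rw [if_neg hbDQ]
                exact har
            exact hstep.reachable.trans (IH (dT a + dF (parF b)) (by omega) a (parF b) rfl)
          · have hdist := parT_dist a ha
            have hstep : ZG.Adj (a, b) (parT a, b) := by
              refine (hZadj _ _).mpr (Or.inl ⟨rfl, parT_adj a ha, ?_⟩)
              rw [chT_par a ha]
              exact hM1
            exact hstep.reachable.trans (IH (dT (parT a) + dF b) (by omega) (parT a) b rfl)
    rw [connected_iff]
    refine ⟨fun x y => ?_, ⟨(c0, b0)⟩⟩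
    obtain ⟨a, b⟩ := x
    obtain ⟨a', b'⟩ := y
    exact (key _ a b rfl).trans (key _ a' b' rfl).symm
  -- pairwise edge-disjointness
  have hXX : ∀ i i', i ≠ i' → Disjoint (XG i).edgeSet (XG i').edgeSet := by
    intro i i' hne
    rw [hXGdef]
    refine mixGraph_disjoint ?_ ?_
    · intro a a' b h h' _ _
      refine hTTd ⟨i.1 + 1, by have := i.isLt; omega⟩ ⟨i'.1 + 1, by have := i'.isLt; omega⟩
        ?_ a a' h h'
      intro hc
      apply hne
      have := congrArg Fin.val hc
      simp only at this
      exact Fin.ext (by omega)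
    · intro b b' a _ _ h3 h3'
      rw [h3] at h3'
      simp only [hcolXdef] at h3'
      by_cases hc : chF b b' ∈ DQ
      · rw [if_pos hc, if_pos hc] at h3'
        exact hne (hv_inj h3')
      · rw [if_neg hc, if_neg hc] at h3'
        exact hne (hu_inj h3')
  have hYY : ∀ j j', j ≠ j' → Disjoint (YG j).edgeSet (YG j').edgeSet := by
    intro j j' hne
    rw [hYGdef]
    refine mixGraph_disjoint ?_ ?_
    · intro a a' b _ _ h3 h3'
      rw [h3] at h3'
      simp only [hrowYdef] at h3'
      by_cases hc : chT a a' ∈ Ru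
      · rw [if_pos hc, if_pos hc] at h3'
        exact hne (hdq_inj h3')
      · rw [if_neg hc, if_neg hc] at h3'
        exact hne (hdq'_inj h3')
    · intro b b' a h h' _ _
      refine hFFd ⟨j.1 + 1, by have := j.isLt; omega⟩ ⟨j'.1 + 1, by have := j'.isLt; omega⟩
        ?_ b b' h h'
      intro hc
      apply hne
      have := congrArg Fin.val hc
      simp only at this
      exact Fin.ext (by omega)
  have hXY : ∀ i j, Disjoint (XG i).edgeSet (YG j).edgeSet := by
    intro i j
    rw [hXGdef, hYGdef]
    refine mixGraph_disjoint ?_ ?_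
    · intro a a' b h h' _ _
      refine hTTd ⟨i.1 + 1, by have := i.isLt; omega⟩ i0 ?_ a a' h h'
      intro hc
      have := congrArg Fin.val hc
      simp only [i0] at this
      omega
    · intro b b' a h h' _ _
      refine hFFd j0 ⟨j.1 + 1, by have := j.isLt; omega⟩ ?_ b b' h h'
      intro hc
      have := congrArg Fin.val hc
      simp only [j0] at this
      omega
  have hXZ : ∀ i, Disjoint (XG i).edgeSet ZG.edgeSet := by
    intro i
    rw [hXGdef, hZGdef]
    refine mixGraph_disjoint ?_ ?_
    · intro a a' b h h' _ _
      refine hTTd ⟨i.1 + 1, by have := i.isLt; omega⟩ i0 ?_ a a' h h'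
      intro hc
      have := congrArg Fin.val hc
      simp only [i0] at this
      omega
    · intro b b' a _ _ h3 h3'
      apply h3'
      rw [h3]
      simp only [hcolXdef]
      by_cases hc : chF b b' ∈ DQ
      · rw [if_pos hc, if_pos hc, hRv]
        exact ⟨i, rfl⟩
      · rw [if_neg hc, if_neg hc, hRu]
        exact ⟨i, rfl⟩
  have hYZ : ∀ j, Disjoint (YG j).edgeSet ZG.edgeSet := by
    intro j
    rw [hYGdef, hZGdef]
    refine mixGraph_disjoint ?_ ?_
    · intro a a' b _ _ h3 h3'
      apply h3'
      rw [h3]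
      simp only [hrowYdef]
      by_cases hc : chT a a' ∈ Ru
      · rw [if_pos hc, if_pos hc, hDQ]
        exact ⟨j, rfl⟩
      · rw [if_neg hc, if_neg hc, hDQ']
        exact ⟨j, rfl⟩
    · intro b b' a h h' _ _
      refine hFFd ⟨j.1 + 1, by have := j.isLt; omega⟩ j0 ?_ b b' h h'
      intro hc
      have := congrArg Fin.val hc
      simp only [j0] at this
      omega
  -- bounds needed for indexing
  have hXle : ∀ i, XG i ≤ G □ H := by
    intro i
    rw [hXGdef]
    exact mixGraph_le (Subgraph.spanningCoe_le _) (Subgraph.spanningCoe_le _)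
  have hYle : ∀ j, YG j ≤ G □ H := by
    intro j
    rw [hYGdef]
    exact mixGraph_le (Subgraph.spanningCoe_le _) (Subgraph.spanningCoe_le _)
  have hZle : ZG ≤ G □ H := by
    rw [hZGdef]
    exact mixGraph_le (Subgraph.spanningCoe_le _) (Subgraph.spanningCoe_le _)
  -- assemble the family indexed by `Fin (k + l - 1)`
  set WW : Fin (k + l - 1) → SimpleGraph (α × β) := fun m =>
    if h : m.1 < k - 1 then XG ⟨m.1, h⟩
    else if h' : m.1 < (k - 1) + (l - 1) then YG ⟨m.1 - (k - 1), by omega⟩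
    else ZG with hWWdef
  have hWWle : ∀ m, WW m ≤ G □ H := by
    intro m
    rw [hWWdef]
    dsimp only
    split_ifs with h1 h2
    · exact hXle _
    · exact hYle _
    · exact hZle
  have hWWc : ∀ m, (WW m).Connected := by
    intro m
    rw [hWWdef]
    dsimp only
    split_ifs with h1 h2
    · exact hXc _
    · exact hYc _
    · exact hZc
  have hWWdisj : ∀ m m', m ≠ m' → Disjoint (WW m).edgeSet (WW m').edgeSet := by
    intro m m' hne
    have hval : m.1 ≠ m'.1 := fun hc => hne (Fin.ext hc)
    rw [hWWdef]
    dsimp only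
    split_ifs with h1 h2 h3 h4 h5 h6 h7
    · exact hXX _ _ (fun hc => hval (by simpa using congrArg Fin.val hc))
    · exact hXY _ _
    · exact hXZ _
    · exact (hXY _ _).symm
    · refine hYY _ _ (fun hc => hval ?_)
      have := congrArg Fin.val hc
      simp only at this
      omega
    · exact hYZ _
    · exact (hXZ _).symm
    · exact (hYZ _).symm
    · exfalso
      have hm := m.isLt
      have hm' := m'.isLt
      omega
  -- extract spanning trees
  choose Sb hSb1 hSb2 hSb3 using fun m => exists_spanningTree_subgraph (hWWle m) (hWWc m)
  exact ⟨Sb, fun m => ⟨hSb1 m, hSb2 m⟩,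
    fun m m' hne => ((hWWdisj m m' hne).mono (hSb3 m) (hSb3 m'))⟩



end Master

/-- `steinerLambda` over the whole vertex set is the spanning tree packing number. -/
lemma steinerLambda_univ (G : SimpleGraph V) :
    steinerLambda G Set.univ = spanningTreePacking G := by
  unfold steinerLambda spanningTreePacking
  congr 1
  ext n
  constructor
  · rintro ⟨f, hf, hd⟩
    exact ⟨f, fun i => ⟨fun x => (hf i).1 trivial, (hf i).2⟩, hd⟩
  · rintro ⟨f, hf, hd⟩
    exact ⟨f, fun i => ⟨fun x _ => (hf i).1 x, (hf i).2⟩, hd⟩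

lemma genLambda_card [Fintype V] (G : SimpleGraph V) :
    genLambda G (Fintype.card V) = spanningTreePacking G := by
  unfold genLambda
  have hset : {m | ∃ S : Finset V, S.card = Fintype.card V ∧ steinerLambda G ↑S = m}
      = {spanningTreePacking G} := by
    ext m
    simp only [Set.mem_setOf_eq, Set.mem_singleton_iff]
    constructor
    · rintro ⟨S, hc, hs⟩
      have hS : S = Finset.univ := Finset.eq_univ_of_card S hc
      subst hS
      rw [← hs, Finset.coe_univ, steinerLambda_univ]
    · rintro rfl
      exact ⟨Finset.univ, by simp, by rw [Finset.coe_univ, steinerLambda_univ]⟩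
  rw [hset, csInf_singleton]

lemma main_ineq {α β : Type*} [Fintype α] [Fintype β] {G : SimpleGraph α} {H : SimpleGraph β}
    (hG : G.Connected) (hH : H.Connected) :
    spanningTreePacking G + spanningTreePacking H - 1 ≤ spanningTreePacking (G □ H) := by
  classical
  have hα : Nonempty α := hG.nonempty
  have hβ : Nonempty β := hH.nonempty
  set k := max 1 (spanningTreePacking G) with hkdef
  set l := max 1 (spanningTreePacking H) with hldef
  have hkED : HasEDSpanningTrees G k := hasED_max_one hG
  have hlED : HasEDSpanningTrees H l := hasED_max_one hH
  have hk1 : 1 ≤ k := le_max_left _ _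
  have hl1 : 1 ≤ l := le_max_left _ _
  have hpk : 2 * (k - 1) ≤ Fintype.card α - 1 := by
    by_cases hp : 2 ≤ Fintype.card α
    · have := two_mul_le_card hp hkED
      omega
    · have hsub : Subsingleton α := by
        haveI := hα
        have hpos := Fintype.card_pos (α := α)
        exact Fintype.card_le_one_iff_subsingleton.mp (by omega)
      have hz : spanningTreePacking G = 0 := by
        haveI := hsub
        exact packing_eq_zero_of_subsingleton
      rw [hkdef, hz]
      simp only [Nat.max_self, max_eq_left (Nat.zero_le 1)]
      omega
  have hql : 2 * (l - 1) ≤ Fintype.card β - 1 := by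
    by_cases hp : 2 ≤ Fintype.card β
    · have := two_mul_le_card hp hlED
      omega
    · have hsub : Subsingleton β := by
        haveI := hβ
        have hpos := Fintype.card_pos (α := β)
        exact Fintype.card_le_one_iff_subsingleton.mp (by omega)
      have hz : spanningTreePacking H = 0 := by
        haveI := hsub
        exact packing_eq_zero_of_subsingleton
      rw [hldef, hz]
      simp only [Nat.max_self, max_eq_left (Nat.zero_le 1)]
      omega
  have hk' : spanningTreePacking G ≤ k := le_max_right _ _
  have hl' : spanningTreePacking H ≤ l := le_max_right _ _
  by_cases hprod : 2 ≤ Fintype.card (α × β)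
  · obtain ⟨T, hT, hTd⟩ := hkED
    obtain ⟨F, hF, hFd⟩ := hlED
    have hm := master k l hk1 hl1 T hT hTd F hF hFd hpk hql
    have hle : k + l - 1 ≤ spanningTreePacking (G □ H) :=
      le_csSup (bddAbove_hasED hprod) hm
    omega
  · haveI : Nonempty (α × β) := ⟨(Classical.arbitrary α, Classical.arbitrary β)⟩
    have hpos := Fintype.card_pos (α := α × β)
    have h1 : Fintype.card (α × β) = 1 := by omega
    rw [Fintype.card_prod] at h1
    have hα1 := Nat.eq_one_of_mul_eq_one_right h1
    have hβ1 := Nat.eq_one_of_mul_eq_one_left h1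
    have hzG : spanningTreePacking G = 0 := by
      haveI : Subsingleton α := Fintype.card_le_one_iff_subsingleton.mp (by omega)
      exact packing_eq_zero_of_subsingleton
    have hzH : spanningTreePacking H = 0 := by
      haveI : Subsingleton β := Fintype.card_le_one_iff_subsingleton.mp (by omega)
      exact packing_eq_zero_of_subsingleton
    rw [hzG, hzH]
    exact Nat.zero_le _

end StmtAux

/-- the spanning-tree packing number of G □ H is at least the sum of those
    of G and H minus 1; equivalently λ_n(G □ H) ≥ λ_{|V(G)|}(G) + λ_{|V(H)|}(H) − 1. -/
theorem stmt4 {α β : Type*} [Fintype α] [Fintype β]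
    (G : SimpleGraph α) (H : SimpleGraph β)
    (hG : G.Connected) (hH : H.Connected) :
    spanningTreePacking G + spanningTreePacking H - 1 ≤ spanningTreePacking (G □ H) ∧
    genLambda G (Fintype.card α) + genLambda H (Fintype.card β) - 1 ≤
      genLambda (G □ H) (Fintype.card (α × β)) := by
  constructor
  · exact StmtAux.main_ineq hG hH
  · rw [StmtAux.genLambda_card G, StmtAux.genLambda_card H, StmtAux.genLambda_card (G □ H)]
    exact StmtAux.main_ineq hG hH
end

section
/- Let G and H be connected graphs with λ_k(G) = a and λ_k(H) = b where b ≥ a ≥ ⌊k/2⌋, and let S be a set of k vertices of G □ H whose projections S_G to V(G) and S_H to V(H) each have exactly k distinct elements. Then there exist at least a + b pairwise edge-disjoint S-Steiner trees in G □ H. -/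
open SimpleGraph

namespace Stmt8Aux

section Trees
variable {V : Type*}

/-- Deleting an edge whose endpoints remain reachable preserves reachability. -/
lemma reach_del {Γ : SimpleGraph V} {x y : V}
    (hr : (Γ \ fromEdgeSet {s(x,y)}).Reachable x y) :
    ∀ {p q : V}, Γ.Walk p q → (Γ \ fromEdgeSet {s(x,y)}).Reachable p q := by
  intro p q w
  induction w with
  | nil => exact Reachable.refl _
  | @cons pp qq rr hadj w' ih =>
    refine Reachable.trans ?_ ih
    by_cases he : s(pp, qq) = s(x, y)
    · rw [Sym2.eq_iff] at he
      rcases he with ⟨rfl, rfl⟩ | ⟨rfl, rfl⟩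
      · exact hr
      · exact hr.symm
    · refine Adj.reachable ?_
      rw [sdiff_adj]
      refine ⟨hadj, ?_⟩
      rw [fromEdgeSet_adj]
      rintro ⟨hmem, -⟩
      exact he hmem

/-- Every finite connected graph contains a spanning tree. -/
lemma exists_tree_le [Fintype V] (Γ : SimpleGraph V) (h : Γ.Connected) :
    ∃ T : SimpleGraph V, T ≤ Γ ∧ T.IsTree := by
  classical
  generalize hn : Γ.edgeSet.ncard = n
  induction n using Nat.strong_induction_on generalizing Γ with
  | _ n ih =>
  by_cases hac : Γ.IsAcyclic
  · exact ⟨Γ, le_rfl, h, hac⟩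
  · rw [SimpleGraph.IsAcyclic] at hac
    push_neg at hac
    obtain ⟨v, c, hc⟩ := hac
    have hne : c.edges ≠ [] := by
      intro h0
      have := hc.three_le_length
      rw [← SimpleGraph.Walk.length_edges, h0] at this
      simp at this
    obtain ⟨e, he⟩ := List.exists_mem_of_ne_nil _ hne
    induction e with
    | _ x y =>
    have hadj : Γ.Adj x y := c.adj_of_mem_edges he
    set Γ' := Γ \ fromEdgeSet {s(x,y)} with hΓ'
    have hle : Γ' ≤ Γ := sdiff_le
    have hreach : Γ'.Reachable x y := by
      have := (adj_and_reachable_delete_edges_iff_exists_cycle (G := Γ) (v := x) (w := y)).mpr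
        ⟨v, c, hc, he⟩
      exact this.2
    have hconn' : Γ'.Connected := by
      haveI : Nonempty V := h.nonempty
      exact ⟨fun p q => (h.preconnected p q).elim (fun w => reach_del hreach w)⟩
    have hedge : Γ'.edgeSet = Γ.edgeSet \ {s(x,y)} := by
      rw [hΓ', edgeSet_sdiff, edgeSet_fromEdgeSet, edgeSet_sdiff_sdiff_isDiag]
    have hcard : Γ'.edgeSet.ncard < n := by
      rw [← hn]
      apply Set.ncard_lt_ncard _ (Γ.edgeSet.toFinite)
      rw [hedge]
      constructor
      · exact Set.diff_subset
      · intro hsub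
        have : s(x,y) ∈ Γ.edgeSet \ {s(x,y)} := hsub (by rwa [mem_edgeSet])
        simp at this
    obtain ⟨T, hT1, hT2⟩ := ih _ hcard Γ' hconn' rfl
    exact ⟨T, hT1.trans hle, hT2⟩


/-- Pull back a simple graph on the vertex set of a subgraph to a subgraph. -/
def pullback {Γ : SimpleGraph V} (U : Γ.Subgraph) (T' : SimpleGraph ↥U.verts)
    (hle : T' ≤ U.coe) : Γ.Subgraph where
  verts := U.verts
  Adj x y := ∃ (hx : x ∈ U.verts) (hy : y ∈ U.verts), T'.Adj ⟨x,hx⟩ ⟨y,hy⟩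
  adj_sub := by
    rintro v w ⟨hx, hy, h⟩
    have := hle h
    rw [Subgraph.coe_adj] at this
    exact U.adj_sub this
  edge_vert := by rintro v w ⟨hx, hy, h⟩; exact hx
  symm := ⟨by rintro v w ⟨hx, hy, h⟩; exact ⟨hy, hx, h.symm⟩⟩

lemma pullback_coe {Γ : SimpleGraph V} (U : Γ.Subgraph) (T' : SimpleGraph ↥U.verts)
    (hle : T' ≤ U.coe) : (pullback U T' hle).coe = T' := by
  ext x y
  simp only [Subgraph.coe_adj, pullback]
  constructor
  · rintro ⟨hx, hy, hadj⟩
    exact hadj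
  · intro hadj
    exact ⟨x.2, y.2, by exact hadj⟩

/-- Every connected subgraph containing `St` contains a Steiner tree for `St`
within its own edges. -/
lemma exists_steiner_within [Fintype V] {Γ : SimpleGraph V} (U : Γ.Subgraph)
    (hU : U.Connected) (St : Set V) (hSt : St ⊆ U.verts) :
    ∃ T : Γ.Subgraph, (St ⊆ T.verts ∧ T.coe.IsTree) ∧ T.edgeSet ⊆ U.edgeSet := by
  classical
  haveI : Fintype ↥U.verts := (U.verts.toFinite).fintype
  obtain ⟨T', hle, htree⟩ := exists_tree_le U.coe hU.coe
  refine ⟨pullback U T' hle, ⟨hSt, ?_⟩, ?_⟩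
  · rw [pullback_coe]; exact htree
  · intro e he
    induction e with
    | _ x y =>
      rw [Subgraph.mem_edgeSet] at he ⊢
      obtain ⟨hx, hy, hadj⟩ := he
      have := hle hadj
      rwa [Subgraph.coe_adj] at this


lemma hasED_zero {Γ : SimpleGraph V} (S : Set V) : HasEDSteinerTrees Γ S 0 :=
  ⟨Fin.elim0, fun i => i.elim0, fun i => i.elim0⟩

lemma hasED_mono {Γ : SimpleGraph V} {S : Set V} {m n : ℕ}
    (h : HasEDSteinerTrees Γ S n) (hmn : m ≤ n) : HasEDSteinerTrees Γ S m := by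
  obtain ⟨f, hf1, hf2⟩ := h
  exact ⟨fun i => f (Fin.castLE hmn i), fun i => hf1 _,
    fun i j hij => hf2 _ _ (fun hc => hij (Fin.castLE_injective hmn hc))⟩

lemma edge_of_two {Γ : SimpleGraph V} {U : Γ.Subgraph} (hconn : U.coe.Connected)
    {x y : V} (hx : x ∈ U.verts) (hy : y ∈ U.verts) (hne : x ≠ y) :
    U.edgeSet.Nonempty := by
  obtain ⟨w⟩ := hconn.preconnected ⟨x, hx⟩ ⟨y, hy⟩
  have hnn : ¬w.Nil := by
    intro hnil
    exact hne (congrArg Subtype.val (SimpleGraph.Walk.Nil.eq hnil))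
  rw [SimpleGraph.Walk.not_nil_iff] at hnn
  obtain ⟨u, hadj, q, rfl⟩ := hnn
  refine ⟨s(x, ↑u), ?_⟩
  rw [Subgraph.mem_edgeSet]
  rw [Subgraph.coe_adj] at hadj
  exact hadj

lemma hasED_le_ncard [Fintype V] {Γ : SimpleGraph V} {S : Set V} {n : ℕ}
    (h : HasEDSteinerTrees Γ S n) {x y : V} (hx : x ∈ S) (hy : y ∈ S) (hne : x ≠ y) :
    n ≤ Γ.edgeSet.ncard := by
  classical
  obtain ⟨f, hf1, hf2⟩ := h
  have hE : ∀ i, ∃ e, e ∈ (f i).edgeSet :=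
    fun i => edge_of_two (hf1 i).2.isConnected ((hf1 i).1 hx) ((hf1 i).1 hy) hne
  choose e he using hE
  have hmaps : ∀ i, e i ∈ Γ.edgeSet.toFinite.toFinset := by
    intro i
    rw [Set.Finite.mem_toFinset]
    exact (f i).edgeSet_subset (he i)
  have hinj : Function.Injective e := by
    intro i j hij
    by_contra hc
    exact Set.disjoint_left.mp (hf2 i j hc) (he i) (hij ▸ he j)
  calc n = (Finset.univ : Finset (Fin n)).card := by simp
  _ ≤ (Γ.edgeSet.toFinite.toFinset).card :=
      Finset.card_le_card_of_injOn e (fun i _ => hmaps i) (hinj.injOn)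
  _ = Γ.edgeSet.ncard := (Set.ncard_eq_toFinset_card _ _).symm

/-- Extraction: if `genLambda Γ k = aa` then any `k`-set has `aa` edge-disjoint
Steiner trees. -/
lemma extract [Fintype V] {Γ : SimpleGraph V} {k aa : ℕ} (hgl : genLambda Γ k = aa)
    (SG : Finset V) (hcard : SG.card = k) (hk : 2 ≤ k) : HasEDSteinerTrees Γ ↑SG aa := by
  classical
  have h1 : aa ≤ steinerLambda Γ ↑SG := by
    rw [← hgl]
    exact Nat.sInf_le ⟨SG, hcard, rfl⟩
  obtain ⟨x, hx, y, hy, hne⟩ := Finset.one_lt_card.mp (by omega : 1 < SG.card)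
  have hBdd : BddAbove {n | HasEDSteinerTrees Γ ↑SG n} := by
    refine ⟨Γ.edgeSet.ncard, fun n hn => ?_⟩
    exact hasED_le_ncard hn (by exact_mod_cast hx) (by exact_mod_cast hy) hne
  have hmem : steinerLambda Γ ↑SG ∈ {n | HasEDSteinerTrees Γ ↑SG n} :=
    Nat.sSup_mem ⟨0, hasED_zero _⟩ hBdd
  exact hasED_mono hmem h1

lemma edgeless_acyclic {W : Type*} {Γ : SimpleGraph W} (h : ∀ x y, ¬Γ.Adj x y) :
    Γ.IsAcyclic := by
  intro v c hc
  cases c with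
  | nil => simpa using hc.three_le_length
  | cons hadj q => exact h _ _ hadj

lemma singleton_isTree {Γ : SimpleGraph V} (v : V) :
    (Γ.singletonSubgraph v).coe.IsTree := by
  constructor
  · exact Subgraph.singletonSubgraph_connected.coe
  · apply edgeless_acyclic
    intro x y h
    rw [Subgraph.coe_adj] at h
    simp [SimpleGraph.singletonSubgraph_adj] at h

lemma steinerLambda_small {Γ : SimpleGraph V} (hconn : Γ.Connected) (S : Set V)
    (hS : S.Subsingleton) : steinerLambda Γ S = 0 := by
  have hv : ∃ v, S ⊆ {v} := by
    rcases Set.eq_empty_or_nonempty S with h | ⟨v, hv⟩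
    · exact ⟨hconn.nonempty.some, by simp [h]⟩
    · exact ⟨v, fun x hx => hS hx hv⟩
  obtain ⟨v, hv⟩ := hv
  have hall : ∀ n, HasEDSteinerTrees Γ S n := by
    intro n
    refine ⟨fun _ => Γ.singletonSubgraph v, fun i => ⟨?_, singleton_isTree v⟩, ?_⟩
    · simpa [SimpleGraph.singletonSubgraph_verts] using hv
    · intro i j _
      simp [SimpleGraph.edgeSet_singletonSubgraph]
  have hnb : ¬BddAbove {n | HasEDSteinerTrees Γ S n} := by
    rintro ⟨ub, hub⟩
    have := hub (hall (ub + 1))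
    omega
  rw [steinerLambda, csSup_of_not_bddAbove hnb, csSup_empty]
  rfl

lemma genLambda_small [Fintype V] {Γ : SimpleGraph V} (hconn : Γ.Connected) {k : ℕ}
    (hk : k ≤ 1) : genLambda Γ k = 0 := by
  classical
  have hset : {m | ∃ S : Finset V, S.card = k ∧ steinerLambda Γ ↑S = m} = {0} := by
    ext m
    simp only [Set.mem_setOf_eq, Set.mem_singleton_iff]
    constructor
    · rintro ⟨S, hS, rfl⟩
      apply steinerLambda_small hconn
      intro x hx y hy
      have : S.card ≤ 1 := hS ▸ hk
      have := Finset.card_le_one.mp this x (by exact_mod_cast hx) y (by exact_mod_cast hy)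
      exact this
    · rintro rfl
      interval_cases k
      · exact ⟨∅, by simp, steinerLambda_small hconn _ (by simp)⟩
      · refine ⟨{hconn.nonempty.some}, by simp, steinerLambda_small hconn _ ?_⟩
        simp
  rw [genLambda, hset]
  simp


end Trees

section Product
variable {α β : Type*} {G : SimpleGraph α} {H : SimpleGraph β}

/-- The copy of a subgraph `T ≤ G` inside the layer `G × {w}` of the box product. -/
def layerSub (T : G.Subgraph) (w : β) : (G □ H).Subgraph where
  verts := {p | p.1 ∈ T.verts ∧ p.2 = w}
  Adj p q := T.Adj p.1 q.1 ∧ p.2 = w ∧ q.2 = w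
  adj_sub := by
    rintro p q ⟨h, h1, h2⟩
    rw [SimpleGraph.boxProd_adj]
    exact Or.inl ⟨T.adj_sub h, h1.trans h2.symm⟩
  edge_vert := by rintro p q ⟨h, h1, h2⟩; exact ⟨T.edge_vert h, h1⟩
  symm := ⟨by rintro p q ⟨h, h1, h2⟩; exact ⟨h.symm, h2, h1⟩⟩

/-- The copy of a subgraph `W ≤ H` inside the fibre `{x} × H` of the box product. -/
def fiberSub (W : H.Subgraph) (x : α) : (G □ H).Subgraph where
  verts := {p | p.2 ∈ W.verts ∧ p.1 = x}
  Adj p q := W.Adj p.2 q.2 ∧ p.1 = x ∧ q.1 = x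
  adj_sub := by
    rintro p q ⟨h, h1, h2⟩
    rw [SimpleGraph.boxProd_adj]
    exact Or.inr ⟨W.adj_sub h, h1.trans h2.symm⟩
  edge_vert := by rintro p q ⟨h, h1, h2⟩; exact ⟨W.edge_vert h, h1⟩
  symm := ⟨by rintro p q ⟨h, h1, h2⟩; exact ⟨h.symm, h2, h1⟩⟩

lemma layerSub_verts (T : G.Subgraph) (w : β) {x : α} (hx : x ∈ T.verts) :
    (x, w) ∈ (layerSub (H := H) T w).verts := ⟨hx, rfl⟩

lemma fiberSub_verts (W : H.Subgraph) (x : α) {y : β} (hy : y ∈ W.verts) :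
    (x, y) ∈ (fiberSub (G := G) W x).verts := ⟨hy, rfl⟩

lemma layerSub_connected {T : G.Subgraph} (hT : T.Connected) (w : β) :
    (layerSub (H := H) T w).Connected := by
  rw [Subgraph.connected_iff']
  have hne : T.verts.Nonempty := hT.nonempty
  rw [connected_iff]
  refine ⟨?_, ?_⟩
  · intro p q
    obtain ⟨p, hp⟩ := p
    obtain ⟨q, hq⟩ := q
    let φ : T.coe →g (layerSub (H := H) T w).coe :=
      { toFun := fun x => ⟨(x.1, w), ⟨x.2, rfl⟩⟩
        map_rel' := by
          intro x y h
          rw [Subgraph.coe_adj] at h ⊢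
          exact ⟨h, rfl, rfl⟩ }
    have h1 : φ ⟨p.1, hp.1⟩ = ⟨p, hp⟩ := Subtype.ext (Prod.ext rfl hp.2.symm)
    have h2 : φ ⟨q.1, hq.1⟩ = ⟨q, hq⟩ := Subtype.ext (Prod.ext rfl hq.2.symm)
    rw [← h1, ← h2]
    exact (hT.coe.preconnected _ _).map φ
  · exact ⟨⟨(hne.some, w), hne.some_mem, rfl⟩⟩

lemma fiberSub_connected {W : H.Subgraph} (hW : W.Connected) (x : α) :
    (fiberSub (G := G) W x).Connected := by
  rw [Subgraph.connected_iff']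
  have hne : W.verts.Nonempty := hW.nonempty
  rw [connected_iff]
  refine ⟨?_, ?_⟩
  · intro p q
    obtain ⟨p, hp⟩ := p
    obtain ⟨q, hq⟩ := q
    let φ : W.coe →g (fiberSub (G := G) W x).coe :=
      { toFun := fun y => ⟨(x, y.1), ⟨y.2, rfl⟩⟩
        map_rel' := by
          intro z y h
          rw [Subgraph.coe_adj] at h ⊢
          exact ⟨h, rfl, rfl⟩ }
    have h1 : φ ⟨p.2, hp.1⟩ = ⟨p, hp⟩ := Subtype.ext (Prod.ext hp.2.symm rfl)
    have h2 : φ ⟨q.2, hq.1⟩ = ⟨q, hq⟩ := Subtype.ext (Prod.ext hq.2.symm rfl)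
    rw [← h1, ← h2]
    exact (hW.coe.preconnected _ _).map φ
  · exact ⟨⟨(x, hne.some), hne.some_mem, rfl⟩⟩

/-- Edge-disjointness of two layers. -/
lemma layer_layer_disj {T T' : G.Subgraph} {w w' : β}
    (h : w ≠ w' ∨ Disjoint T.edgeSet T'.edgeSet) :
    Disjoint (layerSub (H := H) T w).edgeSet (layerSub (H := H) T' w').edgeSet := by
  rw [Set.disjoint_left]
  intro e he he'
  induction e with
  | _ p q =>
    rw [Subgraph.mem_edgeSet] at he he'
    obtain ⟨h1, h2, h3⟩ := he
    obtain ⟨h1', h2', h3'⟩ := he'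
    rcases h with hne | hdisj
    · exact hne (h2.symm.trans h2')
    · exact Set.disjoint_left.mp hdisj (Subgraph.mem_edgeSet.mpr h1) (Subgraph.mem_edgeSet.mpr h1')

lemma fiber_fiber_disj {W W' : H.Subgraph} {x x' : α}
    (h : x ≠ x' ∨ Disjoint W.edgeSet W'.edgeSet) :
    Disjoint (fiberSub (G := G) W x).edgeSet (fiberSub (G := G) W' x').edgeSet := by
  rw [Set.disjoint_left]
  intro e he he'
  induction e with
  | _ p q =>
    rw [Subgraph.mem_edgeSet] at he he'
    obtain ⟨h1, h2, h3⟩ := he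
    obtain ⟨h1', h2', h3'⟩ := he'
    rcases h with hne | hdisj
    · exact hne (h2.symm.trans h2')
    · exact Set.disjoint_left.mp hdisj (Subgraph.mem_edgeSet.mpr h1) (Subgraph.mem_edgeSet.mpr h1')

lemma layer_fiber_disj {T : G.Subgraph} {W : H.Subgraph} {w : β} {x : α} :
    Disjoint (layerSub (H := H) T w).edgeSet (fiberSub (G := G) W x).edgeSet := by
  rw [Set.disjoint_left]
  intro e he he'
  induction e with
  | _ p q =>
    rw [Subgraph.mem_edgeSet] at he he'
    obtain ⟨h1, h2, h3⟩ := he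
    obtain ⟨h1', h2', h3'⟩ := he'
    exact (G.ne_of_adj (T.adj_sub h1)) (h2'.trans h3'.symm)

lemma edgeSet_sup (X Y : (G □ H).Subgraph) :
    (X ⊔ Y).edgeSet = X.edgeSet ∪ Y.edgeSet := by
  ext e
  induction e with
  | _ p q =>
    simp [Subgraph.mem_edgeSet, Subgraph.sup_adj]

lemma edgeSet_iSup {ι : Sort*} (D : ι → (G □ H).Subgraph) :
    (⨆ i, D i).edgeSet = ⋃ i, (D i).edgeSet := by
  ext e
  induction e with
  | _ p q =>
    simp [Subgraph.mem_edgeSet, Subgraph.iSup_adj]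

/-- Hub-and-spokes connectivity. -/
lemma conn_hub_iSup {ι : Type*} [Fintype ι] {Γ : SimpleGraph α}
    (C : Γ.Subgraph) (hC : C.Connected) (D : ι → Γ.Subgraph)
    (hD : ∀ i, (D i).Connected) (hmeet : ∀ i, ((C ⊓ D i).verts).Nonempty) :
    (C ⊔ ⨆ i, D i).Connected := by
  classical
  have key : ∀ s : Finset ι, (C ⊔ s.sup D).Connected := by
    intro s
    induction s using Finset.induction_on with
    | empty => simpa using hC
    | @insert a s ha ih =>
      rw [Finset.sup_insert]
      have : C ⊔ (D a ⊔ s.sup D) = (C ⊔ s.sup D) ⊔ D a := by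
        rw [sup_comm (D a) (s.sup D), ← sup_assoc]
      rw [this]
      refine Subgraph.connected_sup ih.preconnected (hD a).preconnected ?_
      obtain ⟨z, hz1, hz2⟩ := hmeet a
      exact ⟨z, Or.inl hz1, hz2⟩
  have : (⨆ i, D i) = Finset.univ.sup D := by
    rw [Finset.sup_eq_iSup]
    simp
  rw [this]
  exact key _


end Product

section Counting
variable {β : Type*} [Fintype β] [DecidableEq β] {H : SimpleGraph β}

/-- The edges of a subgraph incident to a finite vertex set. -/
noncomputable def IncE (W : H.Subgraph) (SvF : Finset β) : Finset (Sym2 β) :=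
  (W.edgeSet.toFinite.toFinset).filter (fun e => ∃ a ∈ SvF, a ∈ e)

lemma IncE_subset_edgeSet {W : H.Subgraph} {SvF : Finset β} :
    ↑(IncE W SvF) ⊆ W.edgeSet := by
  intro e he
  rw [IncE, Finset.coe_filter] at he
  exact (Set.Finite.mem_toFinset _).mp he.1

/-- Key lower bound: a connected subgraph containing `SvF` and a root `r` has at least
`|SvF \ {r}|` edges incident to `SvF`. -/
lemma incident_lb {W : H.Subgraph} (hW : W.Connected) (SvF : Finset β)
    (hSv : ↑SvF ⊆ W.verts) {r : β} (hr : r ∈ W.verts) :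
    (SvF \ {r}).card ≤ (IncE W SvF).card := by
  classical
  have hex : ∀ a ∈ SvF \ {r}, ∃ z : ↥W.verts, W.Adj a z.1 ∧
      ∃ haW : a ∈ W.verts,
        W.coe.dist ⟨r, hr⟩ z + 1 = W.coe.dist ⟨r, hr⟩ ⟨a, haW⟩ := by
    intro a ha
    rw [Finset.mem_sdiff, Finset.mem_singleton] at ha
    obtain ⟨haS, har⟩ := ha
    have haW : a ∈ W.verts := hSv haS
    set rr : ↥W.verts := ⟨r, hr⟩
    set pa : ↥W.verts := ⟨a, haW⟩
    have hner : rr ≠ pa := by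
      intro hc
      exact har (congrArg Subtype.val hc).symm
    have hreach : W.coe.Reachable rr pa := hW.coe.preconnected rr pa
    obtain ⟨p, hp⟩ := hreach.exists_walk_length_eq_dist
    have hdpos : 0 < W.coe.dist rr pa := hW.coe.pos_dist_of_ne hner
    have hnn : ¬(p.reverse).Nil := by
      intro hnil
      rw [SimpleGraph.Walk.nil_iff_length_eq, SimpleGraph.Walk.length_reverse, hp] at hnil
      omega
    rw [SimpleGraph.Walk.not_nil_iff] at hnn
    obtain ⟨z, hadj, q', heq⟩ := hnn
    have hlen : q'.length + 1 = W.coe.dist rr pa := by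
      have := congrArg SimpleGraph.Walk.length heq
      rw [SimpleGraph.Walk.length_reverse, hp] at this
      rw [this]
      simp
    have hd1 : W.coe.dist rr z ≤ q'.length := by
      have := SimpleGraph.dist_le q'.reverse
      rwa [SimpleGraph.Walk.length_reverse] at this
    have hd2 : W.coe.dist rr pa ≤ W.coe.dist rr z + 1 := by
      have htri := hW.coe.dist_triangle (u := rr) (v := z) (w := pa)
      have : W.coe.dist z pa ≤ 1 := by
        have := SimpleGraph.dist_le (SimpleGraph.Walk.cons hadj.symm SimpleGraph.Walk.nil)
        simpa using this
      omega
    refine ⟨z, ?_, haW, ?_⟩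
    · have := hadj
      rw [Subgraph.coe_adj] at this
      exact this
    · show W.coe.dist rr z + 1 = W.coe.dist rr pa
      omega
  haveI : Nonempty ↥W.verts := ⟨⟨r, hr⟩⟩
  choose! z hz1 hz2 using hex
  have hinj : Set.InjOn (fun a => s(a, (z a).1)) ↑(SvF \ {r}) := by
    intro a ha b hb heq
    simp only [Finset.coe_sdiff, Finset.coe_singleton] at ha hb
    have ha' : a ∈ SvF \ {r} := by
      rwa [← Finset.mem_coe, Finset.coe_sdiff, Finset.coe_singleton]
    have hb' : b ∈ SvF \ {r} := by
      rwa [← Finset.mem_coe, Finset.coe_sdiff, Finset.coe_singleton]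
    simp only [Sym2.eq_iff] at heq
    rcases heq with ⟨rfl, -⟩ | ⟨h1, h2⟩
    · rfl
    · exfalso
      obtain ⟨haW, hda⟩ := hz2 a ha'
      obtain ⟨hbW, hdb⟩ := hz2 b hb'
      have e1 : z b = ⟨a, haW⟩ := Subtype.ext h1.symm
      have e2 : z a = ⟨b, hbW⟩ := Subtype.ext h2
      rw [e1] at hdb
      rw [e2] at hda
      omega
  have hmaps : ∀ a ∈ SvF \ {r}, s(a, (z a).1) ∈ IncE W SvF := by
    intro a ha
    have hadj := hz1 a ha
    rw [IncE, Finset.mem_filter]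
    constructor
    · rw [Set.Finite.mem_toFinset]
      exact Subgraph.mem_edgeSet.mpr hadj
    · exact ⟨a, (Finset.mem_sdiff.mp ha).1, by simp⟩
  exact Finset.card_le_card_of_injOn _ hmaps hinj


open Finset in
/-- The central counting bound: at most `k/2 + |X|` edge-disjoint connected subgraphs
all containing a `k`-set `SvF` can have all their extra vertices inside `X`. -/
lemma counting {k b : ℕ} (hk : 2 ≤ k) (TH : Fin b → H.Subgraph)
    (hconn : ∀ n, (TH n).Connected) (SvF : Finset β) (hSv : ∀ n, ↑SvF ⊆ (TH n).verts)
    (hdisj : ∀ n n', n ≠ n' → Disjoint (TH n).edgeSet (TH n').edgeSet)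
    (hcard : SvF.card = k) (s : Finset (Fin b)) :
    s.card ≤ k / 2 + (s.biUnion (fun n => (TH n).verts.toFinite.toFinset \ SvF)).card := by
  classical
  set X := s.biUnion (fun n => (TH n).verts.toFinite.toFinset \ SvF) with hX
  set capIntra := SvF.sym2.filter (fun e => ¬ e.IsDiag) with hcapIntra
  set capCross := (SvF ×ˢ X).image (fun pr => s(pr.1, pr.2)) with hcapCross
  set KI := capIntra.card with hKI
  set m := k / 2 with hm
  -- vertices of each tree lie in SvF ∪ X
  have hverts : ∀ n ∈ s, (TH n).verts.toFinite.toFinset ⊆ SvF ∪ X := by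
    intro n hn p hp
    by_cases hpS : p ∈ SvF
    · exact Finset.mem_union_left _ hpS
    · exact Finset.mem_union_right _
        (Finset.mem_biUnion.mpr ⟨n, hn, Finset.mem_sdiff.mpr ⟨hp, hpS⟩⟩)
  -- 2 * KI = k * (k - 1)
  have hKI2 : 2 * KI = k * (k - 1) := by
    have hdiag : (SvF.sym2.filter (fun e => e.IsDiag)).card = k := by
      have himage : SvF.sym2.filter (fun e => e.IsDiag) = SvF.image (fun a => s(a, a)) := by
        ext e
        induction e with
        | _ p q =>
          simp only [Finset.mem_filter, Finset.mk_mem_sym2_iff, Sym2.mk_isDiag_iff,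
            Finset.mem_image]
          constructor
          · rintro ⟨⟨hp, hq⟩, rfl⟩
            exact ⟨p, hp, rfl⟩
          · rintro ⟨a, ha, hae⟩
            rcases Sym2.eq_iff.mp hae with ⟨rfl, rfl⟩ | ⟨rfl, rfl⟩ <;>
              exact ⟨⟨ha, ha⟩, rfl⟩
      rw [himage, Finset.card_image_of_injective _ (fun a b hab => by
        rcases Sym2.eq_iff.mp hab with ⟨rfl, -⟩ | ⟨rfl, -⟩ <;> rfl), hcard]
    have hsplit : (SvF.sym2.filter (fun e => e.IsDiag)).card + KI = SvF.sym2.card := by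
      rw [hKI, hcapIntra]
      exact Finset.card_filter_add_card_filter_not (p := fun e : Sym2 β => e.IsDiag)
    have hsym : SvF.sym2.card = (k + 1) * k / 2 := by
      rw [Finset.card_sym2, hcard, Nat.choose_two_right, Nat.add_sub_cancel]
    have heven : 2 * SvF.sym2.card = (k + 1) * k := by
      have hdvd : 2 ∣ (k + 1) * k := by
        rw [mul_comm]
        exact (Nat.even_mul_succ_self k).two_dvd
      omega
    obtain ⟨j, rfl⟩ : ∃ j, k = j + 2 := ⟨k - 2, by omega⟩
    have hA : (j + 2 + 1) * (j + 2) = (j + 2) * (j + 2 - 1) + 2 * (j + 2) := by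
      have h21 : j + 2 - 1 = j + 1 := rfl
      rw [h21]
      ring
    rw [hdiag] at hsplit
    omega
  -- the incident-edge finsets
  have hIE : True := trivial
  have hIEdisj : ∀ n ∈ s, ∀ n' ∈ s, n ≠ n' → Disjoint (IncE (TH n) SvF) (IncE (TH n') SvF) := by
    intro n _ n' _ hne
    rw [Finset.disjoint_left]
    intro e he he'
    exact Set.disjoint_left.mp (hdisj n n' hne) (IncE_subset_edgeSet he)
      (IncE_subset_edgeSet he')
  -- tightness predicate
  set tight := fun n => (TH n).verts.toFinite.toFinset ⊆ SvF with htight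
  set ttt := (s.filter (fun n => tight n)).card with httt
  have hSvNe : SvF.Nonempty := Finset.card_pos.mp (by omega)
  -- per-tree lower bounds
  have hlb : ∀ n, tight n → k - 1 ≤ (IncE (TH n) SvF).card := by
    intro n htn
    obtain ⟨r, hrS⟩ := hSvNe
    have hr : r ∈ (TH n).verts := hSv n (by exact_mod_cast hrS)
    have h1 := incident_lb (hconn n) SvF (hSv n) hr
    have h2 : (SvF \ {r}).card = k - 1 := by
      rw [Finset.card_sdiff_of_subset (Finset.singleton_subset_iff.mpr hrS), Finset.card_singleton, hcard]
    omega
  have hlb' : ∀ n, ¬tight n → k ≤ (IncE (TH n) SvF).card := by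
    intro n htn
    rw [htight] at htn
    simp only [Finset.not_subset] at htn
    obtain ⟨r, hrv, hrS⟩ := htn
    have hr : r ∈ (TH n).verts := by
      rwa [Set.Finite.mem_toFinset] at hrv
    have h1 := incident_lb (hconn n) SvF (hSv n) hr
    have h2 : SvF \ {r} = SvF := by
      rw [Finset.sdiff_eq_self_iff_disjoint, Finset.disjoint_singleton_right]
      exact hrS
    rw [h2, hcard] at h1
    exact h1
  -- main double count
  have key1 : k * s.card ≤ (∑ n ∈ s, (IncE (TH n) SvF).card) + ttt := by
    have hterm : ∀ n ∈ s, k ≤ (IncE (TH n) SvF).card + (if tight n then 1 else 0) := by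
      intro n _
      by_cases htn : tight n
      · have := hlb n htn
        simp only [htn, if_true]
        omega
      · have := hlb' n htn
        simp only [htn, if_false]
        omega
    calc k * s.card = ∑ _n ∈ s, k := by rw [Finset.sum_const, smul_eq_mul, mul_comm]
    _ ≤ ∑ n ∈ s, ((IncE (TH n) SvF).card + (if tight n then 1 else 0)) := Finset.sum_le_sum hterm
    _ = (∑ n ∈ s, (IncE (TH n) SvF).card) + ttt := by
        rw [Finset.sum_add_distrib, Finset.sum_boole, httt]
        simp
  -- capacity bound
  have key2 : (∑ n ∈ s, (IncE (TH n) SvF).card) ≤ KI + k * X.card := by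
    rw [← Finset.card_biUnion hIEdisj]
    have hsub : s.biUnion (fun n => IncE (TH n) SvF) ⊆ capIntra ∪ capCross := by
      intro e he
      obtain ⟨n, hn, hen⟩ := Finset.mem_biUnion.mp he
      have heW : e ∈ (TH n).edgeSet := IncE_subset_edgeSet hen
      have hinc : ∃ a ∈ SvF, a ∈ e := by
        rw [IncE, Finset.mem_filter] at hen
        exact hen.2
      induction e with
      | _ p q =>
        have hadj : (TH n).Adj p q := Subgraph.mem_edgeSet.mp heW
        have hpv : p ∈ SvF ∪ X := hverts n hn (by
          rw [Set.Finite.mem_toFinset]; exact (TH n).edge_vert hadj)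
        have hqv : q ∈ SvF ∪ X := hverts n hn (by
          rw [Set.Finite.mem_toFinset]; exact (TH n).edge_vert hadj.symm)
        by_cases hp : p ∈ SvF <;> by_cases hq : q ∈ SvF
        · refine Finset.mem_union_left _ ?_
          rw [hcapIntra, Finset.mem_filter, Finset.mk_mem_sym2_iff, Sym2.mk_isDiag_iff]
          exact ⟨⟨hp, hq⟩, ((TH n).adj_sub hadj).ne⟩
        · refine Finset.mem_union_right _ ?_
          rw [hcapCross, Finset.mem_image]
          exact ⟨(p, q), Finset.mem_product.mpr ⟨hp, (Finset.mem_union.mp hqv).resolve_left hq⟩,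
            rfl⟩
        · refine Finset.mem_union_right _ ?_
          rw [hcapCross, Finset.mem_image]
          exact ⟨(q, p), Finset.mem_product.mpr ⟨hq, (Finset.mem_union.mp hpv).resolve_left hp⟩,
            Sym2.eq_swap⟩
        · exfalso
          obtain ⟨a, haS, hae⟩ := hinc
          rcases Sym2.mem_iff.mp hae with rfl | rfl
          · exact hp haS
          · exact hq haS
    calc (s.biUnion (fun n => IncE (TH n) SvF)).card ≤ (capIntra ∪ capCross).card := Finset.card_le_card hsub
    _ ≤ KI + capCross.card := by
        rw [hKI]
        exact (Finset.card_union_le _ _)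
    _ ≤ KI + k * X.card := by
        have : capCross.card ≤ k * X.card := by
          rw [hcapCross]
          calc ((SvF ×ˢ X).image (fun pr => s(pr.1, pr.2))).card ≤ (SvF ×ˢ X).card :=
            Finset.card_image_le
          _ = k * X.card := by rw [Finset.card_product, hcard]
        omega
  -- tight trees bound
  have key3 : ttt * (k - 1) ≤ KI := by
    have hsubI : (s.filter (fun n => tight n)).biUnion (fun n => IncE (TH n) SvF) ⊆ capIntra := by
      intro e he
      obtain ⟨n, hn, hen⟩ := Finset.mem_biUnion.mp he
      rw [Finset.mem_filter] at hn
      have heW : e ∈ (TH n).edgeSet := IncE_subset_edgeSet hen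
      induction e with
      | _ p q =>
        have hadj : (TH n).Adj p q := Subgraph.mem_edgeSet.mp heW
        rw [hcapIntra, Finset.mem_filter, Finset.mk_mem_sym2_iff, Sym2.mk_isDiag_iff]
        refine ⟨⟨hn.2 ?_, hn.2 ?_⟩, ((TH n).adj_sub hadj).ne⟩
        · rw [Set.Finite.mem_toFinset]; exact (TH n).edge_vert hadj
        · rw [Set.Finite.mem_toFinset]; exact (TH n).edge_vert hadj.symm
    have hcount : ttt * (k - 1) ≤ ∑ n ∈ s.filter (fun n => tight n), (IncE (TH n) SvF).card := by
      rw [httt]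
      calc (s.filter (fun n => tight n)).card * (k - 1)
          = ∑ _n ∈ s.filter (fun n => tight n), (k - 1) := by
            rw [Finset.sum_const, smul_eq_mul]
      _ ≤ ∑ n ∈ s.filter (fun n => tight n), (IncE (TH n) SvF).card :=
          Finset.sum_le_sum (fun n hn => hlb n (Finset.mem_filter.mp hn).2)
    have hdisj' : ∀ n ∈ s.filter (fun n => tight n), ∀ n' ∈ s.filter (fun n => tight n),
        n ≠ n' → Disjoint (IncE (TH n) SvF) (IncE (TH n') SvF) := by
      intro n hn n' hn' hne
      exact hIEdisj n (Finset.mem_filter.mp hn).1 n' (Finset.mem_filter.mp hn').1 hne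
    calc ttt * (k - 1) ≤ ∑ n ∈ s.filter (fun n => tight n), (IncE (TH n) SvF).card := hcount
    _ = ((s.filter (fun n => tight n)).biUnion (fun n => IncE (TH n) SvF)).card := (Finset.card_biUnion hdisj').symm
    _ ≤ KI := Finset.card_le_card hsubI
  -- final arithmetic
  have httt_le : ttt ≤ m := by
    have h2t : (2 * ttt) * (k - 1) ≤ k * (k - 1) := by
      calc (2 * ttt) * (k - 1) = 2 * (ttt * (k - 1)) := by ring
      _ ≤ 2 * KI := by omega
      _ = k * (k - 1) := hKI2
    have : 2 * ttt ≤ k := Nat.le_of_mul_le_mul_right h2t (by omega)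
    omega
  have hKIle : KI ≤ k * m := by
    have h1 : 2 * KI ≤ k * (2 * m) := by
      rw [hKI2]
      exact Nat.mul_le_mul_left k (by omega)
    have h2 : k * (2 * m) = 2 * (k * m) := by ring
    omega
  by_contra hcon
  push_neg at hcon
  have hNge : m + X.card + 1 ≤ s.card := hcon
  have hchain : k * s.card ≤ k * m + k * X.card + m := by
    calc k * s.card ≤ (∑ n ∈ s, (IncE (TH n) SvF).card) + ttt := key1
    _ ≤ KI + k * X.card + ttt := by omega
    _ ≤ k * m + k * X.card + m := by omega
  have hmul := Nat.mul_le_mul_left k hNge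
  have hexp : k * (m + X.card + 1) = k * m + k * X.card + k := by ring
  have : k ≤ m := by
    have h1 : k * m + k * X.card + k ≤ k * m + k * X.card + m := by
      calc k * m + k * X.card + k = k * (m + X.card + 1) := by ring
      _ ≤ k * s.card := hmul
      _ ≤ k * m + k * X.card + m := hchain
    omega
  omega


/-- Hall-type assignment: choose a reserved set `R'` of size `a` and, for the
other trees, an injective assignment of (T-row, outside-level) connectors. -/
lemma hall_assign {k aa b : ℕ} (hk : 2 ≤ k) (hka : k / 2 ≤ aa) (ha1 : 1 ≤ aa) (hab : aa ≤ b)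
    (TH : Fin b → H.Subgraph) (hconn : ∀ n, (TH n).Connected) (SvF : Finset β)
    (hSv : ∀ n, ↑SvF ⊆ (TH n).verts)
    (hdisj : ∀ n n', n ≠ n' → Disjoint (TH n).edgeSet (TH n').edgeSet)
    (hcard : SvF.card = k) (hβ : Nonempty β) :
    ∃ (R' : Finset (Fin b)) (mC : Fin b → Fin aa) (wC : Fin b → β),
      R'.card = aa ∧
      (∀ n ∉ R', wC n ∈ (TH n).verts ∧ wC n ∉ SvF) ∧
      (∀ n ∉ R', ∀ n' ∉ R', mC n = mC n' → wC n = wC n' → n = n') := by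
  classical
  set outF := fun n => (TH n).verts.toFinite.toFinset \ SvF with houtF
  set t : Fin b → Finset ((Fin aa × β) ⊕ (Fin aa)) := fun n =>
    ((Finset.univ ×ˢ outF n).image Sum.inl) ∪ (Finset.univ.image Sum.inr) with ht
  have hHall : ∀ s : Finset (Fin b), s.card ≤ (s.biUnion t).card := by
    intro s
    rcases Finset.eq_empty_or_nonempty s with rfl | ⟨n0, hn0⟩
    · simp
    have hsub : (((Finset.univ ×ˢ s.biUnion outF).image Sum.inl) ∪
        (Finset.univ.image Sum.inr)) ⊆ s.biUnion t := by
      intro z hz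
      rcases Finset.mem_union.mp hz with hz | hz
      · obtain ⟨pr, hpr, rfl⟩ := Finset.mem_image.mp hz
        obtain ⟨hpr1, hpr2⟩ := Finset.mem_product.mp hpr
        obtain ⟨n, hn, hprn⟩ := Finset.mem_biUnion.mp hpr2
        refine Finset.mem_biUnion.mpr ⟨n, hn, ?_⟩
        rw [ht]
        exact Finset.mem_union_left _ (Finset.mem_image.mpr
          ⟨pr, Finset.mem_product.mpr ⟨hpr1, hprn⟩, rfl⟩)
      · exact Finset.mem_biUnion.mpr ⟨n0, hn0, Finset.mem_union_right _ hz⟩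
    have hdisjlr : Disjoint ((Finset.univ ×ˢ s.biUnion outF).image
        (Sum.inl : (Fin aa × β) → (Fin aa × β) ⊕ (Fin aa))) (Finset.univ.image Sum.inr) := by
      rw [Finset.disjoint_left]
      intro z hz hz'
      obtain ⟨pr, _, rfl⟩ := Finset.mem_image.mp hz
      obtain ⟨i, _, hc⟩ := Finset.mem_image.mp hz'
      exact Sum.inl_ne_inr hc.symm
    have hcard1 : (((Finset.univ ×ˢ s.biUnion outF).image
        (Sum.inl : (Fin aa × β) → (Fin aa × β) ⊕ (Fin aa))) ∪ (Finset.univ.image Sum.inr)).card =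
        aa * (s.biUnion outF).card + aa := by
      rw [Finset.card_union_of_disjoint hdisjlr,
        Finset.card_image_of_injective _ Sum.inl_injective,
        Finset.card_image_of_injective _ Sum.inr_injective,
        Finset.card_product]
      simp
    have hcnt := counting hk TH hconn SvF hSv hdisj hcard s
    have hle : s.card ≤ aa * (s.biUnion outF).card + aa := by
      have h1 : s.card ≤ k / 2 + (s.biUnion outF).card := hcnt
      have h2 : (s.biUnion outF).card ≤ aa * (s.biUnion outF).card :=
        Nat.le_mul_of_pos_left _ (by omega)
      omega
    calc s.card ≤ aa * (s.biUnion outF).card + aa := hle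
    _ = (((Finset.univ ×ˢ s.biUnion outF).image Sum.inl) ∪
        (Finset.univ.image Sum.inr)).card := hcard1.symm
    _ ≤ (s.biUnion t).card := Finset.card_le_card hsub
  obtain ⟨F, hFinj, hFmem⟩ := (Finset.all_card_le_biUnion_card_iff_exists_injective t).mp hHall
  set R := Finset.univ.filter (fun n => (F n).isRight) with hR
  haveI : Nonempty (Fin aa) := ⟨⟨0, by omega⟩⟩
  have hRcard : R.card ≤ aa := by
    have hex : ∀ n ∈ R, ∃ i : Fin aa, F n = Sum.inr i := by
      intro n hn
      rw [hR, Finset.mem_filter] at hn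
      rcases hFn : F n with pr | i
      · rw [hFn] at hn; simp [Sum.isRight] at hn
      · exact ⟨i, rfl⟩
    choose g hg using hex
    have hle : R.card ≤ (Finset.univ : Finset (Fin aa)).card := by
      apply Finset.card_le_card_of_injOn
        (fun n => if hn : n ∈ R then g n hn else Classical.arbitrary _)
      · intro n _; exact Finset.mem_univ _
      · intro n hn n' hn' heq
        simp only [Finset.mem_coe] at hn hn'
        dsimp only at heq
        rw [dif_pos hn, dif_pos hn'] at heq
        apply hFinj
        rw [hg n hn, hg n' hn', heq]
    simpa using hle
  have haB : aa ≤ Fintype.card (Fin b) := by simp [hab]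
  obtain ⟨R', hRR', hR'card⟩ := Finset.exists_superset_card_eq hRcard haB
  have hleft : ∀ n ∉ R', ∃ pr : Fin aa × β, F n = Sum.inl pr ∧ pr.2 ∈ outF n := by
    intro n hn
    have hnR : n ∉ R := fun hc => hn (hRR' hc)
    rcases hFn : F n with pr | i
    · have := hFmem n
      rw [hFn, ht] at this
      rcases Finset.mem_union.mp this with hm | hm
      · obtain ⟨pr', hpr', hpr'e⟩ := Finset.mem_image.mp hm
        refine ⟨pr, rfl, ?_⟩
        have : pr' = pr := Sum.inl_injective hpr'e
        subst this
        exact (Finset.mem_product.mp hpr').2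
      · obtain ⟨i, _, hc⟩ := Finset.mem_image.mp hm
        exact absurd hc (by simp)
    · exfalso
      apply hnR
      rw [hR, Finset.mem_filter]
      exact ⟨Finset.mem_univ _, by rw [hFn]; rfl⟩
  haveI : Nonempty (Fin aa × β) := ⟨⟨⟨0, by omega⟩, hβ.some⟩⟩
  choose! pr hpr1 hpr2 using hleft
  refine ⟨R', fun n => (pr n).1, fun n => (pr n).2, hR'card, ?_, ?_⟩
  · intro n hn
    have := hpr2 n hn
    rw [houtF, Finset.mem_sdiff, Set.Finite.mem_toFinset] at this
    exact this
  · intro n hn n' hn' h1 h2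
    apply hFinj
    rw [hpr1 n hn, hpr1 n' hn']
    congr 1
    exact Prod.ext h1 h2


end Counting

end Stmt8Aux

/-- if λ_k(G)=a, λ_k(H)=b, b ≥ a ≥ ⌊k/2⌋ and S ⊆ V(G □ H) with |S|=k has
    projections with exactly k distinct elements in each coordinate, then there are at
    least a + b pairwise edge-disjoint S-Steiner trees in G □ H. -/
theorem stmt8 {α β : Type*} [Fintype α] [Fintype β] [DecidableEq α] [DecidableEq β]
    (G : SimpleGraph α) (H : SimpleGraph β)
    (hG : G.Connected) (hH : H.Connected) (k a b : ℕ)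
    (ha : genLambda G k = a) (hb : genLambda H k = b)
    (hab : a ≤ b) (hak : k / 2 ≤ a)
    (S : Finset (α × β)) (hS : S.card = k)
    (hSG : (S.image Prod.fst).card = k) (hSH : (S.image Prod.snd).card = k) :
    HasEDSteinerTrees (G □ H) ↑S (a + b) := by
  classical
  by_cases hk2 : 2 ≤ k
  case neg =>
    have hk1 : k ≤ 1 := by omega
    have ha0 : a = 0 := by rw [← ha]; exact Stmt8Aux.genLambda_small hG hk1
    have hb0 : b = 0 := by rw [← hb]; exact Stmt8Aux.genLambda_small hH hk1
    subst ha0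
    subst hb0
    exact Stmt8Aux.hasED_zero _
  case pos =>
  have hSGinj : Set.InjOn (Prod.fst : α × β → α) ↑S := Finset.card_image_iff.mp (by rw [hSG, hS])
  have hSHinj : Set.InjOn (Prod.snd : α × β → β) ↑S := Finset.card_image_iff.mp (by rw [hSH, hS])
  set eS := Finset.equivFinOfCardEq hS with heS
  set u : Fin k → α := fun j => ((eS.symm j : S) : α × β).1 with hu
  set v : Fin k → β := fun j => ((eS.symm j : S) : α × β).2 with hv
  have hmemS : ∀ j, ((u j, v j) : α × β) ∈ S := by
    intro j
    have := (eS.symm j).2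
    simpa [hu, hv] using this
  have hrepr : ∀ p ∈ S, ∃ j, u j = p.1 ∧ v j = p.2 := by
    intro p hp
    refine ⟨eS ⟨p, hp⟩, ?_, ?_⟩ <;> simp [hu, hv]
  have hu_inj : Function.Injective u := by
    intro j j' hjj
    have h1 := hmemS j
    have h2 := hmemS j'
    have : ((u j, v j) : α × β) = (u j', v j') := by
      have := hSGinj (by exact_mod_cast h1) (by exact_mod_cast h2) (by simpa using hjj)
      exact this
    have hvv : v j = v j' := (Prod.ext_iff.mp this).2
    have : eS.symm j = eS.symm j' := by
      apply Subtype.ext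
      apply Prod.ext
      · simpa [hu] using hjj
      · simpa [hv] using hvv
    exact eS.symm.injective this
  have hv_inj : Function.Injective v := by
    intro j j' hjj
    have h1 := hmemS j
    have h2 := hmemS j'
    have : ((u j, v j) : α × β) = (u j', v j') := by
      have := hSHinj (by exact_mod_cast h1) (by exact_mod_cast h2) (by simpa using hjj)
      exact this
    have huu : u j = u j' := (Prod.ext_iff.mp this).1
    have : eS.symm j = eS.symm j' := by
      apply Subtype.ext
      apply Prod.ext
      · simpa [hu] using huu
      · simpa [hv] using hjj
    exact eS.symm.injective this
  set SGf := S.image Prod.fst with hSGf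
  set SHf := S.image Prod.snd with hSHf
  have huSG : ∀ j, u j ∈ SGf := fun j => Finset.mem_image.mpr ⟨_, hmemS j, rfl⟩
  have hvSH : ∀ j, v j ∈ SHf := fun j => Finset.mem_image.mpr ⟨_, hmemS j, rfl⟩
  obtain ⟨TG, hTG, hTGd⟩ := Stmt8Aux.extract ha SGf hSG hk2
  obtain ⟨TH, hTH, hTHd⟩ := Stmt8Aux.extract hb SHf hSH hk2
  have hTGconn : ∀ i, (TG i).Connected :=
    fun i => SimpleGraph.Subgraph.connected_iff'.mpr (hTG i).2.isConnected
  have hTHconn : ∀ n, (TH n).Connected :=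
    fun n => SimpleGraph.Subgraph.connected_iff'.mpr (hTH n).2.isConnected
  have hTGverts : ∀ i j, u j ∈ (TG i).verts := fun i j => (hTG i).1 (by exact_mod_cast huSG j)
  have hTHverts : ∀ n j, v j ∈ (TH n).verts := fun n j => (hTH n).1 (by exact_mod_cast hvSH j)
  have hSHsub : ∀ n, ↑SHf ⊆ (TH n).verts := fun n => (hTH n).1
  have ha1 : 1 ≤ a := by omega
  obtain ⟨R', mC, wC, hR'card, hwC, hmwinj⟩ :=
    Stmt8Aux.hall_assign hk2 hak ha1 hab TH hTHconn SHf hSHsub hTHd hSH hH.nonempty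
  set ρ := Finset.equivFinOfCardEq hR'card with hρ
  set nOf : Fin a → Fin b := fun i => ((ρ.symm i : R') : Fin b) with hnOf
  have hnOfR' : ∀ i, nOf i ∈ R' := fun i => (ρ.symm i).2
  have hnOfinj : Function.Injective nOf := by
    intro i i' h
    exact ρ.symm.injective (Subtype.ext h)
  have hρinj : ∀ (n n' : Fin b) (hn : n ∈ R') (hn' : n' ∈ R'),
      ρ ⟨n, hn⟩ = ρ ⟨n', hn'⟩ → n = n' := by
    intro n n' hn hn' h
    exact congrArg Subtype.val (ρ.injective h)
  have hwv : ∀ n, n ∉ R' → ∀ j, wC n ≠ v j := by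
    intro n hn j hc
    exact (hwC n hn).2 (hc ▸ hvSH j)
  set j0 : Fin k := ⟨0, by omega⟩ with hj0
  set bigA : Fin a → (G □ H).Subgraph := fun i =>
    Stmt8Aux.fiberSub (TH (nOf i)) (u j0) ⊔
      ⨆ jj : {j : Fin k // j ≠ j0}, Stmt8Aux.layerSub (TG i) (v jj.1) with hbigA
  set bigBC : Fin b → (G □ H).Subgraph := fun n =>
    if hn : n ∈ R' then
      Stmt8Aux.layerSub (TG (ρ ⟨n, hn⟩)) (v j0) ⊔
        ⨆ jj : {j : Fin k // j ≠ j0}, Stmt8Aux.fiberSub (TH n) (u jj.1)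
    else
      Stmt8Aux.layerSub (TG (mC n)) (wC n) ⊔
        ⨆ j : Fin k, Stmt8Aux.fiberSub (TH n) (u j) with hbigBC
  set big : Fin a ⊕ Fin b → (G □ H).Subgraph := Sum.elim bigA bigBC with hbig
  have hbigconn : ∀ t, (big t).Connected := by
    intro t
    cases t with
    | inl i =>
      simp only [hbig, Sum.elim_inl, hbigA]
      apply Stmt8Aux.conn_hub_iSup
      · exact Stmt8Aux.fiberSub_connected (hTHconn _) _
      · intro jj; exact Stmt8Aux.layerSub_connected (hTGconn i) _
      · intro jj
        refine ⟨(u j0, v jj.1), ?_⟩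
        rw [SimpleGraph.Subgraph.verts_inf]
        exact ⟨Stmt8Aux.fiberSub_verts _ _ (hTHverts _ _),
          Stmt8Aux.layerSub_verts _ _ (hTGverts _ _)⟩
    | inr n =>
      simp only [hbig, Sum.elim_inr, hbigBC]
      by_cases hn : n ∈ R'
      · rw [dif_pos hn]
        apply Stmt8Aux.conn_hub_iSup
        · exact Stmt8Aux.layerSub_connected (hTGconn _) _
        · intro jj; exact Stmt8Aux.fiberSub_connected (hTHconn n) _
        · intro jj
          refine ⟨(u jj.1, v j0), ?_⟩
          rw [SimpleGraph.Subgraph.verts_inf]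
          exact ⟨Stmt8Aux.layerSub_verts _ _ (hTGverts _ _),
            Stmt8Aux.fiberSub_verts _ _ (hTHverts _ _)⟩
      · rw [dif_neg hn]
        apply Stmt8Aux.conn_hub_iSup
        · exact Stmt8Aux.layerSub_connected (hTGconn _) _
        · intro j; exact Stmt8Aux.fiberSub_connected (hTHconn n) _
        · intro j
          refine ⟨(u j, wC n), ?_⟩
          rw [SimpleGraph.Subgraph.verts_inf]
          exact ⟨Stmt8Aux.layerSub_verts _ _ (hTGverts _ _),
            Stmt8Aux.fiberSub_verts _ _ (hwC n hn).1⟩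
  have hbigS : ∀ t, ↑S ⊆ (big t).verts := by
    intro t p hp
    have hpS : p ∈ S := by exact_mod_cast hp
    obtain ⟨j, hj1, hj2⟩ := hrepr p hpS
    have hpe : p = (u j, v j) := by
      rw [hj1, hj2]
    cases t with
    | inl i =>
      simp only [hbig, Sum.elim_inl, hbigA, SimpleGraph.Subgraph.verts_sup,
        SimpleGraph.Subgraph.verts_iSup]
      by_cases hj : j = j0
      · apply Set.mem_union_left
        rw [hpe, hj]
        exact Stmt8Aux.fiberSub_verts _ _ (hTHverts _ _)
      · apply Set.mem_union_right
        rw [Set.mem_iUnion]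
        refine ⟨⟨j, hj⟩, ?_⟩
        rw [hpe]
        exact Stmt8Aux.layerSub_verts _ _ (hTGverts _ _)
    | inr n =>
      simp only [hbig, Sum.elim_inr, hbigBC]
      by_cases hn : n ∈ R'
      · rw [dif_pos hn]
        rw [SimpleGraph.Subgraph.verts_sup, SimpleGraph.Subgraph.verts_iSup]
        by_cases hj : j = j0
        · apply Set.mem_union_left
          rw [hpe, hj]
          exact Stmt8Aux.layerSub_verts _ _ (hTGverts _ _)
        · apply Set.mem_union_right
          rw [Set.mem_iUnion]
          refine ⟨⟨j, hj⟩, ?_⟩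
          rw [hpe]
          exact Stmt8Aux.fiberSub_verts _ _ (hTHverts _ _)
      · rw [dif_neg hn]
        rw [SimpleGraph.Subgraph.verts_sup, SimpleGraph.Subgraph.verts_iSup]
        apply Set.mem_union_right
        rw [Set.mem_iUnion]
        refine ⟨j, ?_⟩
        rw [hpe]
        exact Stmt8Aux.fiberSub_verts _ _ (hTHverts _ _)
  have hedgeA : ∀ i e, e ∈ (bigA i).edgeSet →
      e ∈ (Stmt8Aux.fiberSub (G := G) (TH (nOf i)) (u j0)).edgeSet ∨
      ∃ jj : {j : Fin k // j ≠ j0}, e ∈ (Stmt8Aux.layerSub (H := H) (TG i) (v jj.1)).edgeSet := by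
    intro i e he
    simp only [hbigA] at he
    rw [Stmt8Aux.edgeSet_sup, Stmt8Aux.edgeSet_iSup] at he
    rcases he with he | he
    · exact Or.inl he
    · rw [Set.mem_iUnion] at he
      exact Or.inr he
  have hedgeB : ∀ n (hn : n ∈ R') e, e ∈ (bigBC n).edgeSet →
      e ∈ (Stmt8Aux.layerSub (H := H) (TG (ρ ⟨n, hn⟩)) (v j0)).edgeSet ∨
      ∃ jj : {j : Fin k // j ≠ j0}, e ∈ (Stmt8Aux.fiberSub (G := G) (TH n) (u jj.1)).edgeSet := by
    intro n hn e he
    simp only [hbigBC] at he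
    rw [dif_pos hn, Stmt8Aux.edgeSet_sup, Stmt8Aux.edgeSet_iSup] at he
    rcases he with he | he
    · exact Or.inl he
    · rw [Set.mem_iUnion] at he
      exact Or.inr he
  have hedgeC : ∀ n, n ∉ R' → ∀ e, e ∈ (bigBC n).edgeSet →
      e ∈ (Stmt8Aux.layerSub (H := H) (TG (mC n)) (wC n)).edgeSet ∨
      ∃ j : Fin k, e ∈ (Stmt8Aux.fiberSub (G := G) (TH n) (u j)).edgeSet := by
    intro n hn e he
    simp only [hbigBC] at he
    rw [dif_neg hn, Stmt8Aux.edgeSet_sup, Stmt8Aux.edgeSet_iSup] at he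
    rcases he with he | he
    · exact Or.inl he
    · rw [Set.mem_iUnion] at he
      exact Or.inr he
  have hAB : ∀ i n, Disjoint (bigA i).edgeSet (bigBC n).edgeSet := by
    intro i n
    rw [Set.disjoint_left]
    intro e he he'
    by_cases hn : n ∈ R'
    · rcases hedgeA i e he with hA | ⟨jj, hA⟩ <;> rcases hedgeB n hn e he' with hB | ⟨jj', hB⟩
      · exact Set.disjoint_left.mp Stmt8Aux.layer_fiber_disj.symm hA hB
      · refine Set.disjoint_left.mp (Stmt8Aux.fiber_fiber_disj ?_) hA hB
        exact Or.inl (fun hc => jj'.2 (hu_inj hc).symm)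
      · refine Set.disjoint_left.mp (Stmt8Aux.layer_layer_disj ?_) hA hB
        exact Or.inl (fun hc => jj.2 (hv_inj hc))
      · exact Set.disjoint_left.mp Stmt8Aux.layer_fiber_disj hA hB
    · rcases hedgeA i e he with hA | ⟨jj, hA⟩ <;> rcases hedgeC n hn e he' with hB | ⟨j', hB⟩
      · exact Set.disjoint_left.mp Stmt8Aux.layer_fiber_disj.symm hA hB
      · refine Set.disjoint_left.mp (Stmt8Aux.fiber_fiber_disj ?_) hA hB
        exact Or.inr (hTHd (nOf i) n (fun hc => hn (hc ▸ hnOfR' i)))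
      · refine Set.disjoint_left.mp (Stmt8Aux.layer_layer_disj ?_) hA hB
        exact Or.inl (fun hc => hwv n hn jj.1 hc.symm)
      · exact Set.disjoint_left.mp Stmt8Aux.layer_fiber_disj hA hB
  have hAA : ∀ i i', i ≠ i' → Disjoint (bigA i).edgeSet (bigA i').edgeSet := by
    intro i i' hii
    rw [Set.disjoint_left]
    intro e he he'
    rcases hedgeA i e he with hA | ⟨jj, hA⟩ <;> rcases hedgeA i' e he' with hB | ⟨jj', hB⟩
    · refine Set.disjoint_left.mp (Stmt8Aux.fiber_fiber_disj ?_) hA hB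
      exact Or.inr (hTHd _ _ (fun hc => hii (hnOfinj hc)))
    · exact Set.disjoint_left.mp Stmt8Aux.layer_fiber_disj.symm hA hB
    · exact Set.disjoint_left.mp Stmt8Aux.layer_fiber_disj hA hB
    · refine Set.disjoint_left.mp (Stmt8Aux.layer_layer_disj ?_) hA hB
      exact Or.inr (hTGd _ _ hii)
  have hBB : ∀ n n', n ≠ n' → Disjoint (bigBC n).edgeSet (bigBC n').edgeSet := by
    intro n n' hnn
    rw [Set.disjoint_left]
    intro e he he'
    by_cases hn : n ∈ R' <;> by_cases hn' : n' ∈ R'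
    · rcases hedgeB n hn e he with hA | ⟨jj, hA⟩ <;> rcases hedgeB n' hn' e he' with hB | ⟨jj', hB⟩
      · refine Set.disjoint_left.mp (Stmt8Aux.layer_layer_disj ?_) hA hB
        exact Or.inr (hTGd _ _ (fun hc => hnn (hρinj n n' hn hn' hc)))
      · exact Set.disjoint_left.mp Stmt8Aux.layer_fiber_disj hA hB
      · exact Set.disjoint_left.mp Stmt8Aux.layer_fiber_disj.symm hA hB
      · refine Set.disjoint_left.mp (Stmt8Aux.fiber_fiber_disj ?_) hA hB
        exact Or.inr (hTHd n n' hnn)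
    · rcases hedgeB n hn e he with hA | ⟨jj, hA⟩ <;> rcases hedgeC n' hn' e he' with hB | ⟨j', hB⟩
      · refine Set.disjoint_left.mp (Stmt8Aux.layer_layer_disj ?_) hA hB
        exact Or.inl (fun hc => hwv n' hn' j0 hc.symm)
      · exact Set.disjoint_left.mp Stmt8Aux.layer_fiber_disj hA hB
      · exact Set.disjoint_left.mp Stmt8Aux.layer_fiber_disj.symm hA hB
      · refine Set.disjoint_left.mp (Stmt8Aux.fiber_fiber_disj ?_) hA hB
        exact Or.inr (hTHd n n' hnn)
    · rcases hedgeC n hn e he with hA | ⟨j', hA⟩ <;> rcases hedgeB n' hn' e he' with hB | ⟨jj', hB⟩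
      · refine Set.disjoint_left.mp (Stmt8Aux.layer_layer_disj ?_) hA hB
        exact Or.inl (fun hc => hwv n hn j0 hc)
      · exact Set.disjoint_left.mp Stmt8Aux.layer_fiber_disj hA hB
      · exact Set.disjoint_left.mp Stmt8Aux.layer_fiber_disj.symm hA hB
      · refine Set.disjoint_left.mp (Stmt8Aux.fiber_fiber_disj ?_) hA hB
        exact Or.inr (hTHd n n' hnn)
    · rcases hedgeC n hn e he with hA | ⟨j', hA⟩ <;> rcases hedgeC n' hn' e he' with hB | ⟨j'', hB⟩
      · by_cases hww : wC n = wC n'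
        · refine Set.disjoint_left.mp (Stmt8Aux.layer_layer_disj ?_) hA hB
          exact Or.inr (hTGd _ _ (fun hc => hnn (hmwinj n hn n' hn' hc hww)))
        · exact Set.disjoint_left.mp (Stmt8Aux.layer_layer_disj (Or.inl hww)) hA hB
      · exact Set.disjoint_left.mp Stmt8Aux.layer_fiber_disj hA hB
      · exact Set.disjoint_left.mp Stmt8Aux.layer_fiber_disj.symm hA hB
      · refine Set.disjoint_left.mp (Stmt8Aux.fiber_fiber_disj ?_) hA hB
        exact Or.inr (hTHd n n' hnn)
  have hbigdisj : ∀ t t', t ≠ t' → Disjoint (big t).edgeSet (big t').edgeSet := by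
    intro t t' htt
    cases t with
    | inl i =>
      cases t' with
      | inl i' =>
        simp only [hbig, Sum.elim_inl]
        exact hAA i i' (fun hc => htt (by rw [hc]))
      | inr n =>
        simp only [hbig, Sum.elim_inl, Sum.elim_inr]
        exact hAB i n
    | inr n =>
      cases t' with
      | inl i =>
        simp only [hbig, Sum.elim_inl, Sum.elim_inr]
        exact (hAB i n).symm
      | inr n' =>
        simp only [hbig, Sum.elim_inr]
        exact hBB n n' (fun hc => htt (by rw [hc]))
  have hch : ∀ t, ∃ T : (G □ H).Subgraph, ((↑S : Set (α × β)) ⊆ T.verts ∧ T.coe.IsTree) ∧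
      T.edgeSet ⊆ (big t).edgeSet :=
    fun t => Stmt8Aux.exists_steiner_within _ (hbigconn t) _ (hbigS t)
  choose Tf hTf1 hTf2 using hch
  refine ⟨fun t => Tf (finSumFinEquiv.symm t), fun t => hTf1 _, fun t t' htt => ?_⟩
  refine Set.disjoint_of_subset (hTf2 _) (hTf2 _) (hbigdisj _ _ ?_)
  intro hc
  exact htt (by simpa using congrArg finSumFinEquiv hc)
end

section
/- Let G and H be connected graphs with λ_k(G) = a and λ_k(H) = b where b ≥ a ≥ ⌊k/2⌋, and let S be a set of k vertices of G □ H such that the projection S_G of S to V(G) is a single vertex and the projection S_H to V(H) has k distinct elements (or vice versa). Then there exist at least a + b pairwise edge-disjoint S-Steiner trees in G □ H. -/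
open SimpleGraph

namespace Stmt9Aux
variable {V : Type*} {W : Type*}

lemma exists_adj_end {G : SimpleGraph V} {u v : V} (p : G.Walk u v) (hnil : ¬ p.Nil) :
    ∃ z, G.Adj z v ∧ s(z, v) ∈ p.edges := by
  induction p with
  | nil => simp at hnil
  | cons h p' ih =>
    cases p' with
    | nil => exact ⟨_, h, by simp⟩
    | cons h2 p'' =>
      obtain ⟨z, hz, hze⟩ := ih (by simp)
      exact ⟨z, hz, by rw [Walk.edges_cons]; exact List.mem_cons_of_mem _ hze⟩

lemma exists_adj_start {G : SimpleGraph V} {u v : V} (p : G.Walk u v) (hnil : ¬ p.Nil) :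
    ∃ z, G.Adj u z := by
  cases p with
  | nil => simp at hnil
  | cons h p' => exact ⟨_, h⟩

/-- Adding a pendant edge `s(w,x)` (with `x` isolated) to an acyclic graph keeps it acyclic. -/
lemma leaf_acyclic {A B : SimpleGraph V} {w x : V} (hA : A.IsAcyclic)
    (hx : ∀ y, ¬ A.Adj x y) (hwx : w ≠ x)
    (hB : ∀ u v, B.Adj u v ↔ A.Adj u v ∨ s(u, v) = s(w, x)) : B.IsAcyclic := by
  classical
  intro v c hc
  by_cases he : s(w, x) ∈ c.edges
  · -- x is in the support of c
    have hxs : x ∈ c.support := c.snd_mem_support_of_mem_edges he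
    have hd := hc.rotate hxs
    set d := c.rotate x hxs with hdd
    cases hdc : d with
    | nil => rw [hdc] at hd; exact hd.ne_nil rfl
    | cons h q =>
      rw [hdc] at hd
      rename_i y₀
      have hy₀ : w = y₀ := Eq.symm <| by
        rcases (hB _ _).1 h with h' | h'
        · exact absurd h' (hx _)
        · rcases Sym2.eq_iff.1 h' with ⟨h1, _⟩ | ⟨_, h2⟩
          · exact absurd h1.symm hwx
          · exact h2
      subst hy₀
      have hqnil : ¬ q.Nil := by
        intro hq
        have h3 := hd.three_le_length
        have : q.length = 0 := (Walk.nil_iff_length_eq).1 hq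
        simp [Walk.length_cons, this] at h3
      obtain ⟨z, hz, hze⟩ := exists_adj_end q hqnil
      have hzw : z = w := by
        rcases (hB _ _).1 hz with h' | h'
        · exact absurd h'.symm (hx _)
        · rcases Sym2.eq_iff.1 h' with ⟨h1, h2⟩ | ⟨h1, h2⟩
          · exact h1
          · exact absurd h2.symm hwx
      subst hzw
      have := (Walk.cons_isCycle_iff q h).1 hd
      exact this.2 (by rwa [Sym2.eq_swap] at hze)
  · -- transfer the cycle to A
    have hAe : ∀ e ∈ c.edges, e ∈ A.edgeSet := by
      intro e hee
      have heB : e ∈ B.edgeSet := c.edges_subset_edgeSet hee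
      induction e with
      | _ p q =>
        rcases (hB _ _).1 heB with h' | h'
        · exact h'
        · rw [h'] at hee; exact absurd hee he
    exact hA (c.transfer A hAe) (hc.transfer hAe)


section Pullback
variable {P : SimpleGraph W} {Q : SimpleGraph V} {f : W → V}

/-- Pull a walk back along an injective "graph covering onto its image". -/
lemma walk_pullback (hf : Function.Injective f)
    (hQ : ∀ u v, Q.Adj u v ↔ ∃ a b, P.Adj a b ∧ f a = u ∧ f b = v)
    {u v : V} (p : Q.Walk u v) :
    ∀ {a : W} (ha : f a = u), ∃ (b : W) (hb : f b = v) (q : P.Walk a b),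
      p = (q.map ⟨f, fun h => (hQ _ _).2 ⟨_, _, h, rfl, rfl⟩⟩).copy ha hb := by
  induction p with
  | nil =>
    intro a ha
    refine ⟨a, ha, Walk.nil, ?_⟩
    subst ha; simp
  | cons h p' ih =>
    intro a ha
    obtain ⟨a', b', hab, ha', hb'⟩ := (hQ _ _).1 h
    have haa : a' = a := hf (ha'.trans ha.symm)
    subst haa
    subst hb'
    obtain ⟨b, hb, q, hpe⟩ := ih rfl
    subst hb
    subst ha
    refine ⟨b, rfl, Walk.cons hab q, ?_⟩
    rw [Walk.copy_rfl_rfl] at hpe ⊢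
    rw [Walk.map_cons, hpe]

lemma acyclic_of_pullback (hf : Function.Injective f)
    (hQ : ∀ u v, Q.Adj u v ↔ ∃ a b, P.Adj a b ∧ f a = u ∧ f b = v)
    (hP : P.IsAcyclic) : Q.IsAcyclic := by
  intro v c hc
  obtain ⟨z, hadj⟩ := exists_adj_start c hc.not_nil
  obtain ⟨a, b0, -, ha, -⟩ := (hQ _ _).1 hadj
  obtain ⟨b, hb, q, hpq⟩ := walk_pullback hf hQ c ha
  have hba : b = a := hf (hb.trans ha.symm)
  subst hba
  rw [hpq, Walk.isCycle_copy] at hc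
  rw [Walk.map_isCycle_iff_of_injective (by exact hf)] at hc
  exact hP _ hc

lemma exists_adj_start' : True := trivial
end Pullback

variable {Γ : SimpleGraph V}

lemma spanningCoe_acyclic_iff (T : Γ.Subgraph) :
    T.spanningCoe.IsAcyclic ↔ T.coe.IsAcyclic := by
  constructor
  · intro h v c hc
    have : ((c.map ⟨Subtype.val, fun ha => ha⟩ :
        T.spanningCoe.Walk _ _)).IsCycle := by
      rw [Walk.map_isCycle_iff_of_injective (by exact Subtype.val_injective)]
      exact hc
    exact h _ this
  · intro h
    refine acyclic_of_pullback (P := T.coe) (f := Subtype.val) Subtype.val_injective ?_ h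
    intro u v
    constructor
    · intro ha
      exact ⟨⟨u, T.edge_vert ha⟩, ⟨v, T.edge_vert ha.symm⟩, ha, rfl, rfl⟩
    · rintro ⟨a, b, hab, rfl, rfl⟩
      exact hab

lemma coe_isTree_iff (T : Γ.Subgraph) :
    T.coe.IsTree ↔ T.Connected ∧ T.spanningCoe.IsAcyclic := by
  rw [isTree_iff, Subgraph.connected_iff', spanningCoe_acyclic_iff]


variable {Γ : SimpleGraph V}

/-- Adding a pendant edge to a tree subgraph. -/
lemma tree_leaf {T : Γ.Subgraph} (hT : T.coe.IsTree) {w x : V}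
    (hw : w ∈ T.verts) (hx : x ∉ T.verts) (hadj : Γ.Adj w x) :
    (T ⊔ Γ.subgraphOfAdj hadj).coe.IsTree ∧
      (T ⊔ Γ.subgraphOfAdj hadj).verts = insert x T.verts ∧
      (∀ p q, (T ⊔ Γ.subgraphOfAdj hadj).Adj p q → T.Adj p q ∨ s(p, q) = s(w, x)) := by
  rw [coe_isTree_iff] at hT ⊢
  refine ⟨⟨?_, ?_⟩, ?_, ?_⟩
  · exact Subgraph.connected_sup hT.1.preconnected (Subgraph.subgraphOfAdj_connected hadj).preconnected ⟨w, hw, by simp⟩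
  · refine leaf_acyclic (A := T.spanningCoe) (w := w) (x := x) hT.2 (fun y hy => hx (T.edge_vert hy)) ?_ ?_
    · rintro rfl; exact hx hw
    · intro u v
      show (T ⊔ Γ.subgraphOfAdj hadj).Adj u v ↔ T.Adj u v ∨ s(u, v) = s(w, x)
      constructor
      · rintro (h | h)
        · exact Or.inl h
        · right; rw [Sym2.eq_iff]
          rcases (by simpa using h : w = u ∧ x = v ∨ w = v ∧ x = u) with ⟨h1, h2⟩ | ⟨h1, h2⟩
          · exact Or.inl ⟨h1.symm, h2.symm⟩
          · exact Or.inr ⟨h2.symm, h1.symm⟩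
      · rintro (h | h)
        · exact Or.inl h
        · right
          rw [Sym2.eq_iff] at h
          rcases h with ⟨rfl, rfl⟩ | ⟨rfl, rfl⟩
          · simp
          · simp
  · ext z
    simp only [Subgraph.verts_sup, subgraphOfAdj_verts, Set.mem_union, Set.mem_insert_iff,
      Set.mem_singleton_iff]
    constructor
    · rintro (h | rfl | rfl)
      exacts [Or.inr h, Or.inr hw, Or.inl rfl]
    · rintro (rfl | h)
      exacts [Or.inr (Or.inr rfl), Or.inl h]
  · intro p q hpq
    rcases hpq with h | h
    · exact Or.inl h
    · right
      rcases (by simpa using h : w = p ∧ x = q ∨ w = q ∧ x = p) with ⟨rfl, rfl⟩ | ⟨rfl, rfl⟩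
      · rfl
      · exact Sym2.eq_swap

lemma exists_cross {Δ : SimpleGraph W} {s : Set W} :
    ∀ {u x : W} (_ : Δ.Walk u x), u ∈ s → x ∉ s → ∃ w y, w ∈ s ∧ y ∉ s ∧ Δ.Adj w y := by
  intro u x p
  induction p with
  | nil => intro hu hx; exact absurd hu hx
  | @cons a m c h p' ih =>
    intro hu hx
    by_cases hm : m ∈ s
    · exact ih hm hx
    · exact ⟨_, _, hu, hm, h⟩

lemma exists_spanning_tree [Fintype W] (Δ : SimpleGraph W) (hΔ : Δ.Connected) :
    ∃ T : Δ.Subgraph, T.IsSpanning ∧ T.coe.IsTree := by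
  classical
  obtain ⟨v⟩ := hΔ.nonempty
  have hsingle : (Δ.singletonSubgraph v).coe.IsTree := by
    rw [coe_isTree_iff]
    refine ⟨Subgraph.singletonSubgraph_connected, ?_⟩
    have : (Δ.singletonSubgraph v).spanningCoe = ⊥ := by
      ext a b; simp [singletonSubgraph_adj]
    rw [this]; exact isAcyclic_bot
  -- grow
  suffices h : ∀ (n : ℕ) (T : Δ.Subgraph), T.coe.IsTree → (T.vertsᶜ).ncard ≤ n →
      ∃ T' : Δ.Subgraph, T'.IsSpanning ∧ T'.coe.IsTree by
    exact h _ _ hsingle le_rfl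
  intro n
  induction n with
  | zero =>
    intro T hT hcard
    refine ⟨T, fun a => ?_, hT⟩
    have : T.vertsᶜ = ∅ := by
      rw [← Set.ncard_eq_zero (Set.toFinite _)]; omega
    by_contra ha
    exact absurd (Set.eq_empty_iff_forall_notMem.1 this a) (fun h => h ha)
  | succ n ih =>
    intro T hT hcard
    by_cases hv : T.verts = Set.univ
    · exact ⟨T, fun a => hv ▸ Set.mem_univ a, hT⟩
    · have hex : ∃ x, x ∉ T.verts := by
        by_contra h; push_neg at h
        exact hv (Set.eq_univ_of_forall h)
      obtain ⟨x, hxv⟩ := hex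
      obtain ⟨u, hu⟩ := ((coe_isTree_iff T).1 hT).1.nonempty
      obtain ⟨w, y, hw, hy, hadj⟩ := exists_cross ((hΔ.preconnected u x).some) hu hxv
      obtain ⟨hT', hverts, -⟩ := tree_leaf hT hw hy hadj
      refine ih _ hT' ?_
      have hci : (insert y T.verts)ᶜ = T.vertsᶜ \ {y} := by
        ext z; simp only [Set.mem_compl_iff, Set.mem_insert_iff, Set.mem_diff,
          Set.mem_singleton_iff, not_or]; tauto
      rw [hverts, hci]
      have hlt : (T.vertsᶜ \ {y}).ncard < (T.vertsᶜ).ncard :=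
        Set.ncard_diff_singleton_lt_of_mem hy (Set.toFinite _)
      omega


variable {Γ : SimpleGraph V}

/-- Mapping a tree subgraph along a graph embedding of ambient graphs. -/
lemma tree_map {Δ : SimpleGraph W} (f : Δ ↪g Γ) {T : Δ.Subgraph} (hT : T.coe.IsTree) :
    (T.map f.toHom).coe.IsTree := by
  rw [coe_isTree_iff] at hT ⊢
  constructor
  · rw [Subgraph.connected_iff']
    have hc : T.coe.Connected := ((Subgraph.connected_iff').1 hT.1)
    refine hc.map (f := ⟨fun y => ⟨f y.1, y.1, y.2, rfl⟩, ?_⟩) ?_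
    · intro a b hab
      exact ⟨a.1, b.1, hab, rfl, rfl⟩
    · rintro ⟨p, ⟨y, hy, rfl⟩⟩
      exact ⟨⟨y, hy⟩, rfl⟩
  · exact acyclic_of_pullback (P := T.spanningCoe) f.injective (fun u v => Iff.rfl) hT.2

lemma singleton_tree (Γ : SimpleGraph V) (x : V) : (Γ.singletonSubgraph x).coe.IsTree := by
  rw [coe_isTree_iff]
  refine ⟨Subgraph.singletonSubgraph_connected, ?_⟩
  have : (Γ.singletonSubgraph x).spanningCoe = ⊥ := by
    ext a b; simp [singletonSubgraph_adj]
  rw [this]; exact isAcyclic_bot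

lemma hasED_zero (G : SimpleGraph V) (S : Set V) : HasEDSteinerTrees G S 0 :=
  ⟨Fin.elim0, fun i => i.elim0, fun i => i.elim0⟩

lemma hasED_mono {G : SimpleGraph V} {S : Set V} {m n : ℕ}
    (h : HasEDSteinerTrees G S n) (hmn : m ≤ n) : HasEDSteinerTrees G S m := by
  obtain ⟨f, h1, h2⟩ := h
  refine ⟨fun i => f (Fin.castLE hmn i), fun i => h1 _, fun i j hij => h2 _ _ ?_⟩
  exact fun hh => hij (Fin.castLE_injective hmn hh)

lemma tree_edge_at {S : Set V} {T : Γ.Subgraph} (hS : S ⊆ T.verts) (hT : T.coe.IsTree)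
    {x y : V} (hx : x ∈ S) (hy : y ∈ S) (hxy : x ≠ y) : ∃ z, T.Adj x z := by
  have hp := (hT.isConnected.preconnected ⟨x, hS hx⟩ ⟨y, hS hy⟩).some
  cases hp with
  | nil => exact absurd rfl hxy
  | cons h q => exact ⟨_, h⟩

lemma exists_neighbors {G : SimpleGraph V} {S : Set V} {v y : V} (hv : v ∈ S)
    (hy : y ∈ S) (hne : v ≠ y) {n : ℕ} (h : HasEDSteinerTrees G S n) :
    ∃ u : Fin n → V, Function.Injective u ∧ ∀ i, G.Adj v (u i) := by
  obtain ⟨f, hst, hdis⟩ := h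
  choose z hz using fun i => tree_edge_at (hst i).1 (hst i).2 hv hy hne
  refine ⟨z, ?_, fun i => (f i).adj_sub (hz i)⟩
  intro i j hij
  by_contra hne'
  have h1 : s(v, z i) ∈ (f i).edgeSet := Subgraph.mem_edgeSet.2 (hz i)
  have h2 : s(v, z i) ∈ (f j).edgeSet := by
    rw [hij]; exact Subgraph.mem_edgeSet.2 (hz j)
  exact Set.disjoint_left.1 (hdis i j (fun hh => hne' (by rw [hh]))) h1 h2

lemma hasED_of_le_steinerLambda [Fintype V] {G : SimpleGraph V} {S : Set V} {x y : V}
    (hx : x ∈ S) (hy : y ∈ S) (hxy : x ≠ y) {n : ℕ} (hn : n ≤ steinerLambda G S) :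
    HasEDSteinerTrees G S n := by
  have hbdd : BddAbove {m | HasEDSteinerTrees G S m} := by
    refine ⟨Fintype.card V, fun m hm => ?_⟩
    obtain ⟨u, hui, -⟩ := exists_neighbors hx hy hxy hm
    exact (Fintype.card_fin m) ▸ Fintype.card_le_of_injective u hui
  have hmem : steinerLambda G S ∈ {m | HasEDSteinerTrees G S m} :=
    Nat.sSup_mem ⟨0, hasED_zero G S⟩ hbdd
  exact hasED_mono hmem hn

lemma genLambda_le_steinerLambda {V : Type*} [Fintype V] {G : SimpleGraph V} {k : ℕ}
    (S : Finset V) (hS : S.card = k) : genLambda G k ≤ steinerLambda G ↑S :=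
  Nat.sInf_le ⟨S, hS, rfl⟩

lemma card_le_of_genLambda_ne_zero {V : Type*} [Fintype V] {G : SimpleGraph V} {k : ℕ}
    (h : genLambda G k ≠ 0) : k ≤ Fintype.card V := by
  by_contra hk; push_neg at hk
  have hemp : {m | ∃ S : Finset V, S.card = k ∧ steinerLambda G ↑S = m} = ∅ := by
    ext m
    simp only [Set.mem_setOf_eq, Set.mem_empty_iff_false, iff_false, not_exists]
    rintro S ⟨hSc, -⟩
    have := S.card_le_univ
    omega
  exact h (by rw [genLambda, hemp, Nat.sInf_empty])

lemma genLambda_eq_zero_of_le_one {V : Type*} [Fintype V] {G : SimpleGraph V}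
    (hne : Nonempty V) {k : ℕ} (hk : k ≤ 1) : genLambda G k = 0 := by
  classical
  have hsl : ∀ S : Finset V, S.card = k → steinerLambda G ↑S = 0 := by
    intro S hS
    obtain ⟨x, hx⟩ : ∃ x : V, (S : Set V) ⊆ {x} := by
      rcases Nat.le_one_iff_eq_zero_or_eq_one.1 (hS ▸ hS ▸ (hS.symm ▸ hk)) with h0 | h1
      · obtain rfl := Finset.card_eq_zero.1 (by omega : S.card = 0)
        exact ⟨hne.some, by simp⟩
      · obtain ⟨a, rfl⟩ := Finset.card_eq_one.1 (by omega : S.card = 1)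
        exact ⟨a, by simp⟩
    have hall : ∀ n, HasEDSteinerTrees G ↑S n := by
      intro n
      refine ⟨fun _ => G.singletonSubgraph x, fun i => ⟨?_, singleton_tree G x⟩, ?_⟩
      · intro s hs
        have := hx hs
        simp only [singletonSubgraph_verts]
        exact this
      · intro i j hij
        simp [edgeSet_singletonSubgraph]
    have hnb : ¬ BddAbove {n | HasEDSteinerTrees G (↑S : Set V) n} := by
      rintro ⟨ub, hub⟩
      have h1 := hub (hall (ub + 1))
      have h2 := hub (hall ub)
      exact absurd h1 (by omega)
    rw [steinerLambda, csSup_of_not_bddAbove hnb, csSup_empty]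
    rfl
  rw [genLambda]
  rcases Set.eq_empty_or_nonempty
      {m | ∃ S : Finset V, S.card = k ∧ steinerLambda G ↑S = m} with he | hne'
  · rw [he, Nat.sInf_empty]
  · obtain ⟨S, hSc, h0⟩ := Nat.sInf_mem hne'
    rw [← h0, hsl S hSc]

lemma star_row_clash {α β : Type*} {G : SimpleGraph α} {v a : α} {p q : α × β} {P : Prop}
    (hva : G.Adj v a)
    (h1 : (p.1 = a ∧ q.1 = a) ∨ s(p.1, q.1) = s(v, a))
    (h2 : p.1 = v ∧ q.1 = v ∧ P) : False := by
  obtain ⟨hp, hq, -⟩ := h2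
  rcases h1 with ⟨h3, -⟩ | h3
  · exact hva.ne (hp.symm.trans h3)
  · rw [hp, hq] at h3
    rcases Sym2.eq_iff.1 h3 with ⟨-, h4⟩ | ⟨h4, -⟩
    · exact hva.ne h4
    · exact hva.ne h4

/-- Main construction: `S` lives in the `v`-row; `c` trees through distinct neighbours of `v`
    plus `d` Steiner trees inside the row. -/
lemma main_construction {α β : Type*} [Fintype β] [DecidableEq β]
    (G : SimpleGraph α) (H : SimpleGraph β) (hH : H.Connected)
    (S : Finset (α × β)) (v : α) (B : Finset β)
    (hSv : ∀ s ∈ S, s.1 = v) (hSB : ∀ s ∈ S, s.2 ∈ B)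
    (c d : ℕ) (u : Fin c → α) (hui : Function.Injective u) (hu : ∀ i, G.Adj v (u i))
    (hd : HasEDSteinerTrees H ↑B d) :
    HasEDSteinerTrees (G □ H) ↑S (c + d) := by
  classical
  obtain ⟨TH, THs, THt⟩ := exists_spanning_tree H hH
  obtain ⟨g, hgst, hgdis⟩ := hd
  -- the star trees
  have star : ∀ i : Fin c, ∃ T : (G □ H).Subgraph, T.coe.IsTree ∧
      ((Prod.mk (u i) '' Set.univ) ∪ (Prod.mk v '' (↑B : Set β))) = T.verts ∧
      (∀ p q : α × β, T.Adj p q → (p.1 = u i ∧ q.1 = u i) ∨ s(p.1, q.1) = s(v, u i)) := by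
    intro i
    have hvne : v ≠ u i := (hu i).ne
    have starC : ∀ C : Finset β, ∃ T : (G □ H).Subgraph, T.coe.IsTree ∧
        ((Prod.mk (u i) '' Set.univ) ∪ (Prod.mk v '' (↑C : Set β))) = T.verts ∧
        (∀ p q : α × β, T.Adj p q → (p.1 = u i ∧ q.1 = u i) ∨ s(p.1, q.1) = s(v, u i)) := by
      intro C
      induction C using Finset.induction with
      | empty =>
        refine ⟨TH.map (G.boxProdRight H (u i)).toHom, tree_map _ THt, ?_, ?_⟩
        · rw [Subgraph.map_verts, THs.verts_eq_univ]
          simp only [Finset.coe_empty, Set.image_empty, Set.union_empty]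
          rfl
        · rintro p q ⟨a0, b0, hab, rfl, rfl⟩
          exact Or.inl ⟨rfl, rfl⟩
      | @insert y C hy ih =>
        obtain ⟨T, hT, hTv, hTa⟩ := ih
        have hx : (v, y) ∉ T.verts := by
          rw [← hTv]
          rintro (⟨z, -, hz⟩ | ⟨z, hz, hz'⟩)
          · exact hvne (congrArg Prod.fst hz).symm
          · have hzy : z = y := congrArg Prod.snd hz'
            exact hy (hzy ▸ hz)
        have hw : (u i, y) ∈ T.verts := by
          rw [← hTv]; exact Or.inl ⟨y, trivial, rfl⟩
        have hadj : (G □ H).Adj (u i, y) (v, y) := by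
          rw [boxProd_adj]; exact Or.inl ⟨(hu i).symm, rfl⟩
        obtain ⟨hT', hv', ha'⟩ := tree_leaf hT hw hx hadj
        refine ⟨_, hT', ?_, ?_⟩
        · rw [hv', ← hTv, Finset.coe_insert, Set.image_insert_eq, Set.union_insert]
        · intro p q h
          rcases ha' p q h with h | h
          · exact hTa p q h
          · rcases Sym2.eq_iff.1 h with ⟨rfl, rfl⟩ | ⟨rfl, rfl⟩
            · exact Or.inr Sym2.eq_swap
            · exact Or.inr rfl
    exact starC B
  choose Tstar hstar1 hstar2 hstar3 using star
  -- the row trees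
  set M : Fin d → (G □ H).Subgraph :=
      fun j => (g j).map (G.boxProdRight H v).toHom with hM
  have hMtree : ∀ j, (M j).coe.IsTree := fun j => tree_map _ (hgst j).2
  have hMverts : ∀ j, (↑S : Set (α × β)) ⊆ (M j).verts := by
    intro j s hs
    rw [Subgraph.map_verts]
    exact ⟨s.2, (hgst j).1 (Finset.mem_coe.2 (hSB s (Finset.mem_coe.1 hs))),
      Prod.ext (hSv s (Finset.mem_coe.1 hs)).symm rfl⟩
  have hMadj : ∀ j (p q : α × β), (M j).Adj p q →
      p.1 = v ∧ q.1 = v ∧ (g j).Adj p.2 q.2 := by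
    rintro j p q ⟨a0, b0, hab, rfl, rfl⟩
    exact ⟨rfl, rfl, hab⟩
  have hSstar : ∀ i, (↑S : Set (α × β)) ⊆ (Tstar i).verts := by
    intro i s hs
    rw [← hstar2 i]
    exact Or.inr ⟨s.2, Finset.mem_coe.2 (hSB s (Finset.mem_coe.1 hs)),
      Prod.ext (hSv s (Finset.mem_coe.1 hs)).symm rfl⟩
  -- assemble
  set F : Fin (c + d) → (G □ H).Subgraph := fun i => if h : (i : ℕ) < c then Tstar ⟨i, h⟩
      else M ⟨(i : ℕ) - c, by omega⟩ with hF
  have hFpos : ∀ (i : Fin (c + d)) (h : (i : ℕ) < c), F i = Tstar ⟨i, h⟩ := by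
    intro i h; simp only [hF]; rw [dif_pos h]
  have hFneg : ∀ (i : Fin (c + d)) (h : ¬ (i : ℕ) < c),
      F i = M ⟨(i : ℕ) - c, by omega⟩ := by
    intro i h; simp only [hF]; rw [dif_neg h]
  refine ⟨F, fun i => ?_, fun i j hij => ?_⟩
  · by_cases h : (i : ℕ) < c
    · rw [hFpos i h]; exact ⟨hSstar _, hstar1 _⟩
    · rw [hFneg i h]; exact ⟨hMverts _, hMtree _⟩
  · rw [Set.disjoint_left]
    intro e he1 he2
    induction e with
    | _ p q =>
      by_cases hi : (i : ℕ) < c <;> by_cases hj : (j : ℕ) < c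
      · rw [hFpos i hi] at he1; rw [hFpos j hj] at he2
        have a1 := Subgraph.mem_edgeSet.1 he1
        have a2 := Subgraph.mem_edgeSet.1 he2
        have hne : u ⟨(i : ℕ), hi⟩ ≠ u ⟨(j : ℕ), hj⟩ := by
          intro hh
          exact hij (Fin.ext (by simpa using congrArg Fin.val (hui hh)))
        rcases hstar3 _ p q a1 with ⟨h1, h2⟩ | h1 <;>
          rcases hstar3 _ p q a2 with ⟨h3, h4⟩ | h3
        · exact hne (h1 ▸ h3)
        · rcases Sym2.eq_iff.1 ((h1 ▸ h2 ▸ h3 : s(_,_) = _)) with ⟨e1, e2⟩ | ⟨e1, e2⟩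
          · exact (hu _).ne e1.symm
          · exact (hu _).ne e2.symm
        · rcases Sym2.eq_iff.1 ((h3 ▸ h4 ▸ h1 : s(_,_) = _)) with ⟨e1, e2⟩ | ⟨e1, e2⟩
          · exact (hu _).ne e1.symm
          · exact (hu _).ne e2.symm
        · rcases Sym2.eq_iff.1 (h1.symm.trans h3) with ⟨e1, e2⟩ | ⟨e1, e2⟩
          · exact hne e2
          · exact (hu _).ne e1
      · rw [hFpos i hi] at he1; rw [hFneg j hj] at he2
        exact star_row_clash (hu _) (hstar3 _ p q (Subgraph.mem_edgeSet.1 he1))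
          (hMadj _ p q (Subgraph.mem_edgeSet.1 he2))
      · rw [hFneg i hi] at he1; rw [hFpos j hj] at he2
        exact star_row_clash (hu _) (hstar3 _ p q (Subgraph.mem_edgeSet.1 he2))
          (hMadj _ p q (Subgraph.mem_edgeSet.1 he1))
      · rw [hFneg i hi] at he1; rw [hFneg j hj] at he2
        obtain ⟨-, -, b1⟩ := hMadj _ p q (Subgraph.mem_edgeSet.1 he1)
        obtain ⟨-, -, b2⟩ := hMadj _ p q (Subgraph.mem_edgeSet.1 he2)
        have hne : (⟨(i : ℕ) - c, by omega⟩ : Fin d) ≠ ⟨(j : ℕ) - c, by omega⟩ := by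
          intro hh
          have h5 := congrArg Fin.val hh
          simp only at h5
          exact hij (Fin.ext (by omega))
        exact Set.disjoint_left.1 (hgdis _ _ hne)
          (Subgraph.mem_edgeSet.2 b1) (Subgraph.mem_edgeSet.2 b2)

lemma hasED_iso {V W : Type*} {Γ : SimpleGraph V} {Γ' : SimpleGraph W} (e : Γ ≃g Γ')
    {S : Set V} {S' : Set W} (hS : S' ⊆ ⇑e '' S) {n : ℕ} (h : HasEDSteinerTrees Γ S n) :
    HasEDSteinerTrees Γ' S' n := by
  obtain ⟨f, h1, h2⟩ := h
  refine ⟨fun i => (f i).map e.toEmbedding.toHom,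
    fun i => ⟨?_, tree_map e.toEmbedding (h1 i).2⟩, fun i j hij => ?_⟩
  · intro s' hs'
    obtain ⟨s, hsS, rfl⟩ := hS hs'
    exact ⟨s, (h1 i).1 hsS, rfl⟩
  · rw [Set.disjoint_left]
    intro ee he1 he2
    induction ee with
    | _ p q =>
      obtain ⟨x1, y1, hxy1, hp1, hq1⟩ := Subgraph.mem_edgeSet.1 he1
      obtain ⟨x2, y2, hxy2, hp2, hq2⟩ := Subgraph.mem_edgeSet.1 he2
      have hx : x2 = x1 := e.toEquiv.injective (hp2.trans hp1.symm)
      have hy : y2 = y1 := e.toEquiv.injective (hq2.trans hq1.symm)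
      subst hx; subst hy
      exact Set.disjoint_left.1 (h2 i j hij)
        (Subgraph.mem_edgeSet.2 hxy1) (Subgraph.mem_edgeSet.2 hxy2)

end Stmt9Aux

/-- same hypotheses as Lemma 2.4: one projection is a single vertex and the
    other has k distinct elements; then there are a + b edge-disjoint S-Steiner trees. -/
theorem stmt9 {α β : Type*} [Fintype α] [Fintype β] [DecidableEq α] [DecidableEq β]
    (G : SimpleGraph α) (H : SimpleGraph β)
    (hG : G.Connected) (hH : H.Connected) (k a b : ℕ)
    (ha : genLambda G k = a) (hb : genLambda H k = b)
    (hab : a ≤ b) (hak : k / 2 ≤ a)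
    (S : Finset (α × β)) (hS : S.card = k)
    (hproj : ((S.image Prod.fst).card = 1 ∧ (S.image Prod.snd).card = k) ∨
             ((S.image Prod.fst).card = k ∧ (S.image Prod.snd).card = 1)) :
    HasEDSteinerTrees (G □ H) ↑S (a + b) := by
  classical
  open Stmt9Aux in
  by_cases hk2 : k ≤ 1
  · have ha0 : a = 0 := by
      rw [← ha, genLambda_eq_zero_of_le_one hG.nonempty hk2]
    have hb0 : b = 0 := by
      rw [← hb, genLambda_eq_zero_of_le_one hH.nonempty hk2]
    rw [ha0, hb0]
    exact hasED_zero _ _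
  push_neg at hk2
  have hk2' : 2 ≤ k := hk2
  have ha1 : 1 ≤ a := by omega
  have hb1 : 1 ≤ b := le_trans ha1 hab
  rcases hproj with ⟨h1, h2⟩ | ⟨h1, h2⟩
  · -- first projection is a single vertex v
    obtain ⟨v, hv⟩ := Finset.card_eq_one.1 h1
    have hSv : ∀ s ∈ S, s.1 = v := by
      intro s hs
      have hmem : s.1 ∈ S.image Prod.fst := Finset.mem_image_of_mem _ hs
      rw [hv] at hmem
      exact Finset.mem_singleton.1 hmem
    set B := S.image Prod.snd with hB
    have hBle : b ≤ steinerLambda H ↑B := hb ▸ genLambda_le_steinerLambda B h2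
    obtain ⟨y1, hy1, y2, hy2, hy12⟩ := Finset.one_lt_card.1 (by omega : 1 < B.card)
    have hdB : HasEDSteinerTrees H ↑B b :=
      hasED_of_le_steinerLambda (Finset.mem_coe.2 hy1) (Finset.mem_coe.2 hy2) hy12 hBle
    have hkα : k ≤ Fintype.card α := card_le_of_genLambda_ne_zero (by rw [ha]; omega)
    obtain ⟨S', hS'sub, hS'card⟩ :=
      Finset.exists_superset_card_eq (s := ({v} : Finset α)) (by simpa using (by omega : 1 ≤ k)) hkα
    have hvS' : v ∈ S' := hS'sub (Finset.mem_singleton_self v)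
    obtain ⟨y, hyS', hyv⟩ : ∃ y ∈ S', y ≠ v := by
      obtain ⟨w1, hw1, w2, hw2, hw12⟩ := Finset.one_lt_card.1 (by omega : 1 < S'.card)
      by_cases hv1 : w1 = v
      · exact ⟨w2, hw2, by rw [← hv1]; exact hw12.symm⟩
      · exact ⟨w1, hw1, hv1⟩
    have haS' : a ≤ steinerLambda G ↑S' := ha ▸ genLambda_le_steinerLambda S' hS'card
    have hEDa : HasEDSteinerTrees G ↑S' a :=
      hasED_of_le_steinerLambda (Finset.mem_coe.2 hvS') (Finset.mem_coe.2 hyS') (Ne.symm hyv) haS'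
    obtain ⟨u, hui, hu⟩ :=
      exists_neighbors (Finset.mem_coe.2 hvS') (Finset.mem_coe.2 hyS') (Ne.symm hyv) hEDa
    exact main_construction G H hH S v B hSv (fun s hs => Finset.mem_image_of_mem _ hs)
      a b u hui hu hdB
  · -- second projection is a single vertex w
    obtain ⟨w, hw⟩ := Finset.card_eq_one.1 h2
    have hSw : ∀ s ∈ S, s.2 = w := by
      intro s hs
      have hmem : s.2 ∈ S.image Prod.snd := Finset.mem_image_of_mem _ hs
      rw [hw] at hmem
      exact Finset.mem_singleton.1 hmem
    set A := S.image Prod.fst with hA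
    have hAle : a ≤ steinerLambda G ↑A := ha ▸ genLambda_le_steinerLambda A h1
    obtain ⟨y1, hy1, y2, hy2, hy12⟩ := Finset.one_lt_card.1 (by omega : 1 < A.card)
    have hdA : HasEDSteinerTrees G ↑A a :=
      hasED_of_le_steinerLambda (Finset.mem_coe.2 hy1) (Finset.mem_coe.2 hy2) hy12 hAle
    have hkβ : k ≤ Fintype.card β := card_le_of_genLambda_ne_zero (by rw [hb]; omega)
    obtain ⟨S', hS'sub, hS'card⟩ :=
      Finset.exists_superset_card_eq (s := ({w} : Finset β)) (by simpa using (by omega : 1 ≤ k)) hkβ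
    have hwS' : w ∈ S' := hS'sub (Finset.mem_singleton_self w)
    obtain ⟨y, hyS', hyw⟩ : ∃ y ∈ S', y ≠ w := by
      obtain ⟨w1, hw1, w2, hw2, hw12⟩ := Finset.one_lt_card.1 (by omega : 1 < S'.card)
      by_cases hv1 : w1 = w
      · exact ⟨w2, hw2, by rw [← hv1]; exact hw12.symm⟩
      · exact ⟨w1, hw1, hv1⟩
    have hbS' : b ≤ steinerLambda H ↑S' := hb ▸ genLambda_le_steinerLambda S' hS'card
    have hEDb : HasEDSteinerTrees H ↑S' b :=
      hasED_of_le_steinerLambda (Finset.mem_coe.2 hwS') (Finset.mem_coe.2 hyS') (Ne.symm hyw) hbS'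
    obtain ⟨u, hui, hu⟩ :=
      exists_neighbors (Finset.mem_coe.2 hwS') (Finset.mem_coe.2 hyS') (Ne.symm hyw) hEDb
    have hmain := main_construction H G hG (S.image Prod.swap) w A
      (by
        intro s hs
        obtain ⟨t, ht, rfl⟩ := Finset.mem_image.1 hs
        exact hSw t ht)
      (by
        intro s hs
        obtain ⟨t, ht, rfl⟩ := Finset.mem_image.1 hs
        exact Finset.mem_image_of_mem _ ht)
      b a u hui hu hdA
    rw [Nat.add_comm]
    refine hasED_iso (SimpleGraph.boxProdComm (G := H) (H := G)) ?_ hmain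
    intro s hs
    refine ⟨Prod.swap s, ?_, ?_⟩
    · exact Finset.mem_coe.2 (Finset.mem_image_of_mem _ (Finset.mem_coe.1 hs))
    · rfl
end

section
/- For integers m ≥ n ≥ 3 and 3 ≤ k < n, the generalized k-edge-connectivity of the grid graph satisfies λ_k(P_m □ P_n) = 2, where P_m and P_n are paths on m and n vertices. -/
open SimpleGraph

theorem isTree_of_parent {V : Type*} (G : SimpleGraph V) (r : V) (p : V → V) (f : V → ℕ)
    (hA : ∀ v, v ≠ r → G.Adj v (p v) ∧ f (p v) < f v)
    (hB : ∀ v w, G.Adj v w → (w = p v ∧ f w < f v) ∨ (v = p w ∧ f v < f w)) :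
    G.IsTree := by
  constructor
  · rw [connected_iff]
    refine ⟨fun u v => ?_, ⟨r⟩⟩
    have key : ∀ N, ∀ u : V, f u ≤ N → G.Reachable u r := by
      intro N
      induction N with
      | zero =>
        intro u hu
        by_cases h : u = r
        · subst h; exact Reachable.refl _
        · exact absurd (hA u h).2 (by omega)
      | succ N ih =>
        intro u hu
        by_cases h : u = r
        · subst h; exact Reachable.refl _
        · exact ((hA u h).1.reachable).trans (ih (p u) (by have := (hA u h).2; omega))
    exact (key (f u) u le_rfl).trans (key (f v) v le_rfl).symm
  · intro v c hc
    classical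
    obtain ⟨u, hu, hmax⟩ := Finset.exists_max_image c.support.toFinset f ⟨v, by simp⟩
    rw [List.mem_toFinset] at hu
    have hc' : (c.rotate u hu).IsCycle := hc.rotate hu
    set c' := c.rotate u hu with hc'def
    have hsupp : ∀ w, w ∈ c'.support → f w ≤ f u := by
      intro w hw
      rcases (Walk.mem_support_iff _).mp hw with h | h
      · exact h ▸ le_rfl
      · have : w ∈ c.support.tail := (Walk.support_rotate c u hu).mem_iff.mp h
        exact hmax w (List.mem_toFinset.mpr (List.mem_of_mem_tail this))
    obtain ⟨x, h1, q1, he1⟩ := Walk.not_nil_iff.mp hc'.not_nil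
    have hrev : ¬ c'.reverse.Nil := by
      rw [Walk.nil_iff_length_eq, Walk.length_reverse]
      have := hc'.three_le_length; omega
    obtain ⟨y, h2, q2, he2⟩ := Walk.not_nil_iff.mp hrev
    have hx : x ∈ c'.support := by
      rw [he1]; simp [Walk.support_cons]
    have hy : y ∈ c'.support := by
      have : y ∈ c'.reverse.support := by rw [he2]; simp [Walk.support_cons]
      rwa [Walk.support_reverse, List.mem_reverse] at this
    have hxp : x = p u := by
      rcases hB u x h1 with ⟨h, _⟩ | ⟨_, h⟩
      · exact h
      · exact absurd (hsupp x hx) (by omega)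
    have hyp : y = p u := by
      rcases hB u y h2 with ⟨h, _⟩ | ⟨_, h⟩
      · exact h
      · exact absurd (hsupp y hy) (by omega)
    -- edges analysis
    have e1 : c'.edges = s(u, x) :: q1.edges := by rw [he1]; rfl
    have e2 : c'.edges.reverse = s(u, y) :: q2.edges := by
      rw [← Walk.edges_reverse, he2]; rfl
    have hq1ne : q1.edges ≠ [] := by
      have h3 := hc'.three_le_length
      rw [he1] at h3
      simp only [Walk.length_cons] at h3
      intro h
      have := Walk.length_edges q1
      rw [h] at this
      simp at this; omega
    have hl : s(u, x) :: q1.edges = q2.edges.reverse ++ [s(u, y)] := by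
      rw [← e1]
      have := congrArg List.reverse e2
      simpa using this
    have hnd : c'.edges.Nodup := hc'.isCircuit.isTrail.edges_nodup
    rw [e1, List.nodup_cons] at hnd
    cases hA2 : q2.edges.reverse with
    | nil =>
      rw [hA2] at hl
      simp only [List.nil_append] at hl
      have := (List.cons_eq_cons.mp hl).2
      simp at this
      exact hq1ne (Walk.edges_eq_nil.mpr this)
    | cons a A' =>
      rw [hA2, List.cons_append] at hl
      obtain ⟨h1', h2'⟩ := List.cons.inj hl
      apply hnd.1
      have hxy : s(u, x) = s(u, y) := by rw [hxp, hyp]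
      rw [hxy, h2']
      exact List.mem_append_right _ (List.mem_singleton_self _)

/-- step from x one unit toward a -/
def stp {m : ℕ} (x a : Fin m) : Fin m :=
  if h : x.val < a.val then ⟨x.val + 1, by have := a.isLt; omega⟩
  else ⟨x.val - 1, by have := x.isLt; omega⟩

/-- L1 distance on ℕ -/
def dN (x a : ℕ) : ℕ := (x - a) + (a - x)

lemma stp_spec {m : ℕ} (x a : Fin m) (h : x ≠ a) :
    (x.val + 1 = (stp x a).val ∨ (stp x a).val + 1 = x.val) ∧
      dN (stp x a).val a.val < dN x.val a.val := by
  have hne : x.val ≠ a.val := fun h' => h (Fin.ext h')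
  unfold stp dN
  split <;> simp <;> omega

lemma stp_eq {m : ℕ} (x x' a : Fin m)
    (hadj : x.val + 1 = x'.val ∨ x'.val + 1 = x.val)
    (hlt : dN x'.val a.val < dN x.val a.val) : stp x a = x' := by
  unfold dN at hlt
  apply Fin.ext
  unfold stp
  split <;> simp only [Fin.val_mk] <;> omega

lemma stp_ne {m : ℕ} (x a : Fin m) (x' : Fin m)
    (hlt : dN x'.val a.val < dN x.val a.val) : x ≠ a := by
  intro h; subst h; unfold dN at hlt; omega

/-- Comb subgraph: horizontal (first coordinate) edges in all "rows" `y ≠ b`,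
joined by the vertical line at `x = a`. -/
def comb1 (m n : ℕ) (a : Fin m) (b : Fin n) : (pathGraph m □ pathGraph n).Subgraph where
  verts := {v | v.2 ≠ b} ∪ {(a, b)}
  Adj v w := ((pathGraph m).Adj v.1 w.1 ∧ v.2 = w.2 ∧ v.2 ≠ b) ∨
    ((pathGraph n).Adj v.2 w.2 ∧ v.1 = w.1 ∧ v.1 = a)
  adj_sub := by
    rintro v w (⟨h1, h2, _⟩ | ⟨h1, h2, _⟩) <;> rw [boxProd_adj]
    · exact Or.inl ⟨h1, h2⟩
    · exact Or.inr ⟨h1, h2⟩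
  edge_vert := by
    rintro v w (⟨h1, h2, h3⟩ | ⟨h1, h2, h3⟩)
    · exact Or.inl h3
    · by_cases hb : v.2 = b
      · right
        show v = (a, b)
        exact Prod.ext h3 hb
      · exact Or.inl hb
  symm := by
    constructor
    rintro v w (⟨h1, h2, h3⟩ | ⟨h1, h2, h3⟩)
    · exact Or.inl ⟨h1.symm, h2.symm, h2 ▸ h3⟩
    · exact Or.inr ⟨h1.symm, h2.symm, h2 ▸ h3⟩

lemma comb1_verts_mem (m n : ℕ) (a : Fin m) (b : Fin n) (v : Fin m × Fin n)
    (h : v.2 ≠ b ∨ v = (a, b)) : v ∈ (comb1 m n a b).verts := h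

lemma comb1_isTree (m n : ℕ) (a : Fin m) (b : Fin n) : (comb1 m n a b).coe.IsTree := by
  set T := comb1 m n a b with hT
  have hroot : ((a, b) : Fin m × Fin n) ∈ T.verts := Or.inr rfl
  -- parent function
  let pa : T.verts → T.verts := fun v =>
    if h : v.1.2 = b then v
    else if h2 : v.1.1 = a then
      ⟨(a, stp v.1.2 b), by
        by_cases hs : stp v.1.2 b = b
        · exact Or.inr (by simp [hs])
        · exact Or.inl hs⟩
    else ⟨(stp v.1.1 a, v.1.2), Or.inl h⟩
  let f : T.verts → ℕ := fun v => dN v.1.1.val a.val + dN v.1.2.val b.val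
  have hvb : ∀ v : T.verts, v.1.2 = b → v.1 = (a, b) := by
    rintro ⟨v, hv | hv⟩ h
    · exact absurd h hv
    · exact hv
  apply isTree_of_parent T.coe ⟨(a, b), hroot⟩ pa f
  · rintro v hv
    have hvne : v.1.2 ≠ b := by
      intro h
      exact hv (Subtype.ext (hvb v h))
    by_cases h2 : v.1.1 = a
    · have hs := stp_spec v.1.2 b hvne
      constructor
      · show T.Adj v.1 _
        simp only [pa, dif_neg hvne, dif_pos h2]
        exact Or.inr ⟨by rw [pathGraph_adj]; exact hs.1, h2, h2⟩
      · have hd := hs.2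
        have h2' : (v.1.1 : ℕ) = a.val := by rw [h2]
        simp only [pa, f, dif_neg hvne, dif_pos h2]
        unfold dN at hd ⊢
        omega
    · have hs := stp_spec v.1.1 a h2
      constructor
      · show T.Adj v.1 _
        simp only [pa, dif_neg hvne, dif_neg h2]
        exact Or.inl ⟨by rw [pathGraph_adj]; exact hs.1, rfl, hvne⟩
      · have hd := hs.2
        simp only [pa, f, dif_neg hvne, dif_neg h2]
        unfold dN at hd ⊢
        omega
  · rintro v w hvw
    rw [Subgraph.coe_adj] at hvw
    rcases hvw with ⟨h1, h2, h3⟩ | ⟨h1, h2, h3⟩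
    · rw [pathGraph_adj] at h1
      have hd : dN w.1.1.val a.val < dN v.1.1.val a.val ∨
          dN v.1.1.val a.val < dN w.1.1.val a.val := by
        unfold dN; omega
      rcases hd with hd | hd
      · left
        have hva : v.1.1 ≠ a := stp_ne _ _ _ hd
        constructor
        · apply Subtype.ext
          simp only [pa, dif_neg h3, dif_neg hva]
          exact Prod.ext (stp_eq _ _ _ h1 hd).symm h2.symm
        · simp only [f, h2]
          omega
      · right
        have hw3 : w.1.2 ≠ b := h2 ▸ h3
        have hwa : w.1.1 ≠ a := stp_ne _ _ _ hd
        constructor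
        · apply Subtype.ext
          simp only [pa, dif_neg hw3, dif_neg hwa]
          exact Prod.ext (stp_eq _ _ _ h1.symm hd).symm h2
        · simp only [f, h2]
          omega
    · rw [pathGraph_adj] at h1
      have hd : dN w.1.2.val b.val < dN v.1.2.val b.val ∨
          dN v.1.2.val b.val < dN w.1.2.val b.val := by
        unfold dN; omega
      rcases hd with hd | hd
      · left
        have hvb2 : v.1.2 ≠ b := stp_ne _ _ _ hd
        constructor
        · apply Subtype.ext
          simp only [pa, dif_neg hvb2, dif_pos h3]
          exact Prod.ext (h3 ▸ h2.symm) (stp_eq _ _ _ h1 hd).symm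
        · simp only [f, h2]
          omega
      · right
        have hwb : w.1.2 ≠ b := stp_ne _ _ _ hd
        have hwa : w.1.1 = a := h2 ▸ h3
        constructor
        · apply Subtype.ext
          simp only [pa, dif_neg hwb, dif_pos hwa]
          exact Prod.ext (hwa ▸ h2) (stp_eq _ _ _ h1.symm hd).symm
        · simp only [f, h2]
          omega

/-- Transposed comb subgraph: vertical (second coordinate) edges in all "columns" `x ≠ a`,
joined by the horizontal line at `y = b`. -/
def comb2 (m n : ℕ) (a : Fin m) (b : Fin n) : (pathGraph m □ pathGraph n).Subgraph where
  verts := {v | v.1 ≠ a} ∪ {(a, b)}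
  Adj v w := ((pathGraph n).Adj v.2 w.2 ∧ v.1 = w.1 ∧ v.1 ≠ a) ∨
    ((pathGraph m).Adj v.1 w.1 ∧ v.2 = w.2 ∧ v.2 = b)
  adj_sub := by
    rintro v w (⟨h1, h2, _⟩ | ⟨h1, h2, _⟩) <;> rw [boxProd_adj]
    · exact Or.inr ⟨h1, h2⟩
    · exact Or.inl ⟨h1, h2⟩
  edge_vert := by
    rintro v w (⟨h1, h2, h3⟩ | ⟨h1, h2, h3⟩)
    · exact Or.inl h3
    · by_cases ha : v.1 = a
      · right
        show v = (a, b)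
        exact Prod.ext ha h3
      · exact Or.inl ha
  symm := by
    constructor
    rintro v w (⟨h1, h2, h3⟩ | ⟨h1, h2, h3⟩)
    · exact Or.inl ⟨h1.symm, h2.symm, h2 ▸ h3⟩
    · exact Or.inr ⟨h1.symm, h2.symm, h2 ▸ h3⟩

lemma comb2_isTree (m n : ℕ) (a : Fin m) (b : Fin n) : (comb2 m n a b).coe.IsTree := by
  set T := comb2 m n a b with hT
  have hroot : ((a, b) : Fin m × Fin n) ∈ T.verts := Or.inr rfl
  let pa : T.verts → T.verts := fun v =>
    if h : v.1.1 = a then v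
    else if h2 : v.1.2 = b then
      ⟨(stp v.1.1 a, b), by
        by_cases hs : stp v.1.1 a = a
        · exact Or.inr (by simp [hs])
        · exact Or.inl hs⟩
    else ⟨(v.1.1, stp v.1.2 b), Or.inl h⟩
  let f : T.verts → ℕ := fun v => dN v.1.1.val a.val + dN v.1.2.val b.val
  have hvb : ∀ v : T.verts, v.1.1 = a → v.1 = (a, b) := by
    rintro ⟨v, hv | hv⟩ h
    · exact absurd h hv
    · exact hv
  apply isTree_of_parent T.coe ⟨(a, b), hroot⟩ pa f
  · rintro v hv
    have hvne : v.1.1 ≠ a := by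
      intro h
      exact hv (Subtype.ext (hvb v h))
    by_cases h2 : v.1.2 = b
    · have hs := stp_spec v.1.1 a hvne
      constructor
      · show T.Adj v.1 _
        simp only [pa, dif_neg hvne, dif_pos h2]
        exact Or.inr ⟨by rw [pathGraph_adj]; exact hs.1, h2, h2⟩
      · have hd := hs.2
        have h2' : (v.1.2 : ℕ) = b.val := by rw [h2]
        simp only [pa, f, dif_neg hvne, dif_pos h2]
        unfold dN at hd ⊢
        omega
    · have hs := stp_spec v.1.2 b h2
      constructor
      · show T.Adj v.1 _
        simp only [pa, dif_neg hvne, dif_neg h2]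
        exact Or.inl ⟨by rw [pathGraph_adj]; exact hs.1, rfl, hvne⟩
      · have hd := hs.2
        simp only [pa, f, dif_neg hvne, dif_neg h2]
        unfold dN at hd ⊢
        omega
  · rintro v w hvw
    rw [Subgraph.coe_adj] at hvw
    rcases hvw with ⟨h1, h2, h3⟩ | ⟨h1, h2, h3⟩
    · rw [pathGraph_adj] at h1
      have hd : dN w.1.2.val b.val < dN v.1.2.val b.val ∨
          dN v.1.2.val b.val < dN w.1.2.val b.val := by
        unfold dN; omega
      rcases hd with hd | hd
      · left
        have hvbne : v.1.2 ≠ b := stp_ne _ _ _ hd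
        constructor
        · apply Subtype.ext
          simp only [pa, dif_neg h3, dif_neg hvbne]
          exact Prod.ext h2.symm (stp_eq _ _ _ h1 hd).symm
        · simp only [f, h2]
          omega
      · right
        have hw3 : w.1.1 ≠ a := h2 ▸ h3
        have hwb : w.1.2 ≠ b := stp_ne _ _ _ hd
        constructor
        · apply Subtype.ext
          simp only [pa, dif_neg hw3, dif_neg hwb]
          exact Prod.ext h2 (stp_eq _ _ _ h1.symm hd).symm
        · simp only [f, h2]
          omega
    · rw [pathGraph_adj] at h1
      have hd : dN w.1.1.val a.val < dN v.1.1.val a.val ∨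
          dN v.1.1.val a.val < dN w.1.1.val a.val := by
        unfold dN; omega
      rcases hd with hd | hd
      · left
        have hvane : v.1.1 ≠ a := stp_ne _ _ _ hd
        constructor
        · apply Subtype.ext
          simp only [pa, dif_neg hvane, dif_pos h3]
          exact Prod.ext (stp_eq _ _ _ h1 hd).symm (h3 ▸ h2.symm)
        · simp only [f, h2]
          omega
      · right
        have hwa : w.1.1 ≠ a := stp_ne _ _ _ hd
        have hwb : w.1.2 = b := h2 ▸ h3
        constructor
        · apply Subtype.ext
          simp only [pa, dif_neg hwa, dif_pos hwb]
          exact Prod.ext (stp_eq _ _ _ h1.symm hd).symm (hwb ▸ h2)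
        · simp only [f, h2]
          omega

lemma comb_disj (m n : ℕ) (a : Fin m) (b : Fin n) :
    Disjoint (comb1 m n a b).edgeSet (comb2 m n a b).edgeSet := by
  rw [Set.disjoint_left]
  rintro e he1 he2
  induction e using Sym2.ind with
  | _ v w =>
    rw [Subgraph.mem_edgeSet] at he1 he2
    rcases he1 with ⟨h1, h2, h3⟩ | ⟨h1, h2, h3⟩ <;>
      rcases he2 with ⟨g1, g2, g3⟩ | ⟨g1, g2, g3⟩
    · exact h1.ne g2
    · exact h3 g3
    · exact g3 h3
    · exact g1.ne h2

/-- Any Steiner tree for a set with two distinct elements has an edge at each element. -/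
lemma steiner_edge {V : Type*} {G : SimpleGraph V} {S : Set V} {T : G.Subgraph}
    (h : IsSteinerTree G S T) {s t : V} (hs : s ∈ S) (ht : t ∈ S) (hst : s ≠ t) :
    ∃ u, T.Adj s u := by
  obtain ⟨hsub, htree⟩ := h
  obtain ⟨w⟩ := htree.isConnected.preconnected ⟨s, hsub hs⟩ ⟨t, hsub ht⟩
  cases w with
  | nil => exact absurd rfl hst
  | cons hadj q => exact ⟨_, (Subgraph.coe_adj _ _ _).mp hadj⟩

/-- Boundedness of the number of edge-disjoint Steiner trees. -/
lemma hasED_le {V : Type*} [Fintype V] [DecidableEq V] {G : SimpleGraph V} {S : Set V}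
    {s t : V} (hs : s ∈ S) (ht : t ∈ S) (hst : s ≠ t) {N : ℕ}
    (h : HasEDSteinerTrees G S N) : N ≤ Fintype.card (Sym2 V) := by
  obtain ⟨f, hf, hdisj⟩ := h
  have hedge : ∀ i, ∃ u, (f i).Adj s u := fun i => steiner_edge (hf i) hs ht hst
  choose u hu using hedge
  have : Function.Injective (fun i => s(s, u i)) := by
    intro i j hij
    by_contra hne
    apply Set.disjoint_left.mp (hdisj i j hne) (Subgraph.mem_edgeSet.mpr (hu i))
    have he : s(s, u i) = s(s, u j) := hij
    rw [he]
    exact Subgraph.mem_edgeSet.mpr (hu j)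
  simpa using Fintype.card_le_of_injective _ this

lemma hasED_mono {V : Type*} {G : SimpleGraph V} {S : Set V} {N M : ℕ} (hMN : M ≤ N)
    (h : HasEDSteinerTrees G S N) : HasEDSteinerTrees G S M := by
  obtain ⟨f, hf, hdisj⟩ := h
  exact ⟨fun i => f (Fin.castLE hMN i), fun i => hf _,
    fun i j hij => hdisj _ _ (fun e => hij (Fin.castLE_injective hMN e))⟩

lemma hasED_zero {V : Type*} {G : SimpleGraph V} {S : Set V} : HasEDSteinerTrees G S 0 :=
  ⟨Fin.elim0, fun i => i.elim0, fun i => i.elim0⟩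



lemma grid_hasED2 (m n : ℕ) (S : Finset (Fin m × Fin n)) (hSm : S.card < m)
    (hSn : S.card < n) : HasEDSteinerTrees (pathGraph m □ pathGraph n) ↑S 2 := by
  have h1 : ∃ a : Fin m, a ∉ S.image Prod.fst := by
    by_contra h
    push_neg at h
    have h2 := Finset.card_le_card (fun a _ => h a : Finset.univ ⊆ S.image Prod.fst)
    have h3 := Finset.card_image_le (s := S) (f := Prod.fst)
    simp only [Finset.card_univ, Fintype.card_fin] at h2
    omega
  have h2 : ∃ b : Fin n, b ∉ S.image Prod.snd := by
    by_contra h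
    push_neg at h
    have h2 := Finset.card_le_card (fun a _ => h a : Finset.univ ⊆ S.image Prod.snd)
    have h3 := Finset.card_image_le (s := S) (f := Prod.snd)
    simp only [Finset.card_univ, Fintype.card_fin] at h2
    omega
  obtain ⟨a, ha⟩ := h1
  obtain ⟨b, hb⟩ := h2
  refine ⟨![comb1 m n a b, comb2 m n a b], ?_, ?_⟩
  · intro i
    fin_cases i
    · refine ⟨?_, comb1_isTree m n a b⟩
      intro v hv
      refine Or.inl (fun hc => hb ?_)
      exact Finset.mem_image.mpr ⟨v, hv, hc⟩
    · refine ⟨?_, comb2_isTree m n a b⟩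
      intro v hv
      refine Or.inl (fun hc => ha ?_)
      exact Finset.mem_image.mpr ⟨v, hv, hc⟩
  · intro i j hij
    fin_cases i <;> fin_cases j <;>
      first
        | exact absurd rfl hij
        | exact comb_disj m n a b
        | exact (comb_disj m n a b).symm

lemma corner_nbr {m n : ℕ} (hm : 3 ≤ m) (hn : 3 ≤ n) (u : Fin m × Fin n)
    (h : (pathGraph m □ pathGraph n).Adj (⟨0, by omega⟩, ⟨0, by omega⟩) u) :
    u = ((⟨1, by omega⟩ : Fin m), (⟨0, by omega⟩ : Fin n)) ∨
      u = ((⟨0, by omega⟩ : Fin m), (⟨1, by omega⟩ : Fin n)) := by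
  rw [boxProd_adj] at h
  rcases h with ⟨h1, h2⟩ | ⟨h1, h2⟩
  · left
    rw [pathGraph_adj] at h1
    refine Prod.ext (Fin.ext ?_) (by rw [← h2])
    simp only [Fin.val_mk] at h1 ⊢
    omega
  · right
    rw [pathGraph_adj] at h1
    refine Prod.ext (by rw [← h2]) (Fin.ext ?_)
    simp only [Fin.val_mk] at h1 ⊢
    omega

/-- for m ≥ n ≥ 3 and 3 ≤ k < n, λ_k(P_m □ P_n) = 2. -/
theorem stmt10 (m n k : ℕ) (hn : 3 ≤ n) (hmn : n ≤ m) (hk3 : 3 ≤ k) (hkn : k < n) :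
    genLambda (pathGraph m □ pathGraph n) k = 2 := by
  classical
  set G := pathGraph m □ pathGraph n with hG
  have hm3 : 3 ≤ m := hn.trans hmn
  have hkm : k < m := lt_of_lt_of_le hkn hmn
  have lower : ∀ S : Finset (Fin m × Fin n), S.card = k → 2 ≤ steinerLambda G ↑S := by
    intro S hS
    have h2 : HasEDSteinerTrees G ↑S 2 := grid_hasED2 m n S (by omega) (by omega)
    obtain ⟨s, hsS, t, htS, hst⟩ := Finset.one_lt_card.mp (by omega : 1 < S.card)
    have hbdd : BddAbove {N | HasEDSteinerTrees G ↑S N} := by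
      refine ⟨Fintype.card (Sym2 (Fin m × Fin n)), fun N hN => ?_⟩
      exact hasED_le (Finset.mem_coe.mpr hsS) (Finset.mem_coe.mpr htS) hst hN
    exact le_csSup hbdd h2
  set v0 : Fin m × Fin n := (⟨0, by omega⟩, ⟨0, by omega⟩) with hv0def
  set v1 : Fin m × Fin n := (⟨0, by omega⟩, ⟨1, by omega⟩) with hv1def
  set S0 : Finset (Fin m × Fin n) :=
    Finset.image (fun j : Fin k => ((⟨0, by omega⟩ : Fin m), (⟨j.val, by omega⟩ : Fin n)))
      Finset.univ with hS0
  have hS0card : S0.card = k := by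
    rw [hS0, Finset.card_image_of_injective _ ?_, Finset.card_univ, Fintype.card_fin]
    intro x y hxy
    apply Fin.ext
    simpa [Prod.ext_iff, Fin.ext_iff] using hxy
  have hv0 : v0 ∈ S0 := by
    rw [hS0]
    exact Finset.mem_image.mpr ⟨⟨0, by omega⟩, Finset.mem_univ _, by
      simp [hv0def, Prod.ext_iff, Fin.ext_iff]⟩
  have hv1 : v1 ∈ S0 := by
    rw [hS0]
    exact Finset.mem_image.mpr ⟨⟨1, by omega⟩, Finset.mem_univ _, by
      simp [hv1def, Prod.ext_iff, Fin.ext_iff]⟩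
  have hv01 : v0 ≠ v1 := by
    simp [hv0def, hv1def, Prod.ext_iff, Fin.ext_iff]
  have upper0 : ∀ N ∈ {N | HasEDSteinerTrees G ↑S0 N}, N ≤ 2 := by
    intro N hN
    by_contra hgt
    push_neg at hgt
    obtain ⟨f, hf, hdisj⟩ : HasEDSteinerTrees G ↑S0 3 := hasED_mono (by omega) hN
    have key : ∀ i : Fin 3, ∃ u, (f i).Adj v0 u := fun i =>
      steiner_edge (hf i) (Finset.mem_coe.mpr hv0) (Finset.mem_coe.mpr hv1) hv01
    choose u hu using key
    have hcl : ∀ i, u i = ((⟨1, by omega⟩ : Fin m), (⟨0, by omega⟩ : Fin n)) ∨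
        u i = ((⟨0, by omega⟩ : Fin m), (⟨1, by omega⟩ : Fin n)) := fun i =>
      corner_nbr hm3 hn _ ((f i).adj_sub (hu i))
    have hedge : ∀ i, s(v0, u i) ∈ (f i).edgeSet := fun i => Subgraph.mem_edgeSet.mpr (hu i)
    have pig : ∀ i j : Fin 3, i ≠ j → u i ≠ u j := by
      intro i j hij hequ
      apply Set.disjoint_left.mp (hdisj i j hij) (hedge i)
      have := hedge j
      rw [← hequ] at this
      exact this
    rcases hcl 0 with h0 | h0 <;> rcases hcl 1 with h1 | h1 <;> rcases hcl 2 with h2 | h2 <;>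
      first
        | exact pig 0 1 (by decide) (h0.trans h1.symm)
        | exact pig 0 2 (by decide) (h0.trans h2.symm)
        | exact pig 1 2 (by decide) (h1.trans h2.symm)
  have hsl0 : steinerLambda G ↑S0 = 2 := by
    apply le_antisymm
    · exact csSup_le ⟨0, hasED_zero⟩ upper0
    · exact lower S0 hS0card
  apply le_antisymm
  · exact Nat.sInf_le ⟨S0, hS0card, hsl0⟩
  · refine le_csInf ⟨2, S0, hS0card, hsl0⟩ ?_
    rintro x ⟨S, hScard, rfl⟩
    exact lower S hScard
end
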